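/- arXiv:2508.03136 — 5 statements merged into one kernel-verified Lean document; each statement's English description precedes it below -/
import Mathlib

section
/- Under Assumption 1, the set of optimal robust policies Π* = { π : S → Δ(A) | g^π_𝒫(s) = sup over all stationary policies μ of g^μ_𝒫(s), for every s ∈ S } is convex: if π₁, π₂ ∈ Π* and α ∈ [0,1], then the policy π̃ defined by π̃(a|s) = α π₁(a|s) + (1−α) π₂(a|s) also belongs to Π*. -/
open scoped BigOperators
open Matrix Filter

/-- Support function `σ_Q(V) = min_{p ∈ Q} ∑_{s'} p(s') V(s')` (as an infimum,
which is attained when `Q` is nonempty and compact). -/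
noncomputable def suppF {S : Type*} [Fintype S] (Q : Set (S → ℝ)) (V : S → ℝ) : ℝ :=
  sInf ((fun p => ∑ s', p s' * V s') '' Q)

/-- The stochastic matrix `P^π` induced by a stationary policy `π` and a kernel `P`. -/
noncomputable def polMat {S A : Type*} [Fintype S] [Fintype A]
    (π : S → A → ℝ) (P : S → A → S → ℝ) : Matrix S S ℝ :=
  Matrix.of fun s s' => ∑ a, π s a * P s a s'

/-- The reward vector `r^π`. -/
noncomputable def polRew {S A : Type*} [Fintype A]
    (π : S → A → ℝ) (r : S → A → ℝ) : S → ℝ :=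
  fun s => ∑ a, π s a * r s a

/-- The average reward `g^π_P(s) = liminf_n (1/n) ∑_{t<n} ((P^π)^t r^π)(s)`. -/
noncomputable def avgR {S A : Type*} [Fintype S] [DecidableEq S] [Fintype A]
    (π : S → A → ℝ) (P : S → A → S → ℝ) (r : S → A → ℝ) (s : S) : ℝ :=
  Filter.liminf
    (fun n : ℕ => (∑ t ∈ Finset.range n, ((polMat π P ^ t) *ᵥ polRew π r) s) / n)
    Filter.atTop

/-- The robust average reward `g^π_U(s) = inf_{P ∈ U} g^π_P(s)`. -/
noncomputable def robAvgR {S A : Type*} [Fintype S] [DecidableEq S] [Fintype A]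
    (U : S → A → Set (S → ℝ)) (π : S → A → ℝ) (r : S → A → ℝ) (s : S) : ℝ :=
  sInf {x | ∃ P : S → A → S → ℝ, (∀ s' a, P s' a ∈ U s' a) ∧ x = avgR π P r s}

/-- A stochastic matrix is irreducible: all states communicate. -/
def IrredM {S : Type*} [Fintype S] [DecidableEq S] (M : Matrix S S ℝ) : Prop :=
  ∀ s s' : S, ∃ k : ℕ, 1 ≤ k ∧ 0 < (M ^ k) s s'

/-- Assumption 1: for every deterministic policy `d` and every kernel `P ∈ U`,
the matrix `P^d` is irreducible. -/
def Assump1 {S A : Type*} [Fintype S] [DecidableEq S]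
    (U : S → A → Set (S → ℝ)) : Prop :=
  ∀ (d : S → A) (P : S → A → S → ℝ), (∀ s a, P s a ∈ U s a) →
    IrredM (Matrix.of fun s s' => P s (d s) s')

open Finset Topology
set_option linter.unusedSectionVars false
set_option linter.unusedVariables false

namespace RMDP

variable {S A : Type*} [Fintype S] [DecidableEq S] [Nonempty S] [Fintype A] [Nonempty A]

/-- dot product of a distribution and a vector -/
noncomputable def dotV (p V : S → ℝ) : ℝ := ∑ s', p s' * V s'

lemma le_dotV {p V : S → ℝ} (hp : p ∈ stdSimplex ℝ S) {a : ℝ} (ha : ∀ s, a ≤ V s) :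
    a ≤ dotV p V := by
  have h0 : a = ∑ s', p s' * a := by
    rw [← Finset.sum_mul, hp.2, one_mul]
  rw [h0, dotV]
  exact Finset.sum_le_sum fun s' _ => mul_le_mul_of_nonneg_left (ha s') (hp.1 s')

lemma dotV_le {p V : S → ℝ} (hp : p ∈ stdSimplex ℝ S) {b : ℝ} (hb : ∀ s, V s ≤ b) :
    dotV p V ≤ b := by
  have h0 : b = ∑ s', p s' * b := by
    rw [← Finset.sum_mul, hp.2, one_mul]
  rw [h0, dotV]
  exact Finset.sum_le_sum fun s' _ => mul_le_mul_of_nonneg_left (hb s') (hp.1 s')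

lemma dotV_sub (p V W : S → ℝ) : dotV p V - dotV p W = dotV p (fun s => V s - W s) := by
  simp [dotV, mul_sub, Finset.sum_sub_distrib]

lemma dotV_add_const {p : S → ℝ} (hp : p ∈ stdSimplex ℝ S) (V : S → ℝ) (c : ℝ) :
    dotV p (fun s => V s + c) = dotV p V + c := by
  simp only [dotV, mul_add, Finset.sum_add_distrib, ← Finset.sum_mul, hp.2, one_mul]

section suppF

variable {Q : Set (S → ℝ)} (hne : Q.Nonempty) (hsub : Q ⊆ stdSimplex ℝ S)

lemma suppF_eq_sInf_dotV (V : S → ℝ) : suppF Q V = sInf ((fun p => dotV p V) '' Q) := rfl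

include hne hsub

lemma le_suppF {V : S → ℝ} {a : ℝ} (ha : ∀ s, a ≤ V s) : a ≤ suppF Q V := by
  apply le_csInf (hne.image _)
  rintro x ⟨p, hp, rfl⟩
  exact le_dotV (hsub hp) ha

lemma suppF_le_dotV {V p} (hp : p ∈ Q) : suppF Q V ≤ dotV p V := by
  refine csInf_le ?_ ⟨p, hp, rfl⟩
  refine ⟨Finset.univ.inf' Finset.univ_nonempty V, ?_⟩
  rintro x ⟨q, hq, rfl⟩
  exact le_dotV (hsub hq) fun s => Finset.inf'_le _ (Finset.mem_univ s)

lemma suppF_le {V : S → ℝ} {b : ℝ} (hb : ∀ s, V s ≤ b) : suppF Q V ≤ b := by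
  obtain ⟨p, hp⟩ := id hne
  exact le_trans (suppF_le_dotV hne hsub hp) (dotV_le (hsub hp) hb)

lemma abs_suppF_le {V : S → ℝ} {b : ℝ} (hb : ∀ s, |V s| ≤ b) : |suppF Q V| ≤ b := by
  rw [abs_le]
  constructor
  · exact le_suppF hne hsub fun s => neg_le_of_abs_le (hb s)
  · exact suppF_le hne hsub fun s => le_of_abs_le (hb s)

lemma suppF_le_suppF_add {V W : S → ℝ} {c : ℝ}
    (h : ∀ s, V s ≤ W s + c) : suppF Q V ≤ suppF Q W + c := by
  rw [← sub_le_iff_le_add]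
  apply le_csInf (hne.image _)
  rintro x ⟨p, hp, rfl⟩
  rw [sub_le_iff_le_add]
  calc suppF Q V ≤ dotV p V := suppF_le_dotV hne hsub hp
    _ ≤ dotV p (fun s => W s + c) :=
      Finset.sum_le_sum fun s _ => mul_le_mul_of_nonneg_left (h s) ((hsub hp).1 s)
    _ = dotV p W + c := dotV_add_const (hsub hp) W c

lemma abs_suppF_sub_le {V W : S → ℝ} {c : ℝ} (hc : ∀ s, |V s - W s| ≤ c) :
    |suppF Q V - suppF Q W| ≤ c := by
  rw [abs_le]
  constructor
  · have := suppF_le_suppF_add hne hsub (V := W) (W := V) (c := c)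
      (fun s => by have := hc s; rw [abs_le] at this; linarith [this.1])
    linarith
  · have := suppF_le_suppF_add hne hsub (V := V) (W := W) (c := c)
      (fun s => by have := hc s; rw [abs_le] at this; linarith [this.2])
    linarith

lemma suppF_add_const (V : S → ℝ) (c : ℝ) :
    suppF Q (fun s => V s + c) = suppF Q V + c := by
  apply le_antisymm
  · exact suppF_le_suppF_add hne hsub fun s => le_rfl
  · have := suppF_le_suppF_add hne hsub (V := V) (W := fun s => V s + c) (c := -c)
      (fun s => by simp)
    linarith

lemma suppF_attained (hcomp : IsCompact Q) (V : S → ℝ) :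
    ∃ p ∈ Q, dotV p V = suppF Q V := by
  have hcont : ContinuousOn (dotV · V) Q := by
    apply Continuous.continuousOn
    exact continuous_finset_sum _ fun s' _ => (continuous_apply s').mul continuous_const
  obtain ⟨p, hp, hmin⟩ := hcomp.exists_isMinOn hne hcont
  refine ⟨p, hp, ?_⟩
  apply le_antisymm ?_ (suppF_le_dotV hne hsub hp)
  apply le_csInf (hne.image _)
  rintro x ⟨q, hq, rfl⟩
  exact hmin hq

end suppF

section Stoch

/-- entrywise nonnegative row-stochastic matrix -/
def StochM (M : Matrix S S ℝ) : Prop := (∀ s s', 0 ≤ M s s') ∧ (∀ s, ∑ s', M s s' = 1)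

lemma stochM_one : StochM (1 : Matrix S S ℝ) := by
  constructor
  · intro s s'
    by_cases h : s = s' <;> simp [Matrix.one_apply, h]
  · intro s
    simp [Matrix.one_apply]

lemma StochM.mul {M N : Matrix S S ℝ} (hM : StochM M) (hN : StochM N) : StochM (M * N) := by
  constructor
  · intro s s'
    rw [Matrix.mul_apply]
    exact Finset.sum_nonneg fun j _ => mul_nonneg (hM.1 s j) (hN.1 j s')
  · intro s
    simp only [Matrix.mul_apply]
    rw [Finset.sum_comm]
    have : ∀ j, ∑ s', M s j * N j s' = M s j := by
      intro j
      rw [← Finset.mul_sum, hN.2 j, mul_one]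
    simp only [this]
    exact hM.2 s

lemma StochM.pow {M : Matrix S S ℝ} (hM : StochM M) (n : ℕ) : StochM (M ^ n) := by
  induction n with
  | zero => simpa using stochM_one
  | succ n ih => rw [pow_succ]; exact ih.mul hM

lemma StochM.entry_le_one {M : Matrix S S ℝ} (hM : StochM M) (s s' : S) : M s s' ≤ 1 := by
  have h := hM.2 s
  calc M s s' ≤ ∑ j, M s j :=
        Finset.single_le_sum (fun j _ => hM.1 s j) (Finset.mem_univ s')
    _ = 1 := h

lemma StochM.mulVec_le {M : Matrix S S ℝ} (hM : StochM M) {v : S → ℝ} {b : ℝ}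
    (hv : ∀ s, v s ≤ b) (s : S) : (M *ᵥ v) s ≤ b := by
  have : (M *ᵥ v) s ≤ ∑ j, M s j * b := by
    exact Finset.sum_le_sum fun j _ => mul_le_mul_of_nonneg_left (hv j) (hM.1 s j)
  calc (M *ᵥ v) s ≤ ∑ j, M s j * b := this
    _ = (∑ j, M s j) * b := by rw [Finset.sum_mul]
    _ = b := by rw [hM.2 s, one_mul]

lemma StochM.le_mulVec {M : Matrix S S ℝ} (hM : StochM M) {v : S → ℝ} {a : ℝ}
    (hv : ∀ s, a ≤ v s) (s : S) : a ≤ (M *ᵥ v) s := by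
  have : ∑ j, M s j * a ≤ (M *ᵥ v) s :=
    Finset.sum_le_sum fun j _ => mul_le_mul_of_nonneg_left (hv j) (hM.1 s j)
  calc a = (∑ j, M s j) * a := by rw [hM.2 s, one_mul]
    _ = ∑ j, M s j * a := by rw [Finset.sum_mul]
    _ ≤ (M *ᵥ v) s := this

lemma StochM.abs_mulVec_le {M : Matrix S S ℝ} (hM : StochM M) {v : S → ℝ} {b : ℝ}
    (hv : ∀ s, |v s| ≤ b) (s : S) : |(M *ᵥ v) s| ≤ b := by
  rw [abs_le]
  exact ⟨hM.le_mulVec (fun s => neg_le_of_abs_le (hv s)) s,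
    hM.mulVec_le (fun s => le_of_abs_le (hv s)) s⟩

lemma mulVec_mono {M : Matrix S S ℝ} (hM : ∀ s s', 0 ≤ M s s') {v w : S → ℝ}
    (hvw : ∀ s, v s ≤ w s) (s : S) : (M *ᵥ v) s ≤ (M *ᵥ w) s :=
  Finset.sum_le_sum fun j _ => mul_le_mul_of_nonneg_left (hvw j) (hM s j)

lemma mulVec_nonneg {M : Matrix S S ℝ} (hM : ∀ s s', 0 ≤ M s s') {v : S → ℝ}
    (hv : ∀ s, 0 ≤ v s) (s : S) : 0 ≤ (M *ᵥ v) s :=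
  Finset.sum_nonneg fun j _ => mul_nonneg (hM s j) (hv j)

lemma StochM.mulVec_const {M : Matrix S S ℝ} (hM : StochM M) (c : ℝ) (s : S) :
    (M *ᵥ fun _ => c) s = c := by
  simp only [Matrix.mulVec, dotProduct, ← Finset.sum_mul, hM.2 s, one_mul]

/-- policy matrix is stochastic -/
lemma stochM_polMat {π : S → A → ℝ} {P : S → A → S → ℝ} (hπ : π ∈ {π | ∀ s, π s ∈ stdSimplex ℝ A})
    (hP : ∀ s a, P s a ∈ stdSimplex ℝ S) : StochM (polMat π P) := by
  constructor
  · intro s s'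
    exact Finset.sum_nonneg fun a _ => mul_nonneg ((hπ s).1 a) ((hP s a).1 s')
  · intro s
    show ∑ s', ∑ a, π s a * P s a s' = 1
    rw [Finset.sum_comm]
    have : ∀ a, ∑ s', π s a * P s a s' = π s a := by
      intro a
      rw [← Finset.mul_sum, (hP s a).2, mul_one]
    simp only [this]
    exact (hπ s).2

lemma polRew_mem_Icc {π : S → A → ℝ} {r : S → A → ℝ} (hπ : ∀ s, π s ∈ stdSimplex ℝ A)
    (hr : ∀ s a, r s a ∈ Set.Icc (0:ℝ) 1) (s : S) : polRew π r s ∈ Set.Icc (0:ℝ) 1 := by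
  constructor
  · exact Finset.sum_nonneg fun a _ => mul_nonneg ((hπ s).1 a) (hr s a).1
  · calc ∑ a, π s a * r s a ≤ ∑ a, π s a * 1 :=
        Finset.sum_le_sum fun a _ => mul_le_mul_of_nonneg_left (hr s a).2 ((hπ s).1 a)
    _ = 1 := by simp [(hπ s).2]

end Stoch

section Liminf

lemma liminf_ge_of {u : ℕ → ℝ} {c C : ℝ} (hub : ∀ n, u n ≤ C)
    (h : ∀ ε, 0 < ε → ∀ᶠ n in atTop, c - ε ≤ u n) : c ≤ Filter.liminf u Filter.atTop := by
  have hcb : Filter.IsCoboundedUnder (· ≥ ·) Filter.atTop u :=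
    (Filter.isBoundedUnder_of ⟨C, hub⟩).isCoboundedUnder_ge
  have : ∀ ε, 0 < ε → c - ε ≤ Filter.liminf u Filter.atTop := by
    intro ε hε
    exact Filter.le_liminf_of_le hcb (h ε hε)
  by_contra hlt
  push_neg at hlt
  have := this ((c - Filter.liminf u Filter.atTop)/2) (by linarith)
  linarith

lemma liminf_le_of {u : ℕ → ℝ} {c L : ℝ} (hlb : ∀ n, L ≤ u n)
    (h : ∀ ε, 0 < ε → ∀ᶠ n in atTop, u n ≤ c + ε) : Filter.liminf u Filter.atTop ≤ c := by
  have hb : Filter.IsBoundedUnder (· ≥ ·) Filter.atTop u :=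
    Filter.isBoundedUnder_of ⟨L, fun n => hlb n⟩
  have : ∀ ε, 0 < ε → Filter.liminf u Filter.atTop ≤ c + ε := by
    intro ε hε
    exact Filter.liminf_le_of_frequently_le ((h ε hε).frequently) hb
  by_contra hlt
  push_neg at hlt
  have := this ((Filter.liminf u Filter.atTop - c)/2) (by linarith)
  linarith

lemma div_seq_small (H : ℝ) {ε : ℝ} (hε : 0 < ε) : ∀ᶠ n : ℕ in atTop, H / n ≤ ε := by
  have := (tendsto_const_div_atTop_nhds_zero_nat H).eventually_lt_const hε
  filter_upwards [this] with n hn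
  exact le_of_lt hn

end Liminf

section Tele

lemma mulVec_sum_range (M : Matrix S S ℝ) (w : ℕ → S → ℝ) (n : ℕ) (s : S) :
    (M *ᵥ fun s' => ∑ t ∈ Finset.range n, w t s') s = ∑ t ∈ Finset.range n, (M *ᵥ w t) s := by
  simp only [Matrix.mulVec, dotProduct, Finset.mul_sum]
  rw [Finset.sum_comm]

lemma tele_low {M : Matrix S S ℝ} (hM : StochM M) {ρ h : S → ℝ} {g : ℝ}
    (hle : ∀ s, g + h s ≤ ρ s + (M *ᵥ h) s) (n : ℕ) (s : S) :
    n * g + h s - ((M ^ n) *ᵥ h) s ≤ ∑ t ∈ Finset.range n, ((M ^ t) *ᵥ ρ) s := by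
  induction n generalizing s with
  | zero => simp [Matrix.one_mulVec]
  | succ n ih =>
    have hmono := mulVec_mono (M := M) (v := fun s'' => n * g + (h s'' - ((M ^ n) *ᵥ h) s''))
        (w := fun s' => ∑ t ∈ Finset.range n, ((M ^ t) *ᵥ ρ) s') hM.1
        (fun s'' => by have := ih s''; linarith) s
    have hcalc : (M *ᵥ fun s'' => n * g + (h s'' - ((M ^ n) *ᵥ h) s'')) s
        = n * g + ((M *ᵥ h) s - ((M ^ (n+1)) *ᵥ h) s) := by
      have hfe : (fun s'' => n * g + (h s'' - ((M ^ n) *ᵥ h) s''))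
          = (fun _ => (n : ℝ) * g) + (h - ((M ^ n) *ᵥ h)) := by
        funext s''; simp
      rw [hfe, Matrix.mulVec_add, Matrix.mulVec_sub]
      simp only [Pi.add_apply, Pi.sub_apply]
      rw [hM.mulVec_const, Matrix.mulVec_mulVec, ← pow_succ']
    rw [hcalc] at hmono
    have hsum : (M *ᵥ fun s' => ∑ t ∈ Finset.range n, ((M ^ t) *ᵥ ρ) s') s
        = ∑ t ∈ Finset.range n, ((M ^ (t+1)) *ᵥ ρ) s := by
      rw [mulVec_sum_range]
      exact Finset.sum_congr rfl fun t _ => by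
        rw [Matrix.mulVec_mulVec, ← pow_succ']
    rw [hsum] at hmono
    rw [Finset.sum_range_succ']
    have hρ := hle s
    have h0 : ((M ^ 0) *ᵥ ρ) s = ρ s := by simp [Matrix.one_mulVec]
    rw [h0]
    push_cast
    linarith

lemma tele_up {M : Matrix S S ℝ} (hM : StochM M) {ρ h : S → ℝ} {g : ℝ}
    (hle : ∀ s, ρ s + (M *ᵥ h) s ≤ g + h s) (n : ℕ) (s : S) :
    ∑ t ∈ Finset.range n, ((M ^ t) *ᵥ ρ) s ≤ n * g + h s - ((M ^ n) *ᵥ h) s := by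
  have := tele_low (M := M) hM (ρ := fun s => - ρ s) (h := fun s => - h s) (g := -g)
      (fun s => by
        have h1 := hle s
        have h2 : (M *ᵥ fun s => - h s) s = - (M *ᵥ h) s := by
          have : (fun s => - h s) = - h := rfl
          rw [this, Matrix.mulVec_neg]; rfl
        rw [h2]; linarith) n s
  have h3 : ((M ^ n) *ᵥ fun s => - h s) s = - ((M ^ n) *ᵥ h) s := by
    have : (fun s => - h s) = - h := rfl
    rw [this, Matrix.mulVec_neg]; rfl
  rw [h3] at this
  have h4 : ∑ t ∈ Finset.range n, ((M ^ t) *ᵥ fun s => - ρ s) s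
      = - ∑ t ∈ Finset.range n, ((M ^ t) *ᵥ ρ) s := by
    rw [← Finset.sum_neg_distrib]
    exact Finset.sum_congr rfl fun t _ => by
      have : (fun s => - ρ s) = - ρ := rfl
      rw [this, Matrix.mulVec_neg]; rfl
  rw [h4] at this
  linarith

end Tele

section AvgR

variable {π : S → A → ℝ} {P : S → A → S → ℝ} {r : S → A → ℝ} {U : S → A → Set (S → ℝ)}

/-- kernels compatible with the uncertainty set -/
def InU (U : S → A → Set (S → ℝ)) (P : S → A → S → ℝ) : Prop := ∀ s a, P s a ∈ U s a

lemma avg_seq_mem_Icc (hπ : ∀ s, π s ∈ stdSimplex ℝ A) (hP : ∀ s a, P s a ∈ stdSimplex ℝ S)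
    (hr : ∀ s a, r s a ∈ Set.Icc (0:ℝ) 1) (n : ℕ) (s : S) :
    (∑ t ∈ Finset.range n, ((polMat π P ^ t) *ᵥ polRew π r) s) / n ∈ Set.Icc (0:ℝ) 1 := by
  have hM := stochM_polMat (π := π) (P := P) hπ hP
  have hterm : ∀ t, ((polMat π P ^ t) *ᵥ polRew π r) s ∈ Set.Icc (0:ℝ) 1 := by
    intro t
    constructor
    · exact (hM.pow t).le_mulVec (fun s' => (polRew_mem_Icc hπ hr s').1) s
    · exact (hM.pow t).mulVec_le (fun s' => (polRew_mem_Icc hπ hr s').2) s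
  rcases Nat.eq_zero_or_pos n with hn | hn
  · subst hn; simp
  constructor
  · apply div_nonneg _ (Nat.cast_nonneg n)
    exact Finset.sum_nonneg fun t _ => (hterm t).1
  · rw [div_le_one (by exact_mod_cast hn)]
    calc ∑ t ∈ Finset.range n, ((polMat π P ^ t) *ᵥ polRew π r) s
        ≤ ∑ _t ∈ Finset.range n, (1:ℝ) := Finset.sum_le_sum fun t _ => (hterm t).2
      _ = n := by simp

lemma avgR_mem_Icc (hπ : ∀ s, π s ∈ stdSimplex ℝ A) (hP : ∀ s a, P s a ∈ stdSimplex ℝ S)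
    (hr : ∀ s a, r s a ∈ Set.Icc (0:ℝ) 1) (s : S) : avgR π P r s ∈ Set.Icc (0:ℝ) 1 := by
  constructor
  · apply liminf_ge_of (C := 1) (fun n => (avg_seq_mem_Icc hπ hP hr n s).2)
    intro ε hε
    apply Filter.Eventually.of_forall
    intro n
    have := (avg_seq_mem_Icc hπ hP hr n s).1
    linarith
  · apply liminf_le_of (L := 0) (fun n => (avg_seq_mem_Icc hπ hP hr n s).1)
    intro ε hε
    apply Filter.Eventually.of_forall
    intro n
    have := (avg_seq_mem_Icc hπ hP hr n s).2
    linarith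

lemma le_avgR_of_bellman (hπ : ∀ s, π s ∈ stdSimplex ℝ A) (hP : ∀ s a, P s a ∈ stdSimplex ℝ S)
    (hr : ∀ s a, r s a ∈ Set.Icc (0:ℝ) 1) {h : S → ℝ} {H g : ℝ} (hH : ∀ s, |h s| ≤ H)
    (hle : ∀ s, g + h s ≤ polRew π r s + (polMat π P *ᵥ h) s) (s : S) :
    g ≤ avgR π P r s := by
  have hM := stochM_polMat (π := π) (P := P) hπ hP
  apply liminf_ge_of (C := 1) (fun n => (avg_seq_mem_Icc hπ hP hr n s).2)
  intro ε hε
  filter_upwards [div_seq_small (2*H) hε, Filter.eventually_gt_atTop 0] with n hn hn0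
  have htl := tele_low hM hle n s
  have hpos : (0:ℝ) < n := by exact_mod_cast hn0
  have hMn : |((polMat π P ^ n) *ᵥ h) s| ≤ H := (hM.pow n).abs_mulVec_le hH s
  have hn' : 2*H ≤ ε * n := by rwa [div_le_iff₀ hpos] at hn
  rw [le_div_iff₀ hpos]
  have h1 := abs_le.mp (hH s)
  have h2 := abs_le.mp hMn
  nlinarith [htl]

lemma avgR_le_of_bellman (hπ : ∀ s, π s ∈ stdSimplex ℝ A) (hP : ∀ s a, P s a ∈ stdSimplex ℝ S)
    (hr : ∀ s a, r s a ∈ Set.Icc (0:ℝ) 1) {h : S → ℝ} {H g : ℝ} (hH : ∀ s, |h s| ≤ H)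
    (hle : ∀ s, polRew π r s + (polMat π P *ᵥ h) s ≤ g + h s) (s : S) :
    avgR π P r s ≤ g := by
  have hM := stochM_polMat (π := π) (P := P) hπ hP
  apply liminf_le_of (L := 0) (fun n => (avg_seq_mem_Icc hπ hP hr n s).1)
  intro ε hε
  filter_upwards [div_seq_small (2*H) hε, Filter.eventually_gt_atTop 0] with n hn hn0
  have htu := tele_up hM hle n s
  have hpos : (0:ℝ) < n := by exact_mod_cast hn0
  have hMn : |((polMat π P ^ n) *ᵥ h) s| ≤ H := (hM.pow n).abs_mulVec_le hH s
  have hn' : 2*H ≤ ε * n := by rwa [div_le_iff₀ hpos] at hn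
  rw [div_le_iff₀ hpos]
  have h1 := abs_le.mp (hH s)
  have h2 := abs_le.mp hMn
  nlinarith [htu]

lemma avgR_le_of_bellman_slack (hπ : ∀ s, π s ∈ stdSimplex ℝ A)
    (hP : ∀ s a, P s a ∈ stdSimplex ℝ S)
    (hr : ∀ s a, r s a ∈ Set.Icc (0:ℝ) 1) {h δ : S → ℝ} {H g c : ℝ} (hH : ∀ s, |h s| ≤ H)
    (hδ : ∀ s, 0 ≤ δ s)
    (heq : ∀ s, polRew π r s + (polMat π P *ᵥ h) s + δ s ≤ g + h s) (s : S)
    (hc : ∀ᶠ n : ℕ in atTop,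
      c ≤ (∑ t ∈ Finset.range n, ((polMat π P ^ t) *ᵥ δ) s) / n) :
    avgR π P r s ≤ g - c := by
  have hM := stochM_polMat (π := π) (P := P) hπ hP
  apply liminf_le_of (L := 0) (fun n => (avg_seq_mem_Icc hπ hP hr n s).1)
  intro ε hε
  filter_upwards [div_seq_small (2*H) hε, Filter.eventually_gt_atTop 0, hc] with n hn hn0 hcn
  have hpos : (0:ℝ) < n := by exact_mod_cast hn0
  -- telescoping with ρ' = polRew + δ
  have hle' : ∀ s', (fun s'' => polRew π r s'' + δ s'') s' + (polMat π P *ᵥ h) s' ≤ g + h s' := by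
    intro s'
    dsimp only
    have := heq s'
    linarith
  have htu := tele_up hM (ρ := fun s'' => polRew π r s'' + δ s'') hle' n s
  have hsplit : ∀ t, ((polMat π P ^ t) *ᵥ fun s'' => polRew π r s'' + δ s'') s
      = ((polMat π P ^ t) *ᵥ polRew π r) s + ((polMat π P ^ t) *ᵥ δ) s := by
    intro t
    have hfe : (fun s'' => polRew π r s'' + δ s'') = polRew π r + δ := rfl
    rw [hfe, Matrix.mulVec_add]
    rfl
  rw [Finset.sum_congr rfl (fun t _ => hsplit t), Finset.sum_add_distrib] at htu
  have hMn : |((polMat π P ^ n) *ᵥ h) s| ≤ H := (hM.pow n).abs_mulVec_le hH s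
  have hn' : 2*H ≤ ε * n := by rwa [div_le_iff₀ hpos] at hn
  rw [div_le_iff₀ hpos]
  rw [le_div_iff₀ hpos] at hcn
  have h1 := abs_le.mp (hH s)
  have h2 := abs_le.mp hMn
  nlinarith [htu]

end AvgR

section RobAvgR

variable {π : S → A → ℝ} {r : S → A → ℝ} {U : S → A → Set (S → ℝ)}

lemma exists_kernel (hU : ∀ s a, (U s a).Nonempty) : ∃ P, InU U P :=
  ⟨fun s a => (hU s a).some, fun s a => (hU s a).some_mem⟩

lemma robAvgR_set_nonempty (hU : ∀ s a, (U s a).Nonempty) (s : S) :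
    {x | ∃ P : S → A → S → ℝ, (∀ s' a, P s' a ∈ U s' a) ∧ x = avgR π P r s}.Nonempty := by
  obtain ⟨P, hP⟩ := exists_kernel hU
  exact ⟨avgR π P r s, P, hP, rfl⟩

lemma robAvgR_le_avgR (hπ : ∀ s, π s ∈ stdSimplex ℝ A)
    (hsub : ∀ s a, U s a ⊆ stdSimplex ℝ S)
    (hr : ∀ s a, r s a ∈ Set.Icc (0:ℝ) 1) {P : S → A → S → ℝ} (hP : InU U P) (s : S) :
    robAvgR U π r s ≤ avgR π P r s := by
  refine csInf_le ⟨0, ?_⟩ ⟨P, hP, rfl⟩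
  rintro x ⟨P', hP', rfl⟩
  exact (avgR_mem_Icc hπ (fun s' a => hsub s' a (hP' s' a)) hr s).1

lemma le_robAvgR (hU : ∀ s a, (U s a).Nonempty) {g : ℝ} (s : S)
    (hg : ∀ P : S → A → S → ℝ, InU U P → g ≤ avgR π P r s) :
    g ≤ robAvgR U π r s := by
  apply le_csInf (robAvgR_set_nonempty hU s)
  rintro x ⟨P, hP, rfl⟩
  exact hg P hP

lemma robAvgR_mem_Icc (hπ : ∀ s, π s ∈ stdSimplex ℝ A)
    (hU : ∀ s a, (U s a).Nonempty) (hsub : ∀ s a, U s a ⊆ stdSimplex ℝ S)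
    (hr : ∀ s a, r s a ∈ Set.Icc (0:ℝ) 1) (s : S) :
    robAvgR U π r s ∈ Set.Icc (0:ℝ) 1 := by
  constructor
  · exact le_robAvgR hU s (fun P hP => (avgR_mem_Icc hπ (fun s' a => hsub s' a (hP s' a)) hr s).1)
  · obtain ⟨P, hP⟩ := exists_kernel hU
    exact le_trans (robAvgR_le_avgR hπ hsub hr hP s)
      (avgR_mem_Icc hπ (fun s' a => hsub s' a (hP s' a)) hr s).2

end RobAvgR

section Window

lemma exists_entry_ge_inv_card {M : Matrix S S ℝ} (hM : StochM M) (s : S) :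
    ∃ s', 1 / (Fintype.card S : ℝ) ≤ M s s' := by
  by_contra hcon
  push_neg at hcon
  have hcard : (0:ℝ) < Fintype.card S := by exact_mod_cast Fintype.card_pos
  have hlt : ∑ s', M s s' < ∑ _s' : S, 1 / (Fintype.card S : ℝ) :=
    Finset.sum_lt_sum_of_nonempty Finset.univ_nonempty fun s' _ => hcon s'
  rw [hM.2 s, Finset.sum_const, Finset.card_univ, nsmul_eq_mul, mul_one_div,
    div_self (ne_of_gt hcard)] at hlt
  exact lt_irrefl _ hlt

lemma pow_entry_mul_le {M : Matrix S S ℝ} (hM : StochM M) (t k : ℕ) (s s' s'' : S) :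
    (M ^ t) s s' * (M ^ k) s' s'' ≤ (M ^ (t + k)) s s'' := by
  rw [pow_add, Matrix.mul_apply]
  exact Finset.single_le_sum (f := fun j => (M ^ t) s j * (M ^ k) j s'')
    (fun j _ => mul_nonneg ((hM.pow t).1 s j) ((hM.pow k).1 j s'')) (Finset.mem_univ s')

lemma window_liminf {M : Matrix S S ℝ} (hM : StochM M) (hirr : IrredM M)
    {δ : S → ℝ} (hδ0 : ∀ s, 0 ≤ δ s) {s₀ : S} (hδpos : 0 < δ s₀) (s : S) :
    ∃ c : ℝ, 0 < c ∧ ∀ᶠ n : ℕ in atTop,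
      c ≤ (∑ t ∈ Finset.range n, ((M ^ t) *ᵥ δ) s) / n := by
  classical
  -- communication data towards s₀
  set k₀ : S → ℕ := fun s' => (hirr s' s₀).choose with hk₀
  have hk₀spec : ∀ s', 1 ≤ k₀ s' ∧ 0 < (M ^ (k₀ s')) s' s₀ := fun s' => (hirr s' s₀).choose_spec
  set K : ℕ := Finset.univ.sup' Finset.univ_nonempty k₀ with hK
  have hKk : ∀ s', k₀ s' ≤ K := fun s' => Finset.le_sup' k₀ (Finset.mem_univ s')
  have hK1 : 1 ≤ K := le_trans (hk₀spec (Classical.arbitrary S)).1 (hKk _)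
  set ε₀ : ℝ := Finset.univ.inf' Finset.univ_nonempty (fun s' => (M ^ (k₀ s')) s' s₀) with hε₀
  have hε₀pos : 0 < ε₀ := by
    rw [hε₀, Finset.lt_inf'_iff]
    exact fun s' _ => (hk₀spec s').2
  have hε₀le : ∀ s', ε₀ ≤ (M ^ (k₀ s')) s' s₀ :=
    fun s' => Finset.inf'_le _ (Finset.mem_univ s')
  have hcard : (0:ℝ) < Fintype.card S := by exact_mod_cast Fintype.card_pos
  set ε₁ : ℝ := ε₀ / Fintype.card S with hε₁
  have hε₁pos : 0 < ε₁ := div_pos hε₀pos hcard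
  set β : ℕ → ℝ := fun t => (M ^ t) s s₀ with hβ
  have hβ0 : ∀ t, 0 ≤ β t := fun t => (hM.pow t).1 s s₀
  -- in every window of length K there is a good time
  have hgood : ∀ t, ∃ u, t + 1 ≤ u ∧ u ≤ t + K ∧ ε₁ ≤ β u := by
    intro t
    obtain ⟨s', hs'⟩ := exists_entry_ge_inv_card (hM.pow t) s
    refine ⟨t + k₀ s', by have := (hk₀spec s').1; omega, Nat.add_le_add_left (hKk s') t, ?_⟩
    calc ε₁ = (1 / Fintype.card S) * ε₀ := by rw [hε₁]; ring
      _ ≤ (M ^ t) s s' * (M ^ (k₀ s')) s' s₀ :=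
        mul_le_mul hs' (hε₀le s') (le_of_lt hε₀pos)
          (le_trans (by positivity) hs')
      _ ≤ β (t + k₀ s') := pow_entry_mul_le hM t (k₀ s') s s' s₀
  set T : ℕ → ℝ := fun n => ∑ t ∈ Finset.range n, β t with hT
  have hTmono : ∀ {a b : ℕ}, a ≤ b → T a ≤ T b := by
    intro a b hab
    exact Finset.sum_le_sum_of_subset_of_nonneg (Finset.range_subset_range.mpr hab)
      (fun t _ _ => hβ0 t)
  have hTclaim : ∀ m : ℕ, m * ε₁ ≤ T (1 + m * K) := by
    intro m
    induction m with
    | zero =>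
      simp only [Nat.cast_zero, zero_mul, hT]
      exact Finset.sum_nonneg fun t _ => hβ0 t
    | succ m ih =>
      obtain ⟨u, hu1, hu2, hu3⟩ := hgood (m * K)
      have hsplit : T (1 + m * K) + ∑ t ∈ Finset.Ico (1 + m * K) (1 + m * K + K), β t
          = T (1 + m * K + K) := by
        rw [hT]
        simp only [Finset.range_eq_Ico]
        exact Finset.sum_Ico_consecutive β (by omega) (by omega)
      have hβu : ε₁ ≤ ∑ t ∈ Finset.Ico (1 + m * K) (1 + m * K + K), β t := by
        refine le_trans hu3 (Finset.single_le_sum (f := β) (fun t _ => hβ0 t) ?_)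
        rw [Finset.mem_Ico]
        omega
      have harith : 1 + (m + 1) * K = 1 + m * K + K := by ring
      rw [harith]
      push_cast
      rw [← hsplit] at *
      push_cast at ih
      linarith
  have hsum_ge : ∀ n, T n * δ s₀ ≤ ∑ t ∈ Finset.range n, ((M ^ t) *ᵥ δ) s := by
    intro n
    rw [hT, Finset.sum_mul]
    apply Finset.sum_le_sum
    intro t _
    exact le_trans le_rfl (Finset.single_le_sum
      (f := fun j => (M ^ t) s j * δ j)
      (fun j _ => mul_nonneg ((hM.pow t).1 s j) (hδ0 j)) (Finset.mem_univ s₀))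
  refine ⟨ε₁ * δ s₀ / (2 * K), by positivity, ?_⟩
  filter_upwards [Filter.eventually_ge_atTop (K + 1)] with n hn
  set m : ℕ := (n - 1) / K with hm
  have hm1 : 1 ≤ m := by
    rw [hm]
    exact Nat.one_le_div_iff (by omega) |>.mpr (by omega)
  have hmn : 1 + m * K ≤ n := by
    have h := Nat.div_mul_le_self (n - 1) K
    rw [← hm] at h
    omega
  have hnm : n ≤ m * K + K := by
    have h1 := Nat.div_add_mod (n - 1) K
    rw [← hm] at h1
    have h2 : (n - 1) % K < K := Nat.mod_lt _ (by omega)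
    have h3 : m * K = K * m := Nat.mul_comm m K
    omega
  have hn0 : (0:ℝ) < n := by
    have : 0 < n := by omega
    exact_mod_cast this
  rw [div_le_div_iff₀ (by positivity) hn0]
  have hc1 : (m : ℝ) * ε₁ ≤ T (1 + m * K) := hTclaim m
  have hc2 : T (1 + m * K) ≤ T n := hTmono hmn
  have hc3 : T n * δ s₀ ≤ ∑ t ∈ Finset.range n, ((M ^ t) *ᵥ δ) s := hsum_ge n
  have hc4 : (n : ℝ) ≤ m * K + K := by exact_mod_cast hnm
  have hc5 : (K : ℝ) ≤ m * K := by
    have : (1:ℝ) ≤ m := by exact_mod_cast hm1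
    nlinarith [show (0:ℝ) < K by exact_mod_cast (by omega : 0 < K)]
  have hδ0' := le_of_lt hδpos
  have hKpos : (0:ℝ) < K := by exact_mod_cast (by omega : 0 < K)
  have e1 : ε₁ * δ s₀ * n ≤ ε₁ * δ s₀ * (2 * m * K) := by
    have h6 : (n:ℝ) ≤ 2 * m * K := by nlinarith
    have h7 : (0:ℝ) ≤ ε₁ * δ s₀ := by positivity
    nlinarith
  have e4 : (m:ℝ) * ε₁ * δ s₀ ≤ ∑ t ∈ Finset.range n, ((M ^ t) *ᵥ δ) s :=
    le_trans (mul_le_mul_of_nonneg_right hc1 hδ0')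
      (le_trans (mul_le_mul_of_nonneg_right hc2 hδ0') hc3)
  have e3 : (m:ℝ) * ε₁ * δ s₀ * (2*K) ≤ (∑ t ∈ Finset.range n, ((M ^ t) *ᵥ δ) s) * (2*K) :=
    mul_le_mul_of_nonneg_right e4 (by positivity)
  nlinarith
  
end Window

section Dom

lemma matpow_nonneg {M : Matrix S S ℝ} (hM : ∀ i j, 0 ≤ M i j) (k : ℕ) :
    ∀ i j, 0 ≤ (M ^ k) i j := by
  induction k with
  | zero => intro i j; by_cases h : i = j <;> simp [Matrix.one_apply, h]
  | succ k ih =>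
    intro i j
    rw [pow_succ, Matrix.mul_apply]
    exact Finset.sum_nonneg fun l _ => mul_nonneg (ih i l) (hM l j)

lemma pow_dom {M N : Matrix S S ℝ} {c : ℝ} (hc : 0 < c) (hN0 : ∀ i j, 0 ≤ N i j)
    (hM0 : ∀ i j, 0 ≤ M i j) (hdom : ∀ i j, c * N i j ≤ M i j) (k : ℕ) :
    ∀ i j, c ^ k * (N ^ k) i j ≤ (M ^ k) i j := by
  induction k with
  | zero => intro i j; simp
  | succ k ih =>
    intro i j
    rw [pow_succ M k, pow_succ N k, Matrix.mul_apply, Matrix.mul_apply, Finset.mul_sum]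
    apply Finset.sum_le_sum
    intro l _
    have h1 : c ^ k * (N ^ k) i l * (c * N l j) ≤ (M ^ k) i l * M l j :=
      mul_le_mul (ih i l) (hdom l j) (mul_nonneg (le_of_lt hc) (hN0 l j))
        (matpow_nonneg hM0 k i l)
    calc c ^ (k+1) * ((N ^ k) i l * N l j)
        = c ^ k * (N ^ k) i l * (c * N l j) := by ring
      _ ≤ (M ^ k) i l * M l j := h1

/-- the policy matrix of a simplex policy is irreducible under Assumption 1 -/
lemma polMat_irred {U : S → A → Set (S → ℝ)} (hirr : Assump1 U)
    {π : S → A → ℝ} {P : S → A → S → ℝ} (hπ : ∀ s, π s ∈ stdSimplex ℝ A)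
    (hP : InU U P) (hPsub : ∀ s a, P s a ∈ stdSimplex ℝ S) :
    IrredM (polMat π P) := by
  classical
  -- choose for each state an action with mass ≥ 1/card A
  have hch : ∀ s : S, ∃ a : A, ∀ a', π s a' ≤ π s a := by
    intro s
    obtain ⟨a, _, ha⟩ := Finset.exists_max_image Finset.univ (π s) Finset.univ_nonempty
    exact ⟨a, fun a' => ha a' (Finset.mem_univ a')⟩
  set d : S → A := fun s => (hch s).choose with hd
  have hcardA : (0:ℝ) < Fintype.card A := by exact_mod_cast Fintype.card_pos
  have hmass : ∀ s, 1 / (Fintype.card A : ℝ) ≤ π s (d s) := by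
    intro s
    rw [div_le_iff₀ hcardA]
    have : (1:ℝ) = ∑ a, π s a := ((hπ s).2).symm
    rw [this]
    calc ∑ a, π s a ≤ ∑ _a : A, π s (d s) :=
        Finset.sum_le_sum fun a _ => (hch s).choose_spec a
      _ = π s (d s) * Fintype.card A := by
        rw [Finset.sum_const, Finset.card_univ, nsmul_eq_mul]; ring
  set N : Matrix S S ℝ := Matrix.of fun s s' => P s (d s) s' with hN
  have hN0 : ∀ i j, 0 ≤ N i j := fun i j => (hPsub i (d i)).1 j
  have hM0 : ∀ i j, 0 ≤ (polMat π P) i j := (stochM_polMat hπ hPsub).1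
  have hdom : ∀ i j, (1 / (Fintype.card A : ℝ)) * N i j ≤ (polMat π P) i j := by
    intro i j
    have h1 : (1 / (Fintype.card A : ℝ)) * N i j ≤ π i (d i) * P i (d i) j :=
      mul_le_mul_of_nonneg_right (hmass i) (hN0 i j)
    refine le_trans h1 ?_
    exact Finset.single_le_sum (f := fun a => π i a * P i a j)
      (fun a _ => mul_nonneg ((hπ i).1 a) ((hPsub i a).1 j)) (Finset.mem_univ (d i))
  intro s s'
  obtain ⟨k, hk1, hkpos⟩ := hirr d P hP s s'
  refine ⟨k, hk1, ?_⟩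
  have := pow_dom (c := 1 / (Fintype.card A : ℝ)) (by positivity) hN0 hM0 hdom k s s'
  have hck : (0:ℝ) < (1 / (Fintype.card A : ℝ)) ^ k := by positivity
  calc (0:ℝ) < (1 / (Fintype.card A : ℝ)) ^ k * (N ^ k) s s' := by
        apply mul_pos hck
        exact hkpos
    _ ≤ (polMat π P ^ k) s s' := this

end Dom

section Disc

variable {r : S → A → ℝ} {U : S → A → Set (S → ℝ)}

/-- the robust discounted optimality operator -/
noncomputable def Tdisc (r : S → A → ℝ) (U : S → A → Set (S → ℝ)) [Fintype A] [Nonempty A]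
    (γ : ℝ) (V : S → ℝ) : S → ℝ :=
  fun s => Finset.univ.sup' Finset.univ_nonempty (fun a => r s a + γ * suppF (U s a) V)

lemma le_sup'_add {f g : A → ℝ} {c : ℝ} (h : ∀ a, f a ≤ g a + c) :
    Finset.univ.sup' Finset.univ_nonempty f ≤ Finset.univ.sup' Finset.univ_nonempty g + c := by
  apply Finset.sup'_le
  intro a _
  exact le_trans (h a) (add_le_add_left (Finset.le_sup' g (Finset.mem_univ a)) c)

lemma abs_sup'_sub_le {f g : A → ℝ} {c : ℝ} (h : ∀ a, |f a - g a| ≤ c) :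
    |Finset.univ.sup' Finset.univ_nonempty f - Finset.univ.sup' Finset.univ_nonempty g| ≤ c := by
  rw [abs_le]
  constructor
  · have := le_sup'_add (f := g) (g := f) (c := c)
      (fun a => by have := abs_le.mp (h a); linarith)
    linarith
  · have := le_sup'_add (f := f) (g := g) (c := c)
      (fun a => by have := abs_le.mp (h a); linarith)
    linarith

lemma exists_disc_fixed (hUne : ∀ s a, (U s a).Nonempty)
    (hUsub : ∀ s a, U s a ⊆ stdSimplex ℝ S) {γ : ℝ} (hγ0 : 0 ≤ γ) (hγ1 : γ < 1) :
    ∃ V : S → ℝ, ∀ s, V s = Tdisc r U γ V s := by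
  have hlip : ∀ V W : S → ℝ, dist (Tdisc r U γ V) (Tdisc r U γ W) ≤ γ * dist V W := by
    intro V W
    rw [dist_pi_le_iff (by positivity)]
    intro s
    rw [Real.dist_eq]
    apply abs_sup'_sub_le
    intro a
    have h1 : |suppF (U s a) V - suppF (U s a) W| ≤ dist V W := by
      apply abs_suppF_sub_le (hUne s a) (hUsub s a)
      intro s'
      rw [← Real.dist_eq]
      exact dist_le_pi_dist V W s'
    have h2 : (r s a + γ * suppF (U s a) V) - (r s a + γ * suppF (U s a) W)
        = γ * (suppF (U s a) V - suppF (U s a) W) := by ring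
    rw [h2, abs_mul, abs_of_nonneg hγ0]
    exact mul_le_mul_of_nonneg_left h1 hγ0
  set K : NNReal := ⟨γ, hγ0⟩ with hK
  have hcon : ContractingWith K (Tdisc r U γ) := by
    constructor
    · rw [← NNReal.coe_lt_coe]
      push_cast
      exact hγ1
    · exact LipschitzWith.of_dist_le_mul fun V W => hlip V W
  exact ⟨hcon.fixedPoint (Tdisc r U γ),
    fun s => (congrFun (hcon.fixedPoint_isFixedPt) s).symm⟩

lemma disc_bounds (hUne : ∀ s a, (U s a).Nonempty)
    (hUsub : ∀ s a, U s a ⊆ stdSimplex ℝ S)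
    (hr : ∀ s a, r s a ∈ Set.Icc (0:ℝ) 1) {γ : ℝ} (hγ0 : 0 ≤ γ) (hγ1 : γ < 1)
    {V : S → ℝ} (hfix : ∀ s, V s = Tdisc r U γ V s) :
    (∀ s, 0 ≤ V s) ∧ (∀ s, |V s| ≤ 1 / (1 - γ)) := by
  have h1γ : (0:ℝ) < 1 - γ := by linarith
  obtain ⟨smax, _, hsmax⟩ := Finset.exists_max_image Finset.univ V Finset.univ_nonempty
  have hmax : ∀ s, V s ≤ V smax := fun s => hsmax s (Finset.mem_univ s)
  have hA : ∀ s, V s ≤ 1 + γ * V smax := by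
    intro s
    rw [hfix s, Tdisc]
    apply Finset.sup'_le
    intro a _
    have hσ : suppF (U s a) V ≤ V smax := suppF_le (hUne s a) (hUsub s a) hmax
    have h2 := mul_le_mul_of_nonneg_left hσ hγ0
    have h3 := (hr s a).2
    linarith
  have hmax_le : V smax ≤ 1 / (1 - γ) := by
    have h4 := hA smax
    rw [le_div_iff₀ h1γ]
    nlinarith
  obtain ⟨smin, _, hsmin⟩ := Finset.exists_max_image Finset.univ (fun s => -V s)
    Finset.univ_nonempty
  have hmin : ∀ s, V smin ≤ V s := by
    intro s
    have h5 := hsmin s (Finset.mem_univ s)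
    simp only [neg_le_neg_iff] at h5
    exact h5
  have hB : 0 ≤ V smin := by
    have a₀ : A := Classical.arbitrary A
    have h1 : γ * V smin ≤ V smin := by
      conv_rhs => rw [hfix smin, Tdisc]
      refine le_trans ?_ (Finset.le_sup' _ (Finset.mem_univ a₀))
      have hσ : V smin ≤ suppF (U smin a₀) V := le_suppF (hUne smin a₀) (hUsub smin a₀) hmin
      have h2 := mul_le_mul_of_nonneg_left hσ hγ0
      have h3 := (hr smin a₀).1
      linarith
    by_contra hneg
    push_neg at hneg
    have : (1 - γ) * V smin < 0 := mul_neg_of_pos_of_neg h1γ hneg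
    linarith
  have hpos : ∀ s, 0 ≤ V s := fun s => le_trans hB (hmin s)
  refine ⟨hpos, fun s => ?_⟩
  rw [abs_of_nonneg (hpos s)]
  exact le_trans (hmax s) hmax_le

lemma disc_span {γ : ℝ} (hγ0 : 0 ≤ γ) (hγ1 : γ < 1) {V : S → ℝ}
    (hVb : ∀ s, |V s| ≤ 1 / (1 - γ)) (hV0 : ∀ s, 0 ≤ V s)
    {Q : Matrix S S ℝ} (hQ : StochM Q) (hQle : ∀ s, γ * (Q *ᵥ V) s ≤ V s)
    {sm : S} (hsm : ∀ s, V s ≤ V sm)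
    {K : ℕ} {ε : ℝ} (hK1 : 1 ≤ K) (hε : 0 < ε)
    (hgood : ∀ s, ∃ k, 1 ≤ k ∧ k ≤ K ∧ ε ≤ (Q ^ k) s sm) :
    ∀ s, V sm - V s ≤ K / ε := by
  classical
  set D : S → ℝ := fun s => V sm - V s with hD
  have hD0 : ∀ s, 0 ≤ D s := fun s => by
    rw [hD]; dsimp only; linarith [hsm s]
  have hDsm : D sm = 0 := by rw [hD]; dsimp only; ring
  set c : ℝ := (1 - γ) * V sm with hc
  have h1γ : (0:ℝ) < 1 - γ := by linarith
  have hc0 : 0 ≤ c := mul_nonneg (le_of_lt h1γ) (hV0 sm)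
  have hc1 : c ≤ 1 := by
    have h1 : V sm ≤ 1 / (1 - γ) := le_of_abs_le (hVb sm)
    rw [hc]
    calc (1 - γ) * V sm ≤ (1 - γ) * (1 / (1 - γ)) :=
        mul_le_mul_of_nonneg_left h1 (le_of_lt h1γ)
      _ = 1 := by field_simp
  set Qt : Matrix S S ℝ := Matrix.of (fun s s' => if s' = sm then 0 else Q s s') with hQt
  have hQt0 : ∀ i j, 0 ≤ Qt i j := by
    intro i j
    rw [hQt]
    dsimp only [Matrix.of_apply]
    split
    · exact le_rfl
    · exact hQ.1 i j
  have hQtle : ∀ i j, Qt i j ≤ Q i j := by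
    intro i j
    rw [hQt]
    dsimp only [Matrix.of_apply]
    split
    · exact hQ.1 i j
    · exact le_rfl
  -- `Qt *ᵥ D = Q *ᵥ D` since `D sm = 0`
  have hQtD : ∀ s, (Qt *ᵥ D) s = (Q *ᵥ D) s := by
    intro s
    apply Finset.sum_congr rfl
    intro s' _
    by_cases h : s' = sm
    · subst h
      rw [hDsm, mul_zero, mul_zero]
    · rw [hQt]
      dsimp only [Matrix.of_apply]
      rw [if_neg h]
  -- substochastic powers applied to 1
  have hsub1 : ∀ j s, 0 ≤ ((Qt ^ j) *ᵥ fun _ => (1:ℝ)) s ∧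
      ((Qt ^ j) *ᵥ fun _ => (1:ℝ)) s ≤ 1 := by
    intro j
    induction j with
    | zero => intro s; simp [Matrix.one_mulVec]
    | succ j ih =>
      intro s
      have hrw : ((Qt ^ (j+1)) *ᵥ fun _ => (1:ℝ)) s
          = (Qt *ᵥ ((Qt ^ j) *ᵥ fun _ => (1:ℝ))) s := by
        rw [Matrix.mulVec_mulVec, ← pow_succ']
      rw [hrw]
      constructor
      · exact mulVec_nonneg hQt0 (fun s' => (ih s').1) s
      · calc (Qt *ᵥ ((Qt ^ j) *ᵥ fun _ => (1:ℝ))) s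
            ≤ ∑ s', Qt s s' * 1 :=
            Finset.sum_le_sum fun s' _ =>
              mul_le_mul_of_nonneg_left (ih s').2 (hQt0 s s')
          _ ≤ ∑ s', Q s s' := by
            apply Finset.sum_le_sum
            intro s' _
            rw [mul_one]
            exact hQtle s s'
          _ = 1 := hQ.2 s
  -- basic one-step inequality
  have hstep : ∀ s, D s ≤ c + (Qt *ᵥ D) s := by
    intro s
    have h2 : (Q *ᵥ V) s = V sm - (Q *ᵥ D) s := by
      have hterm : ∀ s', Q s s' * V s' = Q s s' * V sm - Q s s' * D s' := by
        intro s'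
        rw [hD]
        dsimp only
        ring
      show ∑ s', Q s s' * V s' = V sm - ∑ s', Q s s' * D s'
      rw [Finset.sum_congr rfl (fun s' _ => hterm s'), Finset.sum_sub_distrib,
        ← Finset.sum_mul, hQ.2 s, one_mul]
    have h3 : γ * (Q *ᵥ V) s ≤ V s := hQle s
    have h4 : 0 ≤ (Q *ᵥ D) s := mulVec_nonneg hQ.1 hD0 s
    rw [hQtD s, hD]
    dsimp only
    rw [hc]
    nlinarith [h3, h2, h4]
  -- iterate
  have hiter : ∀ (j : ℕ), ∀ s : S, D s ≤ (j:ℝ) * c + ((Qt ^ j) *ᵥ D) s := by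
    intro j
    induction j with
    | zero => intro s; simp [Matrix.one_mulVec]
    | succ j ih =>
      intro s
      have h5 : (Qt *ᵥ D) s ≤ (Qt *ᵥ fun s' => j * c + ((Qt ^ j) *ᵥ D) s') s :=
        mulVec_mono hQt0 (fun s' => ih s') s
      have h6 : (Qt *ᵥ fun s' => j * c + ((Qt ^ j) *ᵥ D) s') s
          = (Qt *ᵥ fun _ => (j:ℝ) * c) s + ((Qt ^ (j+1)) *ᵥ D) s := by
        have hfe : (fun s' => (j:ℝ) * c + ((Qt ^ j) *ᵥ D) s')
            = (fun _ => (j:ℝ) * c) + ((Qt ^ j) *ᵥ D) := rfl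
        rw [hfe, Matrix.mulVec_add]
        dsimp only [Pi.add_apply]
        rw [Matrix.mulVec_mulVec, ← pow_succ']
      have h7 : (Qt *ᵥ fun _ => (j:ℝ) * c) s ≤ j * c := by
        have h8 : (Qt *ᵥ fun _ => (j:ℝ) * c) s = ((j:ℝ) * c) * ∑ s', Qt s s' := by
          simp only [Matrix.mulVec, dotProduct, Finset.mul_sum]
          apply Finset.sum_congr rfl
          intro s' _
          ring
        have h9 : ∑ s', Qt s s' ≤ 1 := by
          calc ∑ s', Qt s s' ≤ ∑ s', Q s s' := Finset.sum_le_sum fun s' _ => hQtle s s'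
            _ = 1 := hQ.2 s
        have h10 : 0 ≤ (j:ℝ) * c := mul_nonneg (Nat.cast_nonneg j) hc0
        rw [h8]
        nlinarith
      have h11 := hstep s
      rw [Nat.cast_succ]
      have h12 := h5
      rw [h6] at h12
      linarith
  -- taboo bound
  have hone : ∀ (k : ℕ), 1 ≤ k → ∀ s : S, ((Qt ^ k) *ᵥ fun _ => (1:ℝ)) s + (Q ^ k) s sm ≤ 1 := by
    intro k
    induction k with
    | zero => omega
    | succ k ih =>
      intro _ s
      rcases Nat.eq_zero_or_pos k with hk0 | hkpos
      · subst hk0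
        rw [pow_one, pow_one]
        have h12 : (Qt *ᵥ fun _ => (1:ℝ)) s = ∑ s', Qt s s' := by
          simp [Matrix.mulVec, dotProduct]
        rw [h12]
        have hsumite : ∑ s', (if s' = sm then Q s s' else 0) = Q s sm := by
          rw [Finset.sum_ite_eq' Finset.univ sm (fun s' => Q s s')]
          simp
        have h13 : ∑ s', Qt s s' + Q s sm = ∑ s', Q s s' := by
          rw [← hsumite, ← Finset.sum_add_distrib]
          apply Finset.sum_congr rfl
          intro s' _
          rw [hQt]
          dsimp only [Matrix.of_apply]
          by_cases h : s' = sm <;> simp [h]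
        rw [← hQ.2 s, ← h13]
      · have hrw1 : ((Qt ^ (k+1)) *ᵥ fun _ => (1:ℝ)) s
            = ∑ s', Qt s s' * (((Qt ^ k) *ᵥ fun _ => (1:ℝ)) s') := by
          rw [pow_succ', ← Matrix.mulVec_mulVec]
          rfl
        have hrw2 : (Q ^ (k+1)) s sm = ∑ s', Q s s' * (Q ^ k) s' sm := by
          rw [pow_succ', Matrix.mul_apply]
        rw [hrw1, hrw2, ← Finset.sum_add_distrib]
        have hterm : ∀ s', Qt s s' * (((Qt ^ k) *ᵥ fun _ => (1:ℝ)) s')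
            + Q s s' * (Q ^ k) s' sm ≤ Q s s' := by
          intro s'
          by_cases h : s' = sm
          · have hz : Qt s s' = 0 := by
              rw [hQt]
              dsimp only [Matrix.of_apply]
              rw [if_pos h]
            rw [hz, zero_mul, zero_add, h]
            calc Q s sm * (Q ^ k) sm sm ≤ Q s sm * 1 :=
                mul_le_mul_of_nonneg_left ((hQ.pow k).entry_le_one sm sm) (hQ.1 s sm)
              _ = Q s sm := mul_one _
          · have hz : Qt s s' = Q s s' := by
              rw [hQt]
              dsimp only [Matrix.of_apply]
              rw [if_neg h]
            rw [hz, ← mul_add]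
            calc Q s s' * ((((Qt ^ k) *ᵥ fun _ => (1:ℝ)) s') + (Q ^ k) s' sm)
                ≤ Q s s' * 1 :=
                mul_le_mul_of_nonneg_left (ih hkpos s') (hQ.1 s s')
              _ = Q s s' := mul_one _
        calc ∑ s', (Qt s s' * (((Qt ^ k) *ᵥ fun _ => (1:ℝ)) s')
              + Q s s' * (Q ^ k) s' sm) ≤ ∑ s', Q s s' :=
            Finset.sum_le_sum fun s' _ => hterm s'
          _ = 1 := hQ.2 s
  -- conclude
  intro s
  obtain ⟨sd, _, hsd⟩ := Finset.exists_max_image Finset.univ D Finset.univ_nonempty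
  have hDmax : ∀ s', D s' ≤ D sd := fun s' => hsd s' (Finset.mem_univ s')
  obtain ⟨k, hk1, hkK, hkε⟩ := hgood sd
  have h14 : ((Qt ^ K) *ᵥ D) sd ≤ D sd * (((Qt ^ K) *ᵥ fun _ => (1:ℝ)) sd) := by
    have h15 : ((Qt ^ K) *ᵥ D) sd ≤ ((Qt ^ K) *ᵥ fun _ => D sd) sd :=
      mulVec_mono (matpow_nonneg hQt0 K) hDmax sd
    have h16 : ((Qt ^ K) *ᵥ fun _ => D sd) sd
        = D sd * (((Qt ^ K) *ᵥ fun _ => (1:ℝ)) sd) := by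
      simp only [Matrix.mulVec, dotProduct, Finset.mul_sum]
      apply Finset.sum_congr rfl
      intro s' _
      ring
    rw [h16] at h15
    exact h15
  have h17 : ((Qt ^ K) *ᵥ fun _ => (1:ℝ)) sd ≤ ((Qt ^ k) *ᵥ fun _ => (1:ℝ)) sd := by
    have hKk : Qt ^ K = (Qt ^ k) * (Qt ^ (K - k)) := by
      rw [← pow_add]
      congr 1
      omega
    rw [hKk, ← Matrix.mulVec_mulVec]
    exact mulVec_mono (matpow_nonneg hQt0 k) (fun s' => (hsub1 (K - k) s').2) sd
  have h18 : ((Qt ^ k) *ᵥ fun _ => (1:ℝ)) sd ≤ 1 - ε := by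
    have := hone k hk1 sd
    linarith
  have h19 := hiter K sd
  have h20 : D sd * (1 - ε) ≥ ((Qt ^ K) *ᵥ D) sd := by
    calc ((Qt ^ K) *ᵥ D) sd ≤ D sd * (((Qt ^ K) *ᵥ fun _ => (1:ℝ)) sd) := h14
      _ ≤ D sd * (1 - ε) := by
        apply mul_le_mul_of_nonneg_left (le_trans h17 h18)
        exact le_trans (hD0 sd) (hDmax sd)
  have hDsd0 : 0 ≤ D sd := hD0 sd
  have h21 : ε * D sd ≤ K * c := by nlinarith
  have h22 : D s ≤ D sd := hDmax s
  have h23 : (K:ℝ) * c ≤ K := by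
    have : (0:ℝ) ≤ K := Nat.cast_nonneg K
    nlinarith
  have hfin : D s ≤ K / ε := by
    rw [le_div_iff₀ hε]
    nlinarith
  rw [hD] at hfin
  dsimp only at hfin
  exact hfin

end Disc

section Limit

variable {r : S → A → ℝ} {U : S → A → Set (S → ℝ)}

lemma sup'_add_const (f : A → ℝ) (c : ℝ) :
    Finset.univ.sup' Finset.univ_nonempty (fun a => f a + c)
      = Finset.univ.sup' Finset.univ_nonempty f + c := by
  apply le_antisymm
  · exact le_sup'_add fun a => le_rfl
  · have h := le_sup'_add (f := f) (g := fun a => f a + c) (c := -c)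
      (fun a => by linarith)
    linarith

lemma tendsto_pow_entry {Q : ℕ → Matrix S S ℝ} {Qb : Matrix S S ℝ}
    (h : ∀ i j, Tendsto (fun n => Q n i j) atTop (𝓝 (Qb i j))) (k : ℕ) :
    ∀ i j, Tendsto (fun n => ((Q n) ^ k) i j) atTop (𝓝 ((Qb ^ k) i j)) := by
  induction k with
  | zero =>
    intro i j
    simp only [pow_zero]
    exact tendsto_const_nhds
  | succ k ih =>
    intro i j
    have hfe : (fun n => ((Q n) ^ (k+1)) i j)
        = fun n => ∑ l, ((Q n) ^ k) i l * Q n l j := by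
      funext n
      rw [pow_succ, Matrix.mul_apply]
    rw [hfe, pow_succ, Matrix.mul_apply]
    exact tendsto_finset_sum _ (fun l _ => (ih i l).mul (h l j))

lemma exists_bellman_solution
    (hU : ∀ s a, (U s a).Nonempty ∧ IsCompact (U s a) ∧ Convex ℝ (U s a) ∧
      U s a ⊆ stdSimplex ℝ S)
    (hirr : Assump1 U) (hr : ∀ s a, r s a ∈ Set.Icc (0:ℝ) 1) :
    ∃ (g : ℝ) (h : S → ℝ), ∀ s, g + h s
      = Finset.univ.sup' Finset.univ_nonempty (fun a => r s a + suppF (U s a) h) := by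
  classical
  have hUne : ∀ s a, (U s a).Nonempty := fun s a => (hU s a).1
  have hUcomp : ∀ s a, IsCompact (U s a) := fun s a => (hU s a).2.1
  have hUsub : ∀ s a, U s a ⊆ stdSimplex ℝ S := fun s a => (hU s a).2.2.2
  -- discount sequence
  set γs : ℕ → ℝ := fun n => 1 - 1 / ((n:ℝ) + 2) with hγs
  have hγpos : ∀ n : ℕ, 0 < 1 / ((n:ℝ) + 2) := fun n => by positivity
  have hγhalf : ∀ n : ℕ, 1 / ((n:ℝ) + 2) ≤ 1/2 := by
    intro n
    rw [div_le_div_iff₀ (by positivity) (by norm_num)]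
    have : (0:ℝ) ≤ (n:ℝ) := Nat.cast_nonneg n
    linarith
  have hγ0 : ∀ n, 0 ≤ γs n := by
    intro n
    have := hγhalf n
    rw [hγs]
    dsimp only
    linarith
  have hγ1 : ∀ n, γs n < 1 := by
    intro n
    have := hγpos n
    rw [hγs]
    dsimp only
    linarith
  -- fixed points
  have hVex : ∀ n : ℕ, ∃ V : S → ℝ, ∀ s, V s = Tdisc r U (γs n) V s := fun n =>
    exists_disc_fixed hUne hUsub (hγ0 n) (hγ1 n)
  set V : ℕ → S → ℝ := fun n => (hVex n).choose with hV
  have hVfix : ∀ n s, V n s = Tdisc r U (γs n) (V n) s := fun n => (hVex n).choose_spec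
  have hVpos : ∀ n s, 0 ≤ V n s := fun n =>
    (disc_bounds hUne hUsub hr (hγ0 n) (hγ1 n) (hVfix n)).1
  have hVabs : ∀ n s, |V n s| ≤ 1 / (1 - γs n) := fun n =>
    (disc_bounds hUne hUsub hr (hγ0 n) (hγ1 n) (hVfix n)).2
  -- minimizing kernels
  have hPm : ∀ (n : ℕ) (s : S) (a : A), ∃ p ∈ U s a, dotV p (V n) = suppF (U s a) (V n) :=
    fun n s a => suppF_attained (hUne s a) (hUsub s a) (hUcomp s a) (V n)
  set Pm : ℕ → S → A → S → ℝ := fun n s a => (hPm n s a).choose with hPmdef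
  have hPmU : ∀ n s a, Pm n s a ∈ U s a := fun n s a => (hPm n s a).choose_spec.1
  have hPmdot : ∀ n s a, dotV (Pm n s a) (V n) = suppF (U s a) (V n) := fun n s a =>
    (hPm n s a).choose_spec.2
  -- compactness of kernel space, convergent subsequence
  set CK : Set (S → A → S → ℝ) := Set.univ.pi (fun s => Set.univ.pi (fun a => U s a)) with hCK
  have hCcomp : IsCompact CK :=
    isCompact_univ_pi (fun s => isCompact_univ_pi (fun a => hUcomp s a))
  have hPmC : ∀ n, Pm n ∈ CK := by
    intro n
    rw [hCK, Set.mem_univ_pi]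
    intro s
    rw [Set.mem_univ_pi]
    intro a
    exact hPmU n s a
  obtain ⟨Pb, hPbC, φ, hφ, hφtend⟩ := hCcomp.tendsto_subseq hPmC
  have hPbU : InU U Pb := by
    intro s a
    rw [hCK, Set.mem_univ_pi] at hPbC
    have h1 := hPbC s
    rw [Set.mem_univ_pi] at h1
    exact h1 a
  -- fixed deterministic policy, limit matrix, irreducibility constants
  set d : S → A := fun _ => Classical.arbitrary A with hd
  set Nb : Matrix S S ℝ := Matrix.of (fun s s' => Pb s (d s) s') with hNb
  have hNbirr : IrredM Nb := hirr d Pb hPbU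
  set k2 : S × S → ℕ := fun p => (hNbirr p.1 p.2).choose with hk2
  have hk2spec : ∀ p : S × S, 1 ≤ k2 p ∧ 0 < (Nb ^ (k2 p)) p.1 p.2 := fun p =>
    (hNbirr p.1 p.2).choose_spec
  set K : ℕ := Finset.univ.sup' Finset.univ_nonempty k2 with hKdef
  have hKk : ∀ p, k2 p ≤ K := fun p => Finset.le_sup' k2 (Finset.mem_univ p)
  have hK1 : 1 ≤ K := le_trans (hk2spec (Classical.arbitrary _)).1 (hKk _)
  set ε2 : ℝ := Finset.univ.inf' Finset.univ_nonempty
    (fun p : S × S => (Nb ^ (k2 p)) p.1 p.2) with hε2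
  have hε2pos : 0 < ε2 := by
    rw [hε2, Finset.lt_inf'_iff]
    exact fun p _ => (hk2spec p).2
  have hε2le : ∀ p : S × S, ε2 ≤ (Nb ^ (k2 p)) p.1 p.2 := fun p =>
    Finset.inf'_le _ (Finset.mem_univ p)
  -- matrices along the subsequence and their convergence
  set Q : ℕ → Matrix S S ℝ := fun n => Matrix.of (fun s s' => Pm (φ n) s (d s) s') with hQdef
  have hQstoch : ∀ n, StochM (Q n) := by
    intro n
    constructor
    · intro s s'
      exact (hUsub s (d s) (hPmU (φ n) s (d s))).1 s'
    · intro s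
      exact (hUsub s (d s) (hPmU (φ n) s (d s))).2
  have hentry : ∀ s a s', Tendsto (fun n => Pm (φ n) s a s') atTop (𝓝 (Pb s a s')) := by
    intro s a s'
    have h1 := hφtend
    rw [tendsto_pi_nhds] at h1
    have h2 := h1 s
    rw [tendsto_pi_nhds] at h2
    have h3 := h2 a
    rw [tendsto_pi_nhds] at h3
    exact h3 s'
  have hQentry : ∀ i j, Tendsto (fun n => Q n i j) atTop (𝓝 (Nb i j)) := fun i j =>
    hentry i (d i) j
  have hQpow := fun k => tendsto_pow_entry hQentry k
  have hgood_ev : ∀ᶠ n in atTop, ∀ p : S × S, ε2 / 2 ≤ ((Q n) ^ (k2 p)) p.1 p.2 := by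
    rw [Filter.eventually_all]
    intro p
    have h4 : ε2/2 < (Nb ^ (k2 p)) p.1 p.2 := by linarith [hε2le p]
    have := (hQpow (k2 p) p.1 p.2).eventually_const_lt h4
    filter_upwards [this] with n hn using le_of_lt hn
  -- span bound eventually
  set s₀ : S := Classical.arbitrary S with hs₀
  set Cb : ℝ := K / (ε2 / 2) with hCb
  have hCb0 : 0 ≤ Cb := by
    rw [hCb]
    apply div_nonneg (Nat.cast_nonneg K)
    linarith
  have hspan : ∀ᶠ n in atTop, ∀ s s' : S, V (φ n) s' - V (φ n) s ≤ Cb := by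
    filter_upwards [hgood_ev] with n hn
    obtain ⟨sm, _, hsmax⟩ := Finset.exists_max_image Finset.univ (V (φ n)) Finset.univ_nonempty
    have hsm : ∀ s, V (φ n) s ≤ V (φ n) sm := fun s => hsmax s (Finset.mem_univ s)
    have hQle : ∀ s, γs (φ n) * ((Q n) *ᵥ (V (φ n))) s ≤ V (φ n) s := by
      intro s
      have h1 : ((Q n) *ᵥ (V (φ n))) s = dotV (Pm (φ n) s (d s)) (V (φ n)) := rfl
      rw [h1, hPmdot (φ n) s (d s)]
      have h2 : V (φ n) s = Tdisc r U (γs (φ n)) (V (φ n)) s := hVfix (φ n) s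
      rw [h2, Tdisc]
      refine le_trans ?_ (Finset.le_sup' _ (Finset.mem_univ (d s)))
      have h3 := (hr s (d s)).1
      show γs (φ n) * suppF (U s (d s)) (V (φ n))
        ≤ r s (d s) + γs (φ n) * suppF (U s (d s)) (V (φ n))
      linarith
    have hds := disc_span (hγ0 (φ n)) (hγ1 (φ n)) (hVabs (φ n)) (fun s => hVpos (φ n) s)
      (hQstoch n) hQle hsm hK1 (by linarith : (0:ℝ) < ε2/2)
      (fun s => ⟨k2 (s, sm), (hk2spec (s, sm)).1, hKk (s, sm), hn (s, sm)⟩)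
    intro s s'
    calc V (φ n) s' - V (φ n) s ≤ V (φ n) sm - V (φ n) s := by linarith [hsm s']
      _ ≤ Cb := by rw [hCb]; exact hds s
  -- relative value and gain sequences
  set hseq : ℕ → S → ℝ := fun n s => V (φ n) s - V (φ n) s₀ with hhseq
  set gseq : ℕ → ℝ := fun n => (1 - γs (φ n)) * V (φ n) s₀ with hgseq
  have hg01 : ∀ n, gseq n ∈ Set.Icc (0:ℝ) 1 := by
    intro n
    have h1 : 0 < 1 - γs (φ n) := by linarith [hγ1 (φ n)]
    constructor
    · exact mul_nonneg (le_of_lt h1) (hVpos (φ n) s₀)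
    · have h2 : V (φ n) s₀ ≤ 1 / (1 - γs (φ n)) := le_of_abs_le (hVabs (φ n) s₀)
      calc (1 - γs (φ n)) * V (φ n) s₀ ≤ (1 - γs (φ n)) * (1 / (1 - γs (φ n))) :=
          mul_le_mul_of_nonneg_left h2 (le_of_lt h1)
        _ = 1 := by field_simp
  have hhb : ∀ᶠ n in atTop, ∀ s, |hseq n s| ≤ Cb := by
    filter_upwards [hspan] with n hn s
    rw [abs_le]
    constructor
    · have h5 := hn s s₀
      show -Cb ≤ V (φ n) s - V (φ n) s₀
      linarith
    · have h5 := hn s₀ s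
      show V (φ n) s - V (φ n) s₀ ≤ Cb
      linarith
  -- the fixed-point equation in relative form
  have heqn : ∀ n s, gseq n + hseq n s = Finset.univ.sup' Finset.univ_nonempty
      (fun a => r s a + γs (φ n) * suppF (U s a) (hseq n)) := by
    intro n s
    have h1 : ∀ a : A, suppF (U s a) (V (φ n))
        = suppF (U s a) (hseq n) + V (φ n) s₀ := by
      intro a
      have h2 : V (φ n) = fun s' => hseq n s' + V (φ n) s₀ := by
        funext s'
        rw [hhseq]
        dsimp only
        ring
      conv_lhs => rw [h2]
      exact suppF_add_const (hUne s a) (hUsub s a) (hseq n) (V (φ n) s₀)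
    have h3 : V (φ n) s = Finset.univ.sup' Finset.univ_nonempty
        (fun a => (r s a + γs (φ n) * suppF (U s a) (hseq n)))
        + γs (φ n) * V (φ n) s₀ := by
      rw [hVfix (φ n) s, Tdisc]
      rw [show (fun a => r s a + γs (φ n) * suppF (U s a) (V (φ n)))
          = fun a => (r s a + γs (φ n) * suppF (U s a) (hseq n)) + γs (φ n) * V (φ n) s₀ from
        funext fun a => by rw [h1 a]; ring]
      exact sup'_add_const _ _
    have h9 : gseq n = (1 - γs (φ n)) * V (φ n) s₀ := rfl
    have h10 : hseq n s = V (φ n) s - V (φ n) s₀ := rfl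
    rw [h9, h10]
    linarith [h3]
  -- extract a convergent subsequence of (h, g)
  rw [Filter.eventually_atTop] at hhb
  obtain ⟨N₀, hN₀⟩ := hhb
  set Kset : Set ((S → ℝ) × ℝ) :=
    (Set.univ.pi (fun _ : S => Set.Icc (-Cb) Cb)) ×ˢ (Set.Icc (0:ℝ) 1) with hKset
  have hKcomp : IsCompact Kset :=
    (isCompact_univ_pi (fun _ => isCompact_Icc)).prod isCompact_Icc
  set seq : ℕ → ((S → ℝ) × ℝ) := fun n => (hseq (n + N₀), gseq (n + N₀)) with hseq2
  have hseqmem : ∀ n, seq n ∈ Kset := by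
    intro n
    constructor
    · rw [Set.mem_univ_pi]
      intro s
      have h5 := hN₀ (n + N₀) (by omega) s
      rw [abs_le] at h5
      exact h5
    · exact hg01 (n + N₀)
  obtain ⟨pair, _, ψ, hψ, hψtend⟩ := hKcomp.tendsto_subseq hseqmem
  obtain ⟨hstar, gstar⟩ := pair
  set idx : ℕ → ℕ := fun n => ψ n + N₀ with hidx
  have hhtend : Tendsto (fun n => hseq (idx n)) atTop (𝓝 hstar) := by
    have := (continuous_fst.tendsto (hstar, gstar)).comp hψtend
    exact this
  have hgtend : Tendsto (fun n => gseq (idx n)) atTop (𝓝 gstar) := by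
    have := (continuous_snd.tendsto (hstar, gstar)).comp hψtend
    exact this
  have hφidxtend : Tendsto (fun n => φ (idx n)) atTop atTop := by
    apply Filter.tendsto_atTop_mono (f := fun n => n)
    · intro n
      calc n ≤ ψ n := hψ.le_apply
        _ ≤ ψ n + N₀ := by omega
        _ ≤ φ (ψ n + N₀) := hφ.le_apply
    · exact tendsto_id
  have hγbase : Tendsto γs atTop (𝓝 1) := by
    have h0 : Tendsto (fun m : ℕ => 1 / ((m:ℝ) + 2)) atTop (𝓝 0) := by
      have h1 : Tendsto (fun m : ℕ => ((m:ℝ) + 2)) atTop atTop :=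
        tendsto_atTop_add_const_right _ 2 tendsto_natCast_atTop_atTop
      have h2 := tendsto_inv_atTop_zero.comp h1
      simpa [one_div, Function.comp_def] using h2
    have h3 := tendsto_const_nhds.sub h0 (f := fun _ : ℕ => (1:ℝ))
    have h4 : γs = fun x : ℕ => 1 - 1 / ((x:ℝ) + 2) := hγs
    rw [h4]
    simpa using h3
  have hγtend : Tendsto (fun n => γs (φ (idx n))) atTop (𝓝 1) := hγbase.comp hφidxtend
  -- pass to the limit
  refine ⟨gstar, hstar, fun s => ?_⟩
  have hσtend : ∀ a, Tendsto (fun n => suppF (U s a) (hseq (idx n))) atTop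
      (𝓝 (suppF (U s a) hstar)) := by
    intro a
    rw [← tendsto_sub_nhds_zero_iff]
    apply squeeze_zero_norm (a := fun n => dist (hseq (idx n)) hstar)
    · intro n
      rw [Real.norm_eq_abs]
      apply abs_suppF_sub_le (hUne s a) (hUsub s a)
      intro s'
      rw [← Real.dist_eq]
      exact dist_le_pi_dist _ _ s'
    · exact tendsto_iff_dist_tendsto_zero.mp hhtend
  have hctend : Tendsto (fun n => gseq (idx n) + hseq (idx n) s) atTop
      (𝓝 (gstar + hstar s)) := by
    apply hgtend.add
    have := tendsto_pi_nhds.mp hhtend s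
    exact this
  have hdtend : ∀ a, Tendsto (fun n => r s a + γs (φ (idx n)) * suppF (U s a) (hseq (idx n)))
      atTop (𝓝 (r s a + suppF (U s a) hstar)) := by
    intro a
    have h6 := (hγtend.mul (hσtend a))
    rw [one_mul] at h6
    exact tendsto_const_nhds.add h6
  apply le_antisymm
  · -- ≤ : via a frequently attained maximizer
    have han : ∀ n : ℕ, ∃ a : A, Finset.univ.sup' Finset.univ_nonempty
        (fun a => r s a + γs (φ (idx n)) * suppF (U s a) (hseq (idx n)))
        = r s a + γs (φ (idx n)) * suppF (U s a) (hseq (idx n)) := by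
      intro n
      obtain ⟨a, _, ha⟩ := Finset.exists_mem_eq_sup' Finset.univ_nonempty
        (fun a => r s a + γs (φ (idx n)) * suppF (U s a) (hseq (idx n)))
      exact ⟨a, ha⟩
    set an : ℕ → A := fun n => (han n).choose with han2
    have hanspec : ∀ n, Finset.univ.sup' Finset.univ_nonempty
        (fun a => r s a + γs (φ (idx n)) * suppF (U s a) (hseq (idx n)))
        = r s (an n) + γs (φ (idx n)) * suppF (U s (an n)) (hseq (idx n)) := fun n =>
      (han n).choose_spec
    have hpigeon : ∃ a : A, ∃ᶠ n in atTop, an n = a := by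
      by_contra hcon
      push_neg at hcon
      have h7 : ∀ a : A, ∀ᶠ n in atTop, an n ≠ a := by
        intro a
        have := hcon a
        exact this
      have h8 : ∀ᶠ n in atTop, ∀ a : A, an n ≠ a := Filter.eventually_all.mpr h7
      obtain ⟨n, hn⟩ := h8.exists
      exact hn (an n) rfl
    obtain ⟨a, hfreq⟩ := hpigeon
    have hfreq2 : ∃ᶠ n in atTop, gseq (idx n) + hseq (idx n) s
        = r s a + γs (φ (idx n)) * suppF (U s a) (hseq (idx n)) := by
      apply hfreq.mono
      intro n hn
      rw [heqn (idx n) s, hanspec n, hn]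
    have := tendsto_nhds_unique_of_frequently_eq hctend (hdtend a) hfreq2
    rw [this]
    exact Finset.le_sup' (fun a => r s a + suppF (U s a) hstar) (Finset.mem_univ a)
  · -- ≥ : limits of pointwise inequalities
    apply Finset.sup'_le
    intro a _
    apply le_of_tendsto_of_tendsto' (hdtend a) hctend
    intro n
    rw [heqn (idx n) s]
    exact Finset.le_sup'
      (fun a => r s a + γs (φ (idx n)) * suppF (U s a) (hseq (idx n)))
      (Finset.mem_univ a)

end Limit

section Final

variable {r : S → A → ℝ} {U : S → A → Set (S → ℝ)}

lemma polMat_mulVec (π : S → A → ℝ) (P : S → A → S → ℝ) (h : S → ℝ) (s : S) :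
    (polMat π P *ᵥ h) s = ∑ a, π s a * dotV (P s a) h := by
  calc (polMat π P *ᵥ h) s = ∑ j, (∑ a, π s a * P s a j) * h j := rfl
    _ = ∑ j, ∑ a, π s a * P s a j * h j := by
        apply Finset.sum_congr rfl
        intro j _
        rw [Finset.sum_mul]
    _ = ∑ a, ∑ j, π s a * P s a j * h j := Finset.sum_comm
    _ = ∑ a, π s a * dotV (P s a) h := by
        apply Finset.sum_congr rfl
        intro a _
        rw [dotV, Finset.mul_sum]
        apply Finset.sum_congr rfl
        intro j _
        ring

lemma convex_le_sup' {π : A → ℝ} (hπ : π ∈ stdSimplex ℝ A) (f : A → ℝ) :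
    ∑ a, π a * f a ≤ Finset.univ.sup' Finset.univ_nonempty f := by
  calc ∑ a, π a * f a
      ≤ ∑ a, π a * Finset.univ.sup' Finset.univ_nonempty f :=
      Finset.sum_le_sum fun a _ =>
        mul_le_mul_of_nonneg_left (Finset.le_sup' f (Finset.mem_univ a)) (hπ.1 a)
    _ = Finset.univ.sup' Finset.univ_nonempty f := by
        rw [← Finset.sum_mul, hπ.2, one_mul]

lemma sum_ite_one (b : A) (f : A → ℝ) [inst : ∀ a : A, Decidable (a = b)] :
    ∑ a, (if a = b then (1:ℝ) else 0) * f a = f b := by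
  rw [Finset.sum_eq_single b]
  · rw [if_pos rfl, one_mul]
  · intro a _ hne
    rw [if_neg hne, zero_mul]
  · intro hb
    exact absurd (Finset.mem_univ b) hb

lemma exists_abs_bound (h : S → ℝ) : ∃ H : ℝ, ∀ s, |h s| ≤ H := by
  obtain ⟨sm, _, hsm⟩ := Finset.exists_max_image Finset.univ (fun s => |h s|)
    Finset.univ_nonempty
  exact ⟨|h sm|, fun s => hsm s (Finset.mem_univ s)⟩

/-- every policy has robust average reward at most `g` -/
lemma robAvgR_le_g
    (hU : ∀ s a, (U s a).Nonempty ∧ IsCompact (U s a) ∧ Convex ℝ (U s a) ∧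
      U s a ⊆ stdSimplex ℝ S)
    (hr : ∀ s a, r s a ∈ Set.Icc (0:ℝ) 1)
    {g : ℝ} {h : S → ℝ}
    (hbell : ∀ s, g + h s
      = Finset.univ.sup' Finset.univ_nonempty (fun a => r s a + suppF (U s a) h))
    {μ : S → A → ℝ} (hμ : ∀ s, μ s ∈ stdSimplex ℝ A) (s : S) :
    robAvgR U μ r s ≤ g := by
  classical
  have hUne : ∀ s a, (U s a).Nonempty := fun s a => (hU s a).1
  have hUcomp : ∀ s a, IsCompact (U s a) := fun s a => (hU s a).2.1
  have hUsub : ∀ s a, U s a ⊆ stdSimplex ℝ S := fun s a => (hU s a).2.2.2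
  have hPsel : ∀ (s' : S) (a : A), ∃ p ∈ U s' a, dotV p h = suppF (U s' a) h :=
    fun s' a => suppF_attained (hUne s' a) (hUsub s' a) (hUcomp s' a) h
  set Ps : S → A → S → ℝ := fun s' a => (hPsel s' a).choose with hPs
  have hPsU : InU U Ps := fun s' a => (hPsel s' a).choose_spec.1
  have hPsdot : ∀ s' a, dotV (Ps s' a) h = suppF (U s' a) h :=
    fun s' a => (hPsel s' a).choose_spec.2
  have hPsimp : ∀ s' a, Ps s' a ∈ stdSimplex ℝ S := fun s' a => hUsub s' a (hPsU s' a)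
  obtain ⟨H, hH⟩ := exists_abs_bound h
  have hle : ∀ s', polRew μ r s' + (polMat μ Ps *ᵥ h) s' ≤ g + h s' := by
    intro s'
    rw [polMat_mulVec]
    have h1 : polRew μ r s' + ∑ a, μ s' a * dotV (Ps s' a) h
        = ∑ a, μ s' a * (r s' a + suppF (U s' a) h) := by
      rw [polRew, ← Finset.sum_add_distrib]
      apply Finset.sum_congr rfl
      intro a _
      rw [hPsdot s' a]
      ring
    rw [h1, hbell s']
    exact convex_le_sup' (hμ s') _
  calc robAvgR U μ r s ≤ avgR μ Ps r s := robAvgR_le_avgR hμ hUsub hr hPsU s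
    _ ≤ g := avgR_le_of_bellman hμ hPsimp hr hH hle s

/-- a greedy deterministic policy achieves at least `g` robustly -/
lemma exists_greedy
    (hU : ∀ s a, (U s a).Nonempty ∧ IsCompact (U s a) ∧ Convex ℝ (U s a) ∧
      U s a ⊆ stdSimplex ℝ S)
    (hr : ∀ s a, r s a ∈ Set.Icc (0:ℝ) 1)
    {g : ℝ} {h : S → ℝ}
    (hbell : ∀ s, g + h s
      = Finset.univ.sup' Finset.univ_nonempty (fun a => r s a + suppF (U s a) h)) :
    ∃ μ : S → A → ℝ, (∀ s, μ s ∈ stdSimplex ℝ A) ∧ ∀ s, g ≤ robAvgR U μ r s := by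
  classical
  have hUne : ∀ s a, (U s a).Nonempty := fun s a => (hU s a).1
  have hUsub : ∀ s a, U s a ⊆ stdSimplex ℝ S := fun s a => (hU s a).2.2.2
  have hamax : ∀ s : S, ∃ a : A, Finset.univ.sup' Finset.univ_nonempty
      (fun a => r s a + suppF (U s a) h) = r s a + suppF (U s a) h := by
    intro s
    obtain ⟨a, _, ha⟩ := Finset.exists_mem_eq_sup' Finset.univ_nonempty
      (fun a => r s a + suppF (U s a) h)
    exact ⟨a, ha⟩
  set am : S → A := fun s => (hamax s).choose with ham
  have hamspec : ∀ s, Finset.univ.sup' Finset.univ_nonempty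
      (fun a => r s a + suppF (U s a) h) = r s (am s) + suppF (U s (am s)) h :=
    fun s => (hamax s).choose_spec
  set μ : S → A → ℝ := fun s a => if a = am s then 1 else 0 with hμdef
  have hμsimp : ∀ s, μ s ∈ stdSimplex ℝ A := by
    intro s
    constructor
    · intro a
      show (0:ℝ) ≤ if a = am s then 1 else 0
      split <;> norm_num
    · show ∑ a, (if a = am s then (1:ℝ) else 0) = 1
      have h0 := sum_ite_one (am s) (fun _ => (1:ℝ))
      simpa using h0
  obtain ⟨H, hH⟩ := exists_abs_bound h
  refine ⟨μ, hμsimp, fun s => ?_⟩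
  apply le_robAvgR hUne s
  intro P hP
  have hPsimp : ∀ s' a, P s' a ∈ stdSimplex ℝ S := fun s' a => hUsub s' a (hP s' a)
  apply le_avgR_of_bellman hμsimp hPsimp hr hH _ s
  intro s'
  have h1 : polRew μ r s' = r s' (am s') := by
    rw [polRew]
    exact sum_ite_one (am s') (r s')
  have h2 : (polMat μ P *ᵥ h) s' = dotV (P s' (am s')) h := by
    rw [polMat_mulVec]
    exact sum_ite_one (am s') (fun a => dotV (P s' a) h)
  have h3 : suppF (U s' (am s')) h ≤ dotV (P s' (am s')) h :=
    suppF_le_dotV (hUne s' (am s')) (hUsub s' (am s')) (hP s' (am s'))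
  rw [h1, h2, hbell s', hamspec s']
  linarith

/-- the optimal value at every state equals `g` -/
lemma sSup_eq_g
    (hU : ∀ s a, (U s a).Nonempty ∧ IsCompact (U s a) ∧ Convex ℝ (U s a) ∧
      U s a ⊆ stdSimplex ℝ S)
    (hr : ∀ s a, r s a ∈ Set.Icc (0:ℝ) 1)
    {g : ℝ} {h : S → ℝ}
    (hbell : ∀ s, g + h s
      = Finset.univ.sup' Finset.univ_nonempty (fun a => r s a + suppF (U s a) h))
    (s : S) :
    sSup {x | ∃ μ : S → A → ℝ, (∀ s', μ s' ∈ stdSimplex ℝ A) ∧ x = robAvgR U μ r s} = g := by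
  obtain ⟨μg, hμg, hglow⟩ := exists_greedy hU hr hbell
  apply le_antisymm
  · refine csSup_le ⟨robAvgR U μg r s, ⟨μg, hμg, rfl⟩⟩ ?_
    rintro x ⟨μ, hμ, rfl⟩
    exact robAvgR_le_g hU hr hbell hμ s
  · have hmem : robAvgR U μg r s ∈
        {x | ∃ μ : S → A → ℝ, (∀ s', μ s' ∈ stdSimplex ℝ A) ∧ x = robAvgR U μ r s} :=
      ⟨μg, hμg, rfl⟩
    have hub : BddAbove {x | ∃ μ : S → A → ℝ, (∀ s', μ s' ∈ stdSimplex ℝ A)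
        ∧ x = robAvgR U μ r s} := by
      refine ⟨g, ?_⟩
      rintro x ⟨μ, hμ, rfl⟩
      exact robAvgR_le_g hU hr hbell hμ s
    exact le_trans (hglow s) (le_csSup hub hmem)

/-- tightness : an optimal policy satisfies the Bellman equation with equality -/
lemma optimal_tight
    (hU : ∀ s a, (U s a).Nonempty ∧ IsCompact (U s a) ∧ Convex ℝ (U s a) ∧
      U s a ⊆ stdSimplex ℝ S)
    (hirr : Assump1 U)
    (hr : ∀ s a, r s a ∈ Set.Icc (0:ℝ) 1)
    {g : ℝ} {h : S → ℝ}
    (hbell : ∀ s, g + h s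
      = Finset.univ.sup' Finset.univ_nonempty (fun a => r s a + suppF (U s a) h))
    {π : S → A → ℝ} (hπ : ∀ s, π s ∈ stdSimplex ℝ A)
    (hopt : ∀ s, robAvgR U π r s = g) :
    ∀ s, ∑ a, π s a * (r s a + suppF (U s a) h) = g + h s := by
  classical
  have hUne : ∀ s a, (U s a).Nonempty := fun s a => (hU s a).1
  have hUcomp : ∀ s a, IsCompact (U s a) := fun s a => (hU s a).2.1
  have hUsub : ∀ s a, U s a ⊆ stdSimplex ℝ S := fun s a => (hU s a).2.2.2
  have hle : ∀ s, ∑ a, π s a * (r s a + suppF (U s a) h) ≤ g + h s := by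
    intro s
    rw [hbell s]
    exact convex_le_sup' (hπ s) _
  by_contra hcon
  push_neg at hcon
  obtain ⟨s₁, hs₁⟩ := hcon
  have hs₁lt : ∑ a, π s₁ a * (r s₁ a + suppF (U s₁ a) h) < g + h s₁ :=
    lt_of_le_of_ne (hle s₁) hs₁
  -- slack
  set δ : S → ℝ := fun s => g + h s - ∑ a, π s a * (r s a + suppF (U s a) h) with hδ
  have hδ0 : ∀ s, 0 ≤ δ s := by
    intro s
    rw [hδ]
    dsimp only
    linarith [hle s]
  have hδpos : 0 < δ s₁ := by
    rw [hδ]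
    dsimp only
    linarith
  -- minimizing kernel
  have hPsel : ∀ (s' : S) (a : A), ∃ p ∈ U s' a, dotV p h = suppF (U s' a) h :=
    fun s' a => suppF_attained (hUne s' a) (hUsub s' a) (hUcomp s' a) h
  set Ps : S → A → S → ℝ := fun s' a => (hPsel s' a).choose with hPs
  have hPsU : InU U Ps := fun s' a => (hPsel s' a).choose_spec.1
  have hPsdot : ∀ s' a, dotV (Ps s' a) h = suppF (U s' a) h :=
    fun s' a => (hPsel s' a).choose_spec.2
  have hPsimp : ∀ s' a, Ps s' a ∈ stdSimplex ℝ S := fun s' a => hUsub s' a (hPsU s' a)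
  have hM := stochM_polMat (π := π) (P := Ps) hπ hPsimp
  have hMirr : IrredM (polMat π Ps) := polMat_irred hirr hπ hPsU hPsimp
  obtain ⟨c, hc0, hcev⟩ := window_liminf hM hMirr hδ0 hδpos s₁
  obtain ⟨H, hH⟩ := exists_abs_bound h
  have heq : ∀ s, polRew π r s + (polMat π Ps *ᵥ h) s + δ s ≤ g + h s := by
    intro s
    rw [polMat_mulVec]
    have h1 : polRew π r s + ∑ a, π s a * dotV (Ps s a) h
        = ∑ a, π s a * (r s a + suppF (U s a) h) := by
      rw [polRew, ← Finset.sum_add_distrib]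
      apply Finset.sum_congr rfl
      intro a _
      rw [hPsdot s a]
      ring
    rw [h1, hδ]
    dsimp only
    linarith
  have hup : avgR π Ps r s₁ ≤ g - c :=
    avgR_le_of_bellman_slack hπ hPsimp hr hH hδ0 heq s₁ hcev
  have hlow : robAvgR U π r s₁ ≤ g - c :=
    le_trans (robAvgR_le_avgR hπ hUsub hr hPsU s₁) hup
  rw [hopt s₁] at hlow
  linarith

end Final


end RMDP

/-- Under Assumption 1, the set of optimal robust policies is
convex: any convex combination of two optimal robust policies is optimal. -/
theorem stmt3 {S A : Type*} [Fintype S] [DecidableEq S] [Nonempty S]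
    [Fintype A] [Nonempty A]
    (r : S → A → ℝ) (hr : ∀ s a, r s a ∈ Set.Icc (0 : ℝ) 1)
    (U : S → A → Set (S → ℝ))
    (hU : ∀ s a, (U s a).Nonempty ∧ IsCompact (U s a) ∧ Convex ℝ (U s a) ∧
      U s a ⊆ stdSimplex ℝ S)
    (hirr : Assump1 U)
    (π₁ π₂ : S → A → ℝ)
    (hπ₁ : ∀ s, π₁ s ∈ stdSimplex ℝ A) (hπ₂ : ∀ s, π₂ s ∈ stdSimplex ℝ A)
    (hopt₁ : ∀ s, robAvgR U π₁ r s = sSup {x | ∃ μ : S → A → ℝ,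
      (∀ s', μ s' ∈ stdSimplex ℝ A) ∧ x = robAvgR U μ r s})
    (hopt₂ : ∀ s, robAvgR U π₂ r s = sSup {x | ∃ μ : S → A → ℝ,
      (∀ s', μ s' ∈ stdSimplex ℝ A) ∧ x = robAvgR U μ r s})
    (α : ℝ) (hα : α ∈ Set.Icc (0 : ℝ) 1) :
    (∀ s, (fun s' a => α * π₁ s' a + (1 - α) * π₂ s' a) s ∈ stdSimplex ℝ A) ∧
    (∀ s, robAvgR U (fun s' a => α * π₁ s' a + (1 - α) * π₂ s' a) r s
      = sSup {x | ∃ μ : S → A → ℝ,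
        (∀ s', μ s' ∈ stdSimplex ℝ A) ∧ x = robAvgR U μ r s}) := by
  classical
  obtain ⟨g, h, hbell⟩ := RMDP.exists_bellman_solution hU hirr hr
  have hUne : ∀ s a, (U s a).Nonempty := fun s a => (hU s a).1
  have hUsub : ∀ s a, U s a ⊆ stdSimplex ℝ S := fun s a => (hU s a).2.2.2
  have hα0 : 0 ≤ α := hα.1
  have hα1 : α ≤ 1 := hα.2
  set π3 : S → A → ℝ := fun s' a => α * π₁ s' a + (1 - α) * π₂ s' a with hπ3
  have hπ3simp : ∀ s, π3 s ∈ stdSimplex ℝ A := by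
    intro s
    constructor
    · intro a
      exact add_nonneg (mul_nonneg hα0 ((hπ₁ s).1 a))
        (mul_nonneg (by linarith) ((hπ₂ s).1 a))
    · show ∑ a, (α * π₁ s a + (1 - α) * π₂ s a) = 1
      rw [Finset.sum_add_distrib, ← Finset.mul_sum, ← Finset.mul_sum,
        (hπ₁ s).2, (hπ₂ s).2]
      ring
  have h7c : ∀ s : S, sSup {x | ∃ μ : S → A → ℝ,
      (∀ s', μ s' ∈ stdSimplex ℝ A) ∧ x = robAvgR U μ r s} = g :=
    fun s => RMDP.sSup_eq_g hU hr hbell s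
  have hopt₁' : ∀ s, robAvgR U π₁ r s = g := fun s => by rw [hopt₁ s, h7c s]
  have hopt₂' : ∀ s, robAvgR U π₂ r s = g := fun s => by rw [hopt₂ s, h7c s]
  have htight₁ := RMDP.optimal_tight hU hirr hr hbell hπ₁ hopt₁'
  have htight₂ := RMDP.optimal_tight hU hirr hr hbell hπ₂ hopt₂'
  have htight3 : ∀ s, ∑ a, π3 s a * (r s a + suppF (U s a) h) = g + h s := by
    intro s
    have e1 : ∑ a, π3 s a * (r s a + suppF (U s a) h)
        = α * (∑ a, π₁ s a * (r s a + suppF (U s a) h))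
          + (1 - α) * (∑ a, π₂ s a * (r s a + suppF (U s a) h)) := by
      rw [Finset.mul_sum, Finset.mul_sum, ← Finset.sum_add_distrib]
      apply Finset.sum_congr rfl
      intro a _
      show (α * π₁ s a + (1 - α) * π₂ s a) * (r s a + suppF (U s a) h) = _
      ring
    rw [e1, htight₁ s, htight₂ s]
    ring
  have hlow : ∀ s, g ≤ robAvgR U π3 r s := by
    intro s
    apply RMDP.le_robAvgR hUne s
    intro P hP
    have hPsimp : ∀ s' a, P s' a ∈ stdSimplex ℝ S := fun s' a => hUsub s' a (hP s' a)
    obtain ⟨H, hH⟩ := RMDP.exists_abs_bound h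
    apply RMDP.le_avgR_of_bellman hπ3simp hPsimp hr hH _ s
    intro s'
    rw [RMDP.polMat_mulVec]
    have h1 : ∑ a, π3 s' a * (r s' a + suppF (U s' a) h)
        ≤ polRew π3 r s' + ∑ a, π3 s' a * RMDP.dotV (P s' a) h := by
      rw [polRew, ← Finset.sum_add_distrib]
      apply Finset.sum_le_sum
      intro a _
      have h2 : suppF (U s' a) h ≤ RMDP.dotV (P s' a) h :=
        RMDP.suppF_le_dotV (hUne s' a) (hUsub s' a) (hP s' a)
      have h3 : 0 ≤ π3 s' a := (hπ3simp s').1 a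
      calc π3 s' a * (r s' a + suppF (U s' a) h)
          ≤ π3 s' a * (r s' a + RMDP.dotV (P s' a) h) :=
          mul_le_mul_of_nonneg_left (by linarith) h3
        _ = π3 s' a * r s' a + π3 s' a * RMDP.dotV (P s' a) h := by ring
    rw [← htight3 s']
    exact h1
  refine ⟨hπ3simp, fun s => ?_⟩
  rw [h7c s]
  exact le_antisymm (RMDP.robAvgR_le_g hU hr hbell hπ3simp s) (hlow s)
end

section
/- For every opponent policy ρ : S → Δ(B) and every (s,a) ∈ S × A, the induced uncertainty set (𝒫^ρ)^a_s = { ∑_{b∈B} ρ(b|s) P_b : P_b ∈ 𝒫^{(a,b)}_s for each b } is a nonempty compact convex subset of Δ(S). Moreover, if for every deterministic joint policy d : S → A × B and every kernel P (a choice of P^{(a,b)}_s ∈ 𝒫^{(a,b)}_s for all (s,a,b)) the stochastic matrix with rows (P^{d(s)}_s)_{s∈S} is irreducible, then for every deterministic policy d' : S → A and every induced kernel Q (a choice of Q^a_s ∈ (𝒫^ρ)^a_s for all (s,a)) the stochastic matrix with rows (Q^{d'(s)}_s)_{s∈S} is irreducible. -/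
open scoped BigOperators
open Matrix Filter

/-- The induced uncertainty set
`(U^ρ)^a_s = { ∑_b ρ(b|s) P_b : P_b ∈ U^{(a,b)}_s }`. -/
def inducedSet {S A B : Type*} [Fintype B]
    (U : S → A → B → Set (S → ℝ)) (ρ : S → B → ℝ) (s : S) (a : A) :
    Set (S → ℝ) :=
  {q | ∃ Pb : B → (S → ℝ), (∀ b, Pb b ∈ U s a b) ∧
    q = fun s' => ∑ b, ρ s b * Pb b s'}

/-- The induced reward `r^ρ(s,a) = ∑_b ρ(b|s) r(s,a,b)`. -/
noncomputable def inducedRew {S A B : Type*} [Fintype B]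
    (r : S → A → B → ℝ) (ρ : S → B → ℝ) : S → A → ℝ :=
  fun s a => ∑ b, ρ s b * r s a b

section Aux

lemma powNonneg {S : Type*} [Fintype S] [DecidableEq S] (M : Matrix S S ℝ)
    (hM : ∀ s s', 0 ≤ M s s') : ∀ k s s', 0 ≤ (M ^ k) s s' := by
  intro k
  induction k with
  | zero => intro s s'; simp [Matrix.one_apply]; positivity
  | succ k ih =>
    intro s s'
    rw [pow_succ, Matrix.mul_apply]
    exact Finset.sum_nonneg fun t _ => mul_nonneg (ih s t) (hM t s')

lemma powPosMono {S : Type*} [Fintype S] [DecidableEq S] (M N : Matrix S S ℝ)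
    (hM : ∀ s s', 0 ≤ M s s') (hN : ∀ s s', 0 ≤ N s s')
    (h : ∀ s s', 0 < M s s' → 0 < N s s') :
    ∀ k s s', 0 < (M ^ k) s s' → 0 < (N ^ k) s s' := by
  intro k
  induction k with
  | zero =>
    intro s s' h
    rcases eq_or_ne s s' with rfl | hne
    · simp [Matrix.one_apply]
    · simp [Matrix.one_apply, hne] at h
  | succ k ih =>
    intro s s' hpos
    rw [pow_succ, Matrix.mul_apply] at hpos
    obtain ⟨t, ht⟩ : ∃ t, 0 < (M ^ k) s t * M t s' := by
      by_contra hc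
      push_neg at hc
      have := Finset.sum_nonpos (fun t (_ : t ∈ Finset.univ) => hc t)
      linarith
    have h1 : 0 < (M ^ k) s t := by
      rcases (mul_pos_iff.mp ht) with ⟨h1, _⟩ | ⟨h1, h2⟩
      · exact h1
      · exact absurd h2 (not_lt.mpr (hM t s'))
    have h2 : 0 < M t s' := by
      rcases (mul_pos_iff.mp ht) with ⟨_, h2⟩ | ⟨h1, _⟩
      · exact h2
      · exact absurd h1 (not_lt.mpr (powNonneg M hM k s t))
    rw [pow_succ, Matrix.mul_apply]
    refine Finset.sum_pos' (fun u _ => mul_nonneg (powNonneg N hN k s u) (hN u s'))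
      ⟨t, Finset.mem_univ t, mul_pos (ih s t h1) (h t s' h2)⟩

end Aux

/-- The induced uncertainty set is a nonempty compact convex
subset of the simplex; moreover inducing preserves irreducibility. -/
theorem stmt4 {S A B : Type*} [Fintype S] [DecidableEq S] [Nonempty S]
    [Fintype A] [Nonempty A] [Fintype B] [Nonempty B]
    (U : S → A → B → Set (S → ℝ))
    (hU : ∀ s a b, (U s a b).Nonempty ∧ IsCompact (U s a b) ∧ Convex ℝ (U s a b) ∧
      U s a b ⊆ stdSimplex ℝ S) :
    (∀ (ρ : S → B → ℝ), (∀ s, ρ s ∈ stdSimplex ℝ B) → ∀ (s : S) (a : A),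
      (inducedSet U ρ s a).Nonempty ∧ IsCompact (inducedSet U ρ s a) ∧
      Convex ℝ (inducedSet U ρ s a) ∧ inducedSet U ρ s a ⊆ stdSimplex ℝ S) ∧
    ((∀ (d : S → A × B) (P : S → A → B → S → ℝ),
        (∀ s a b, P s a b ∈ U s a b) →
        IrredM (Matrix.of fun s s' => P s (d s).1 (d s).2 s')) →
      ∀ (ρ : S → B → ℝ), (∀ s, ρ s ∈ stdSimplex ℝ B) →
      ∀ (d' : S → A) (Q : S → A → S → ℝ),
        (∀ s a, Q s a ∈ inducedSet U ρ s a) →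
        IrredM (Matrix.of fun s s' => Q s (d' s) s')) := by
  constructor
  · intro ρ hρ s a
    have himg : inducedSet U ρ s a =
        (fun Pb : B → (S → ℝ) => fun s' => ∑ b, ρ s b * Pb b s') ''
          (Set.univ.pi (U s a)) := by
      ext q
      constructor
      · rintro ⟨Pb, hPb, rfl⟩
        exact ⟨Pb, fun b _ => hPb b, rfl⟩
      · rintro ⟨Pb, hPb, rfl⟩
        exact ⟨Pb, fun b => hPb b (Set.mem_univ b), rfl⟩
    refine ⟨?_, ?_, ?_, ?_⟩
    · obtain ⟨Pb, hPb⟩ := Classical.axiomOfChoice (fun b => (hU s a b).1)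
      exact ⟨_, Pb, hPb, rfl⟩
    · rw [himg]
      refine IsCompact.image (isCompact_univ_pi fun b => (hU s a b).2.1) ?_
      refine continuous_pi fun s' => ?_
      exact continuous_finset_sum _ fun b _ =>
        (continuous_const.mul ((continuous_apply s').comp (continuous_apply b)))
    · rintro q1 ⟨P1, hP1, rfl⟩ q2 ⟨P2, hP2, rfl⟩ t u ht hu htu
      refine ⟨fun b => t • P1 b + u • P2 b,
        fun b => (hU s a b).2.2.1 (hP1 b) (hP2 b) ht hu htu, ?_⟩
      funext s'
      simp only [Pi.add_apply, Pi.smul_apply, smul_eq_mul]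
      rw [Finset.mul_sum, Finset.mul_sum, ← Finset.sum_add_distrib]
      exact Finset.sum_congr rfl fun b _ => by ring
    · rintro q ⟨Pb, hPb, rfl⟩
      have hρ0 : ∀ b, 0 ≤ ρ s b := (hρ s).1
      have hP0 : ∀ b s', 0 ≤ Pb b s' := fun b => ((hU s a b).2.2.2 (hPb b)).1
      refine ⟨fun s' => Finset.sum_nonneg fun b _ => mul_nonneg (hρ0 b) (hP0 b s'), ?_⟩
      rw [Finset.sum_comm]
      calc ∑ b, ∑ s', ρ s b * Pb b s'
          = ∑ b, ρ s b * ∑ s', Pb b s' := by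
            exact Finset.sum_congr rfl fun b _ => (Finset.mul_sum _ _ _).symm
        _ = ∑ b, ρ s b := by
            refine Finset.sum_congr rfl fun b _ => ?_
            rw [((hU s a b).2.2.2 (hPb b)).2, mul_one]
        _ = 1 := (hρ s).2
  · intro hirr ρ hρ d' Q hQ
    -- choose a positive-probability action for each state
    have hbs : ∀ s : S, ∃ b, 0 < ρ s b := by
      intro s
      by_contra hc
      push_neg at hc
      have h1 : ∑ b, ρ s b = 1 := (hρ s).2
      have := Finset.sum_nonpos (fun b (_ : b ∈ Finset.univ) => hc b)
      linarith
    choose bs hbs' using hbs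
    -- choose the representing families for Q
    have hch : ∀ s a, ∃ Pb : B → (S → ℝ), (∀ b, Pb b ∈ U s a b) ∧
        Q s a = fun s' => ∑ b, ρ s b * Pb b s' := fun s a => hQ s a
    choose P hPU hPQ using hch
    set d : S → A × B := fun s => (d' s, bs s) with hd
    set Pfull : S → A → B → S → ℝ := fun s a b => P s a b with hPfull
    have hMirr := hirr d Pfull (fun s a b => hPU s a b)
    set M : Matrix S S ℝ := Matrix.of fun s s' => P s (d' s) (bs s) s' with hM
    set N : Matrix S S ℝ := Matrix.of fun s s' => Q s (d' s) s' with hN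
    have hMN : M = Matrix.of fun s s' => Pfull s (d s).1 (d s).2 s' := rfl
    have hP0 : ∀ s a b s', 0 ≤ P s a b s' := fun s a b s' =>
      ((hU s a b).2.2.2 (hPU s a b)).1 s'
    have hρ0 : ∀ s b, 0 ≤ ρ s b := fun s => (hρ s).1
    have hNval : ∀ s s', N s s' = ∑ b, ρ s b * P s (d' s) b s' := by
      intro s s'
      show Q s (d' s) s' = _
      rw [hPQ s (d' s)]
    have hM0 : ∀ s s', 0 ≤ M s s' := fun s s' => hP0 s (d' s) (bs s) s'
    have hN0 : ∀ s s', 0 ≤ N s s' := by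
      intro s s'
      rw [hNval]
      exact Finset.sum_nonneg fun b _ => mul_nonneg (hρ0 s b) (hP0 s (d' s) b s')
    have hkey : ∀ s s', 0 < M s s' → 0 < N s s' := by
      intro s s' hpos
      rw [hNval]
      refine Finset.sum_pos' (fun b _ => mul_nonneg (hρ0 s b) (hP0 s (d' s) b s'))
        ⟨bs s, Finset.mem_univ _, mul_pos (hbs' s) hpos⟩
    intro s s'
    obtain ⟨k, hk, hkpos⟩ := hMirr s s'
    exact ⟨k, hk, powPosMono M N hM0 hN0 hkey k s s' hkpos⟩
end

section
/- For any two opponent policies ρ, ρ' : S → Δ(B), every (s,a) ∈ S × A, and every h : S → ℝ, the support functions of the induced uncertainty sets satisfy |σ_{(𝒫^ρ)^a_s}(h) − σ_{(𝒫^{ρ'})^a_s}(h)| ≤ ( ∑_{b∈B} |ρ(b|s) − ρ'(b|s)| ) · max_{s'} |h(s')|. -/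
open scoped BigOperators
open Matrix Filter

private lemma sInf_abs_sub_le {A B : Set ℝ} {d : ℝ}
    (hA : A.Nonempty) (hB : B.Nonempty) (bA : BddBelow A) (bB : BddBelow B)
    (h1 : ∀ x ∈ A, ∃ y ∈ B, |x - y| ≤ d)
    (h2 : ∀ y ∈ B, ∃ x ∈ A, |x - y| ≤ d) :
    |sInf A - sInf B| ≤ d := by
  rw [abs_sub_le_iff]
  constructor
  · rw [sub_le_iff_le_add, ← sub_le_iff_le_add']
    apply le_csInf hB
    intro y hy
    obtain ⟨x, hx, hxy⟩ := h2 y hy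
    have := abs_le.mp hxy
    linarith [csInf_le bA hx]
  · rw [sub_le_iff_le_add, ← sub_le_iff_le_add']
    apply le_csInf hA
    intro x hx
    obtain ⟨y, hy, hxy⟩ := h1 x hx
    have := abs_le.mp hxy
    linarith [csInf_le bB hy]

/-- Lipschitz dependence of the induced support function on the
opponent policy:
`|σ_{(U^ρ)^a_s}(h) − σ_{(U^{ρ'})^a_s}(h)| ≤ (∑_b |ρ(b|s) − ρ'(b|s)|) · max_{s'} |h(s')|`. -/
theorem stmt6 {S A B : Type*} [Fintype S] [DecidableEq S] [Nonempty S]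
    [Fintype A] [Nonempty A] [Fintype B] [Nonempty B]
    (U : S → A → B → Set (S → ℝ))
    (hU : ∀ s a b, (U s a b).Nonempty ∧ IsCompact (U s a b) ∧
      U s a b ⊆ stdSimplex ℝ S)
    (ρ ρ' : S → B → ℝ)
    (hρ : ∀ s, ρ s ∈ stdSimplex ℝ B) (hρ' : ∀ s, ρ' s ∈ stdSimplex ℝ B)
    (s : S) (a : A) (h : S → ℝ) :
    |suppF (inducedSet U ρ s a) h - suppF (inducedSet U ρ' s a) h|
      ≤ (∑ b, |ρ s b - ρ' s b|) * ⨆ s' : S, |h s'| := by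
  set M : ℝ := ⨆ s' : S, |h s'| with hMdef
  have hM : ∀ s', |h s'| ≤ M := fun s' =>
    le_ciSup (Set.Finite.bddAbove (Set.finite_range (fun t => |h t|))) s'
  have hM0 : 0 ≤ M := le_trans (abs_nonneg _) (hM (Classical.arbitrary S))
  -- bound on the inner products with simplex elements
  have hc : ∀ p : S → ℝ, p ∈ stdSimplex ℝ S → |∑ s', p s' * h s'| ≤ M := by
    intro p hp
    calc |∑ s', p s' * h s'| ≤ ∑ s', |p s' * h s'| := Finset.abs_sum_le_sum_abs _ _
      _ = ∑ s', p s' * |h s'| := by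
          refine Finset.sum_congr rfl fun s' _ => ?_
          rw [abs_mul, abs_of_nonneg (hp.1 s')]
      _ ≤ ∑ s', p s' * M := Finset.sum_le_sum fun s' _ =>
          mul_le_mul_of_nonneg_left (hM s') (hp.1 s')
      _ = M := by rw [← Finset.sum_mul, hp.2, one_mul]
  -- value attached to a selection Pb under a policy τ
  have hval : ∀ (τ : S → B → ℝ) (Pb : B → (S → ℝ)),
      ∑ s', (∑ b, τ s b * Pb b s') * h s'
        = ∑ b, τ s b * ∑ s', Pb b s' * h s' := by
    intro τ Pb
    simp_rw [Finset.sum_mul, Finset.mul_sum]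
    rw [Finset.sum_comm]
    exact Finset.sum_congr rfl fun b _ => Finset.sum_congr rfl fun s' _ => by ring
  -- key pairing bound
  have key : ∀ Pb : B → (S → ℝ), (∀ b, Pb b ∈ U s a b) →
      |∑ b, ρ s b * ∑ s', Pb b s' * h s' - ∑ b, ρ' s b * ∑ s', Pb b s' * h s'|
        ≤ (∑ b, |ρ s b - ρ' s b|) * M := by
    intro Pb hPb
    rw [← Finset.sum_sub_distrib]
    calc |∑ b, (ρ s b * ∑ s', Pb b s' * h s' - ρ' s b * ∑ s', Pb b s' * h s')|
        ≤ ∑ b, |ρ s b * ∑ s', Pb b s' * h s' - ρ' s b * ∑ s', Pb b s' * h s'| :=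
          Finset.abs_sum_le_sum_abs _ _
      _ ≤ ∑ b, |ρ s b - ρ' s b| * M := by
          refine Finset.sum_le_sum fun b _ => ?_
          rw [← sub_mul, abs_mul]
          exact mul_le_mul_of_nonneg_left
            (hc (Pb b) ((hU s a b).2.2 (hPb b))) (abs_nonneg _)
      _ = (∑ b, |ρ s b - ρ' s b|) * M := (Finset.sum_mul _ _ _).symm
  -- nonemptiness of selections
  obtain ⟨P0, hP0⟩ : ∃ Pb : B → (S → ℝ), ∀ b, Pb b ∈ U s a b :=
    ⟨fun b => (hU s a b).1.choose, fun b => (hU s a b).1.choose_spec⟩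
  -- bounds on image sets
  have hbdd : ∀ τ : S → B → ℝ, τ s ∈ stdSimplex ℝ B →
      ∀ x ∈ (fun p => ∑ s', p s' * h s') '' inducedSet U τ s a, -M ≤ x := by
    rintro τ hτ x ⟨q, ⟨Pb, hPb, rfl⟩, rfl⟩
    have : |∑ s', (∑ b, τ s b * Pb b s') * h s'| ≤ M := by
      rw [hval τ Pb]
      calc |∑ b, τ s b * ∑ s', Pb b s' * h s'|
          ≤ ∑ b, |τ s b * ∑ s', Pb b s' * h s'| := Finset.abs_sum_le_sum_abs _ _
        _ ≤ ∑ b, τ s b * M := by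
            refine Finset.sum_le_sum fun b _ => ?_
            rw [abs_mul, abs_of_nonneg (hτ.1 b)]
            exact mul_le_mul_of_nonneg_left
              (hc (Pb b) ((hU s a b).2.2 (hPb b))) (hτ.1 b)
        _ = M := by rw [← Finset.sum_mul, hτ.2, one_mul]
    linarith [(abs_le.mp this).1]
  have hne : ∀ τ : S → B → ℝ,
      ((fun p => ∑ s', p s' * h s') '' inducedSet U τ s a).Nonempty :=
    fun τ => ⟨_, ⟨_, ⟨P0, hP0, rfl⟩, rfl⟩⟩
  unfold suppF
  refine sInf_abs_sub_le (hne ρ) (hne ρ') ⟨-M, fun x hx => hbdd ρ (hρ s) x hx⟩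
    ⟨-M, fun x hx => hbdd ρ' (hρ' s) x hx⟩ ?_ ?_
  · rintro x ⟨q, ⟨Pb, hPb, rfl⟩, rfl⟩
    exact ⟨_, ⟨_, ⟨Pb, hPb, rfl⟩, rfl⟩, by simp only [hval ρ Pb, hval ρ' Pb]; exact key Pb hPb⟩
  · rintro y ⟨q, ⟨Pb, hPb, rfl⟩, rfl⟩
    exact ⟨_, ⟨_, ⟨Pb, hPb, rfl⟩, rfl⟩, by simp only [hval ρ Pb, hval ρ' Pb]; exact key Pb hPb⟩
end

section
/- Define the induced Bellman operator T^ρ by T^ρ(h)(s,a) = r^ρ(s,a) + σ_{(𝒫^ρ)^a_s}(h) for h : S → ℝ. If {ρ_n} is a sequence of opponent policies with ρ_n(b|s) → ρ(b|s) for all (s,b), and {h_n} is a sequence of vectors with h_n(s) → h(s) for all s, then T^{ρ_n}(h_n) converges to T^ρ(h) uniformly on S × A, i.e. max_{(s,a)} |T^{ρ_n}(h_n)(s,a) − T^ρ(h)(s,a)| → 0 as n → ∞. -/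
open scoped BigOperators
open Matrix Filter

/-- The induced Bellman operator `T^ρ(h)(s,a) = r^ρ(s,a) + σ_{(U^ρ)^a_s}(h)`. -/
noncomputable def indOp {S A B : Type*} [Fintype S] [Fintype B]
    (U : S → A → B → Set (S → ℝ)) (r : S → A → B → ℝ)
    (ρ : S → B → ℝ) (h : S → ℝ) (s : S) (a : A) : ℝ :=
  inducedRew r ρ s a + suppF (inducedSet U ρ s a) h

private lemma inner_abs_le' {S : Type*} [Fintype S] {p : S → ℝ}
    (hp : p ∈ stdSimplex ℝ S) (h : S → ℝ) :
    |∑ s', p s' * h s'| ≤ ∑ s', |h s'| := by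
  refine (Finset.abs_sum_le_sum_abs _ _).trans (Finset.sum_le_sum fun s' _ => ?_)
  have h1 : p s' ≤ 1 := by
    have := Finset.single_le_sum (f := p) (fun i _ => hp.1 i) (Finset.mem_univ s')
    simpa [hp.2] using this
  rw [abs_mul, abs_of_nonneg (hp.1 s')]
  calc p s' * |h s'| ≤ 1 * |h s'| := mul_le_mul_of_nonneg_right h1 (abs_nonneg _)
    _ = |h s'| := one_mul _

private lemma abs_sInf_image_sub_le' {X : Type*} {K : Set X} (hK : K.Nonempty)
    {F₁ F₂ : X → ℝ} (hb₁ : BddBelow (F₁ '' K)) (hb₂ : BddBelow (F₂ '' K))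
    {ε : ℝ} (hε : ∀ x ∈ K, |F₁ x - F₂ x| ≤ ε) :
    |sInf (F₁ '' K) - sInf (F₂ '' K)| ≤ ε := by
  have one : ∀ (G₁ G₂ : X → ℝ), BddBelow (G₁ '' K) →
      (∀ x ∈ K, G₁ x - G₂ x ≤ ε) → sInf (G₁ '' K) - ε ≤ sInf (G₂ '' K) := by
    intro G₁ G₂ hb hle
    refine le_csInf (hK.image _) ?_
    rintro y ⟨x, hx, rfl⟩
    have h1 := csInf_le hb ⟨x, hx, rfl⟩
    linarith [hle x hx]
  rw [abs_sub_le_iff]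
  constructor
  · have := one F₁ F₂ hb₁ (fun x hx => (abs_le.1 (hε x hx)).2)
    linarith
  · have := one F₂ F₁ hb₂ (fun x hx => by linarith [(abs_le.1 (hε x hx)).1])
    linarith

private lemma suppF_eq' {S A B : Type*} [Fintype S] [Fintype B]
    (U : S → A → B → Set (S → ℝ)) (ρ : S → B → ℝ) (s : S) (a : A) (h : S → ℝ) :
    suppF (inducedSet U ρ s a) h =
      sInf ((fun Pb : B → S → ℝ => ∑ b, ρ s b * ∑ s', Pb b s' * h s') ''
        {Pb | ∀ b, Pb b ∈ U s a b}) := by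
  unfold suppF
  congr 1
  ext y
  constructor
  · rintro ⟨q, ⟨Pb, hPb, rfl⟩, rfl⟩
    refine ⟨Pb, hPb, ?_⟩
    simp_rw [Finset.sum_mul, mul_assoc, Finset.mul_sum]
    rw [Finset.sum_comm]
  · rintro ⟨Pb, hPb, rfl⟩
    refine ⟨fun s' => ∑ b, ρ s b * Pb b s', ⟨Pb, hPb, rfl⟩, ?_⟩
    simp_rw [Finset.sum_mul, mul_assoc, Finset.mul_sum]
    rw [Finset.sum_comm]

/-- If `ρ_n → ρ` pointwise and `h_n → h` pointwise, then
`T^{ρ_n}(h_n) → T^ρ(h)` uniformly on `S × A`. -/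
theorem stmt8 {S A B : Type*} [Fintype S] [DecidableEq S] [Nonempty S]
    [Fintype A] [Nonempty A] [Fintype B] [Nonempty B]
    (U : S → A → B → Set (S → ℝ))
    (hU : ∀ s a b, (U s a b).Nonempty ∧ IsCompact (U s a b) ∧
      U s a b ⊆ stdSimplex ℝ S)
    (r : S → A → B → ℝ) (hr : ∀ s a b, r s a b ∈ Set.Icc (0 : ℝ) 1)
    (ρseq : ℕ → S → B → ℝ) (ρ : S → B → ℝ)
    (hρseq : ∀ n s, ρseq n s ∈ stdSimplex ℝ B) (hρ : ∀ s, ρ s ∈ stdSimplex ℝ B)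
    (hρconv : ∀ s b, Filter.Tendsto (fun n => ρseq n s b) Filter.atTop (nhds (ρ s b)))
    (hseq : ℕ → S → ℝ) (h : S → ℝ)
    (hhconv : ∀ s, Filter.Tendsto (fun n => hseq n s) Filter.atTop (nhds (h s))) :
    Filter.Tendsto
      (fun n => ⨆ p : S × A, |indOp U r (ρseq n) (hseq n) p.1 p.2 - indOp U r ρ h p.1 p.2|)
      Filter.atTop (nhds 0) := by
  set d : ℕ → S × A → ℝ :=
    fun n p => |indOp U r (ρseq n) (hseq n) p.1 p.2 - indOp U r ρ h p.1 p.2| with hd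
  -- pointwise convergence
  have hpt : ∀ p : S × A, Tendsto (fun n => d n p) atTop (nhds 0) := by
    rintro ⟨s, a⟩
    -- reward part
    have hrewd : Tendsto (fun n => |inducedRew r (ρseq n) s a - inducedRew r ρ s a|)
        atTop (nhds 0) := by
      have hrew : Tendsto (fun n => inducedRew r (ρseq n) s a) atTop
          (nhds (inducedRew r ρ s a)) := by
        unfold inducedRew
        exact tendsto_finset_sum _ fun b _ => (hρconv s b).mul_const _
      have := (hrew.sub (tendsto_const_nhds (x := inducedRew r ρ s a))).abs
      simpa using this
    -- support-function part
    set K : Set (B → S → ℝ) := {Pb | ∀ b, Pb b ∈ U s a b} with hKdef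
    have hKne : K.Nonempty :=
      ⟨fun b => (hU s a b).1.choose, fun b => (hU s a b).1.choose_spec⟩
    have hKsimplex : ∀ Pb ∈ K, ∀ b, Pb b ∈ stdSimplex ℝ S :=
      fun Pb hPb b => (hU s a b).2.2 (hPb b)
    -- generic bddBelow
    have hbdd : ∀ (σ : B → ℝ) (g : S → ℝ),
        BddBelow ((fun Pb : B → S → ℝ => ∑ b, σ b * ∑ s', Pb b s' * g s') '' K) := by
      intro σ g
      refine ⟨-((∑ b, |σ b|) * ∑ s', |g s'|), ?_⟩
      rintro y ⟨Pb, hPb, rfl⟩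
      have habs : |∑ b, σ b * ∑ s', Pb b s' * g s'| ≤ (∑ b, |σ b|) * ∑ s', |g s'| := by
        refine (Finset.abs_sum_le_sum_abs _ _).trans ?_
        rw [Finset.sum_mul]
        refine Finset.sum_le_sum fun b _ => ?_
        rw [abs_mul]
        exact mul_le_mul_of_nonneg_left (inner_abs_le' (hKsimplex Pb hPb b) g) (abs_nonneg _)
      linarith [neg_abs_le (∑ b, σ b * ∑ s', Pb b s' * g s')]
    -- generic difference bound
    have hdiff : ∀ (σ₁ σ₂ : B → ℝ) (g₁ g₂ : S → ℝ), ∀ Pb ∈ K,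
        |(∑ b, σ₁ b * ∑ s', Pb b s' * g₁ s') - (∑ b, σ₂ b * ∑ s', Pb b s' * g₂ s')| ≤
          (∑ b, |σ₁ b - σ₂ b|) * (∑ s', |g₁ s'|) +
          (∑ b, |σ₂ b|) * (∑ s', |g₁ s' - g₂ s'|) := by
      intro σ₁ σ₂ g₁ g₂ Pb hPb
      rw [← Finset.sum_sub_distrib]
      refine (Finset.abs_sum_le_sum_abs _ _).trans ?_
      rw [Finset.sum_mul, Finset.sum_mul, ← Finset.sum_add_distrib]
      refine Finset.sum_le_sum fun b _ => ?_
      have hI1 : |∑ s', Pb b s' * g₁ s'| ≤ ∑ s', |g₁ s'| :=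
        inner_abs_le' (hKsimplex Pb hPb b) g₁
      have hID : |(∑ s', Pb b s' * g₁ s') - (∑ s', Pb b s' * g₂ s')| ≤
          ∑ s', |g₁ s' - g₂ s'| := by
        rw [← Finset.sum_sub_distrib]
        simp_rw [← mul_sub]
        exact inner_abs_le' (hKsimplex Pb hPb b) (fun s' => g₁ s' - g₂ s')
      have key : σ₁ b * (∑ s', Pb b s' * g₁ s') - σ₂ b * (∑ s', Pb b s' * g₂ s') =
          (σ₁ b - σ₂ b) * (∑ s', Pb b s' * g₁ s') +
          σ₂ b * ((∑ s', Pb b s' * g₁ s') - (∑ s', Pb b s' * g₂ s')) := by ring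
      rw [key]
      refine (abs_add_le _ _).trans ?_
      rw [abs_mul, abs_mul]
      gcongr
    -- error bound sequence
    set e : ℕ → ℝ := fun n =>
      (∑ b, |ρseq n s b - ρ s b|) * (∑ s', |hseq n s'|) +
      (∑ b, |ρ s b|) * (∑ s', |hseq n s' - h s'|) with he
    have hsuppd : ∀ n,
        |suppF (inducedSet U (ρseq n) s a) (hseq n) - suppF (inducedSet U ρ s a) h| ≤ e n := by
      intro n
      rw [suppF_eq' U (ρseq n) s a (hseq n), suppF_eq' U ρ s a h]
      exact abs_sInf_image_sub_le' hKne (hbdd _ _) (hbdd _ _)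
        (fun Pb hPb => hdiff (ρseq n s) (ρ s) (hseq n) h Pb hPb)
    have hetend : Tendsto e atTop (nhds 0) := by
      have t1 : Tendsto (fun n => ∑ b, |ρseq n s b - ρ s b|) atTop (nhds 0) := by
        have := tendsto_finset_sum (Finset.univ : Finset B)
          (fun b _ => ((hρconv s b).sub (tendsto_const_nhds (x := ρ s b))).abs)
        simpa using this
      have t2 : Tendsto (fun n => ∑ s', |hseq n s'|) atTop (nhds (∑ s', |h s'|)) :=
        tendsto_finset_sum _ fun s' _ => (hhconv s').abs
      have t3 : Tendsto (fun n => ∑ s', |hseq n s' - h s'|) atTop (nhds 0) := by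
        have := tendsto_finset_sum (Finset.univ : Finset S)
          (fun s' _ => ((hhconv s').sub (tendsto_const_nhds (x := h s'))).abs)
        simpa using this
      have := (t1.mul t2).add ((tendsto_const_nhds (x := ∑ b, |ρ s b|)).mul t3)
      simpa using this
    -- combine
    refine squeeze_zero (fun n => abs_nonneg _)
      (g := fun n => |inducedRew r (ρseq n) s a - inducedRew r ρ s a| + e n)
      (fun n => ?_) (by simpa using hrewd.add hetend)
    have hsplit : d n (s, a) ≤
        |inducedRew r (ρseq n) s a - inducedRew r ρ s a| +
        |suppF (inducedSet U (ρseq n) s a) (hseq n) - suppF (inducedSet U ρ s a) h| := by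
      simp only [hd, indOp]
      have := abs_add_le (inducedRew r (ρseq n) s a - inducedRew r ρ s a)
        (suppF (inducedSet U (ρseq n) s a) (hseq n) - suppF (inducedSet U ρ s a) h)
      calc |inducedRew r (ρseq n) s a + suppF (inducedSet U (ρseq n) s a) (hseq n) -
          (inducedRew r ρ s a + suppF (inducedSet U ρ s a) h)|
          = |(inducedRew r (ρseq n) s a - inducedRew r ρ s a) +
            (suppF (inducedSet U (ρseq n) s a) (hseq n) - suppF (inducedSet U ρ s a) h)| := by
            ring_nf
        _ ≤ _ := this
    show d n (s, a) ≤ |inducedRew r (ρseq n) s a - inducedRew r ρ s a| + e n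
    linarith [hsuppd n]
  -- from pointwise to uniform via the finite sum
  have hsum : Tendsto (fun n => ∑ p : S × A, d n p) atTop (nhds 0) := by
    have := tendsto_finset_sum (Finset.univ : Finset (S × A)) (fun p _ => hpt p)
    simpa using this
  refine squeeze_zero (fun n => Real.iSup_nonneg fun p => abs_nonneg _) (fun n => ?_) hsum
  exact ciSup_le fun p => Finset.single_le_sum (f := d n) (fun q _ => abs_nonneg _) (Finset.mem_univ p)
end

section
/- (Semi-continuity of best responses.) Assume that for every deterministic joint policy d : S → A × B and every kernel P (a choice of P^{(a,b)}_s ∈ 𝒫^{(a,b)}_s for all (s,a,b)) the stochastic matrix with rows (P^{d(s)}_s)_{s∈S} is irreducible. Let {ρ_n} be opponent policies with ρ_n(b|s) → ρ(b|s) for all (s,b), and {μ_n} agent policies with μ_n(a|s) → μ(a|s) for all (s,a). If for every n the policy μ_n is optimal for the induced robust MDP (S, A, 𝒫^{ρ_n}, r^{ρ_n}), i.e. g^{μ_n}_{𝒫^{ρ_n}}(s) = sup_ν g^{ν}_{𝒫^{ρ_n}}(s) for all s, then μ is optimal for the induced robust MDP (S, A, 𝒫^{ρ}, r^{ρ}),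 i.e. g^{μ}_{𝒫^{ρ}}(s) = sup_ν g^{ν}_{𝒫^{ρ}}(s) for all s. -/
open scoped BigOperators
open Matrix Filter
set_option linter.unusedSectionVars false
set_option linter.unusedVariables false
set_option maxHeartbeats 1000000

section Stoch
variable {S : Type*} [Fintype S] [DecidableEq S] [Nonempty S]

def StochM (M : Matrix S S ℝ) : Prop :=
  (∀ s s', 0 ≤ M s s') ∧ (∀ s, ∑ s', M s s' = 1)

theorem StochM.mul {M N : Matrix S S ℝ} (hM : StochM M) (hN : StochM N) :
    StochM (M * N) := by
  constructor
  · intro s s'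
    exact Finset.sum_nonneg fun i _ => mul_nonneg (hM.1 s i) (hN.1 i s')
  · intro s
    simp only [Matrix.mul_apply]
    rw [Finset.sum_comm]
    calc ∑ i, ∑ s', M s i * N i s' = ∑ i, M s i * ∑ s', N i s' := by
          simp [Finset.mul_sum]
      _ = 1 := by simp [hN.2, hM.2 s]

theorem StochM.pow {M : Matrix S S ℝ} (hM : StochM M) (k : ℕ) : StochM (M ^ k) := by
  induction k with
  | zero =>
    constructor
    · intro s s'
      simp [Matrix.one_apply]
      split <;> norm_num
    · intro s
      simp [Matrix.one_apply]
  | succ n ih =>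
    rw [pow_succ]
    exact ih.mul hM

theorem StochM.mulVec_const {M : Matrix S S ℝ} (hM : StochM M) (c : ℝ) :
    M *ᵥ (fun _ => c) = fun _ => c := by
  funext s
  simp [Matrix.mulVec, dotProduct, ← Finset.sum_mul, hM.2 s]

theorem StochM.mulVec_le {M : Matrix S S ℝ} (hM : StochM M) {h : S → ℝ} {C : ℝ}
    (hC : ∀ s, |h s| ≤ C) (s : S) : |(M *ᵥ h) s| ≤ C := by
  have h1 : |(M *ᵥ h) s| ≤ ∑ s', M s s' * |h s'| := by
    refine le_trans (Finset.abs_sum_le_sum_abs _ _) ?_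
    refine Finset.sum_le_sum fun i _ => ?_
    rw [abs_mul, abs_of_nonneg (hM.1 s i)]
  refine h1.trans ?_
  calc ∑ s', M s s' * |h s'| ≤ ∑ s', M s s' * C :=
        Finset.sum_le_sum fun i _ => mul_le_mul_of_nonneg_left (hC i) (hM.1 s i)
    _ = C := by rw [← Finset.sum_mul, hM.2 s, one_mul]

theorem pow_entry_nonneg {M : Matrix S S ℝ} (hM : ∀ s s', 0 ≤ M s s') (k : ℕ) :
    ∀ s s', 0 ≤ (M ^ k) s s' := by
  induction k with
  | zero =>
    intro s s'
    by_cases h : s = s' <;> simp [Matrix.one_apply, h]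
  | succ n ih =>
    intro s s'
    rw [pow_succ, Matrix.mul_apply]
    exact Finset.sum_nonneg fun i _ => mul_nonneg (ih s i) (hM i s')

/-- entrywise domination of powers -/
theorem pow_entry_le {M N : Matrix S S ℝ} {c : ℝ} (hc : 0 ≤ c)
    (hM : ∀ s s', 0 ≤ M s s') (hle : ∀ s s', c * M s s' ≤ N s s') (k : ℕ) :
    ∀ s s', c ^ k * (M ^ k) s s' ≤ (N ^ k) s s' := by
  induction k with
  | zero => intro s s'; simp
  | succ n ih =>
    intro s s'
    rw [pow_succ M, pow_succ N, pow_succ c, Matrix.mul_apply, Matrix.mul_apply, Finset.mul_sum]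
    refine Finset.sum_le_sum fun i _ => ?_
    have h1 : c ^ n * (M ^ n) s i * (c * M i s') ≤ (N ^ n) s i * N i s' := by
      refine mul_le_mul (ih s i) (hle i s')
        (mul_nonneg hc (hM i s'))
        (le_trans (mul_nonneg (pow_nonneg hc n) (pow_entry_nonneg hM n s i)) (ih s i))
    calc c ^ (n + 1) * ((M ^ n) s i * M i s')
        = c ^ n * (M ^ n) s i * (c * M i s') := by ring
      _ ≤ (N ^ n) s i * N i s' := h1

/-- irreducibility transfers along entrywise domination -/
theorem IrredM.of_le {M N : Matrix S S ℝ} {c : ℝ} (hc : 0 < c)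
    (hM : ∀ s s', 0 ≤ M s s') (hle : ∀ s s', c * M s s' ≤ N s s')
    (hirr : IrredM M) : IrredM N := by
  intro s s'
  obtain ⟨k, hk1, hkpos⟩ := hirr s s'
  exact ⟨k, hk1, lt_of_lt_of_le (by positivity) (pow_entry_le hc.le hM hle k s s')⟩

/-- Max principle: fixed vectors of irreducible stochastic matrices are constant. -/
theorem fixed_const {M : Matrix S S ℝ} (hM : StochM M) (hirr : IrredM M)
    {h : S → ℝ} (hfix : M *ᵥ h = h) : ∀ s s', h s = h s' := by
  obtain ⟨s0, -, hs0⟩ := Finset.exists_max_image Finset.univ h ⟨Classical.arbitrary S, Finset.mem_univ _⟩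
  have hs0' : ∀ s', h s' ≤ h s0 := fun s' => hs0 s' (Finset.mem_univ _)
  have hfixk : ∀ k, (M ^ k) *ᵥ h = h := by
    intro k
    induction k with
    | zero => simp
    | succ n ih =>
      rw [pow_succ, ← Matrix.mulVec_mulVec, hfix, ih]
  have key : ∀ s', h s' = h s0 := by
    intro s'
    obtain ⟨k, -, hkpos⟩ := hirr s0 s'
    have hMk := hM.pow k
    have hsum : ∑ i, (M ^ k) s0 i * (h s0 - h i) = 0 := by
      have h2 : ((M ^ k) *ᵥ h) s0 = h s0 := by rw [hfixk k]
      have h3 : ∑ i, (M ^ k) s0 i * h i = h s0 := h2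
      calc ∑ i, (M ^ k) s0 i * (h s0 - h i)
          = (∑ i, (M ^ k) s0 i) * h s0 - ∑ i, (M ^ k) s0 i * h i := by
            rw [Finset.sum_mul, ← Finset.sum_sub_distrib]; exact Finset.sum_congr rfl fun i _ => by ring
        _ = 0 := by rw [hMk.2 s0, h3]; ring
    have hterm : ∀ i ∈ Finset.univ, (0:ℝ) ≤ (M ^ k) s0 i * (h s0 - h i) :=
      fun i _ => mul_nonneg (hMk.1 s0 i) (sub_nonneg.2 (hs0' i))
    have := (Finset.sum_eq_zero_iff_of_nonneg hterm).1 hsum s' (Finset.mem_univ _)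
    have := mul_eq_zero.1 this
    rcases this with h4 | h4
    · exact absurd h4 (ne_of_gt hkpos)
    · linarith [sub_eq_zero.1 h4]
  intro s s'
  rw [key s, key s']

theorem vecMul_pow_fixed {M : Matrix S S ℝ} {p : S → ℝ} (hp : p ᵥ* M = p) (k : ℕ) :
    p ᵥ* (M ^ k) = p := by
  induction k with
  | zero => simp
  | succ n ih => rw [pow_succ, ← Matrix.vecMul_vecMul, ih, hp]

theorem pow_entry_le_one {M : Matrix S S ℝ} (hM : StochM M) (k : ℕ) (s s' : S) :
    (M ^ k) s s' ≤ 1 := by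
  have := (hM.pow k).2 s
  calc (M ^ k) s s' ≤ ∑ i, (M ^ k) s i :=
        Finset.single_le_sum (fun i _ => (hM.pow k).1 s i) (Finset.mem_univ s')
    _ = 1 := this

theorem exists_stationary {M : Matrix S S ℝ} (hM : StochM M) :
    ∃ p, p ∈ stdSimplex ℝ S ∧ p ᵥ* M = p := by
  classical
  set s0 : S := Classical.arbitrary S
  set x : ℕ → S → ℝ := fun n s' => (↑(n+1))⁻¹ * ∑ t ∈ Finset.range (n+1), (M ^ t) s0 s' with hxdef
  have hx : ∀ n, x n ∈ stdSimplex ℝ S := by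
    intro n
    constructor
    · intro s'
      refine mul_nonneg (by positivity) (Finset.sum_nonneg fun t _ => (hM.pow t).1 s0 s')
    · rw [← Finset.mul_sum, Finset.sum_comm]
      have : ∀ t ∈ Finset.range (n+1), ∑ s', (M ^ t) s0 s' = 1 := fun t _ => (hM.pow t).2 s0
      rw [Finset.sum_congr rfl this]
      simp
      rw [inv_mul_cancel₀]
      positivity
  obtain ⟨p, hp, φ, hφ, hconv⟩ := (isCompact_stdSimplex ℝ S).tendsto_subseq hx
  have hconv' : ∀ s', Tendsto (fun k => x (φ k) s') atTop (nhds (p s')) :=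
    fun s' => (tendsto_pi_nhds.1 hconv) s'
  refine ⟨p, hp, ?_⟩
  funext s'
  have hkey : ∀ n, (x n ᵥ* M) s'
      = x n s' + (↑(n+1))⁻¹ * ((M ^ (n+1)) s0 s' - (M ^ 0) s0 s') := by
    intro n
    have h1 : (x n ᵥ* M) s' = (↑(n+1))⁻¹ * ∑ t ∈ Finset.range (n+1), (M ^ (t+1)) s0 s' := by
      simp only [Matrix.vecMul, dotProduct, hxdef]
      calc ∑ s, ((↑(n+1):ℝ)⁻¹ * ∑ t ∈ Finset.range (n+1), (M ^ t) s0 s) * M s s'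
          = (↑(n+1):ℝ)⁻¹ * ∑ s, ∑ t ∈ Finset.range (n+1), (M ^ t) s0 s * M s s' := by
            rw [Finset.mul_sum]
            exact Finset.sum_congr rfl fun s _ => by rw [mul_assoc, Finset.sum_mul]
        _ = (↑(n+1):ℝ)⁻¹ * ∑ t ∈ Finset.range (n+1), ∑ s, (M ^ t) s0 s * M s s' := by
            rw [Finset.sum_comm]
        _ = (↑(n+1):ℝ)⁻¹ * ∑ t ∈ Finset.range (n+1), (M ^ (t+1)) s0 s' := by
            have hc : ∀ t ∈ Finset.range (n+1), ∑ s, (M ^ t) s0 s * M s s' = (M ^ (t+1)) s0 s' :=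
              fun t _ => by rw [pow_succ, Matrix.mul_apply]
            rw [Finset.sum_congr rfl hc]
    have h2 : ∀ F : ℕ → ℝ, ∑ t ∈ Finset.range (n+1), F (t+1)
        = (∑ t ∈ Finset.range (n+1), F t) + (F (n+1) - F 0) := by
      intro F
      have ha := Finset.sum_range_succ' F (n+1)
      have hb := Finset.sum_range_succ F (n+1)
      linarith
    rw [h1, h2 (fun t => (M ^ t) s0 s'), mul_add, hxdef]
  have herr : Tendsto (fun k => (↑(φ k + 1):ℝ)⁻¹ * ((M ^ (φ k + 1)) s0 s' - (M ^ 0) s0 s'))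
      atTop (nhds 0) := by
    have hz : Tendsto (fun k : ℕ => ((k:ℝ)+1)⁻¹) atTop (nhds 0) := by
      have := (tendsto_one_div_add_atTop_nhds_zero_nat : Tendsto (fun n : ℕ => 1 / ((n:ℝ) + 1)) atTop (nhds 0))
      simpa [one_div] using this
    refine squeeze_zero_norm (fun k => ?_) hz
    · rw [norm_mul]
      have hb : ‖(M ^ (φ k + 1)) s0 s' - (M ^ 0) s0 s'‖ ≤ 1 := by
        rw [Real.norm_eq_abs, abs_le]
        constructor
        · have := pow_entry_le_one hM 0 s0 s'
          have := (hM.pow (φ k + 1)).1 s0 s'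
          linarith
        · have := pow_entry_le_one hM (φ k + 1) s0 s'
          have := (hM.pow 0).1 s0 s'
          linarith
      have hi : ‖(↑(φ k + 1):ℝ)⁻¹‖ ≤ ((k:ℝ)+1)⁻¹ := by
        rw [Real.norm_eq_abs, abs_of_nonneg (by positivity)]
        apply inv_anti₀ (by positivity)
        have : (k:ℝ) ≤ (φ k : ℝ) := Nat.cast_le.mpr hφ.le_apply
        push_cast
        linarith
      calc ‖(↑(φ k + 1):ℝ)⁻¹‖ * ‖(M ^ (φ k + 1)) s0 s' - (M ^ 0) s0 s'‖
          ≤ ((k:ℝ)+1)⁻¹ * 1 := mul_le_mul hi hb (norm_nonneg _) (by positivity)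
        _ = ((k:ℝ)+1)⁻¹ := mul_one _
  have hL : Tendsto (fun k => (x (φ k) ᵥ* M) s') atTop (nhds ((p ᵥ* M) s')) := by
    simp only [Matrix.vecMul, dotProduct]
    exact tendsto_finset_sum _ fun i _ => (hconv' i).mul_const (M i s')
  have hR : Tendsto (fun k => (x (φ k) ᵥ* M) s') atTop (nhds (p s' + 0)) := by
    simp only [hkey]
    exact (hconv' s').add herr
  have := tendsto_nhds_unique hL hR
  rw [this, add_zero]

theorem stationary_pos {M : Matrix S S ℝ} (hM : StochM M) (hirr : IrredM M)
    {p : S → ℝ} (hp : p ∈ stdSimplex ℝ S) (hst : p ᵥ* M = p) : ∀ s, 0 < p s := by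
  have hex : ∃ s0, 0 < p s0 := by
    by_contra hcon
    push_neg at hcon
    have hz : ∀ s, p s = 0 := fun s => le_antisymm (hcon s) (hp.1 s)
    have h2 := hp.2
    rw [Finset.sum_congr rfl (fun s _ => hz s)] at h2
    simp at h2
  obtain ⟨s0, hs0⟩ := hex
  intro s
  obtain ⟨k, -, hk⟩ := hirr s0 s
  have : p s = ∑ i, p i * (M ^ k) i s := by
    conv_lhs => rw [← vecMul_pow_fixed hst k]
    rfl
  rw [this]
  have hterm : 0 < p s0 * (M ^ k) s0 s := mul_pos hs0 hk
  have : p s0 * (M ^ k) s0 s ≤ ∑ i, p i * (M ^ k) i s :=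
    Finset.single_le_sum (fun i _ => mul_nonneg (hp.1 i) ((hM.pow k).1 i s)) (Finset.mem_univ s0)
  linarith

theorem stationary_unique {M : Matrix S S ℝ} (hM : StochM M) (hirr : IrredM M)
    {p q : S → ℝ} (hp : p ∈ stdSimplex ℝ S) (hstp : p ᵥ* M = p)
    (hq : q ∈ stdSimplex ℝ S) (hstq : q ᵥ* M = q) : p = q := by
  have hppos := stationary_pos hM hirr hp hstp
  obtain ⟨sm, -, hsm⟩ := Finset.exists_min_image Finset.univ (fun s => q s / p s)
    ⟨Classical.arbitrary S, Finset.mem_univ _⟩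
  set c : ℝ := q sm / p sm with hc
  have hcmin : ∀ s, c ≤ q s / p s := fun s => hsm s (Finset.mem_univ _)
  have hvnn : ∀ s, 0 ≤ q s - c * p s := by
    intro s
    have := hcmin s
    have hps := hppos s
    rw [le_div_iff₀ hps] at this
    linarith
  have hvsm : q sm - c * p sm = 0 := by
    rw [hc, div_mul_cancel₀ _ (ne_of_gt (hppos sm)), sub_self]
  set v : S → ℝ := fun s => q s - c * p s with hv
  have hvst : ∀ k, v ᵥ* (M ^ k) = v := by
    intro k
    funext s
    show ∑ i, v i * (M ^ k) i s = v s
    have h1 : ∑ i, q i * (M ^ k) i s = q s := congrFun (vecMul_pow_fixed hstq k) s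
    have h2 : ∑ i, p i * (M ^ k) i s = p s := congrFun (vecMul_pow_fixed hstp k) s
    calc ∑ i, (q i - c * p i) * (M ^ k) i s
        = (∑ i, q i * (M ^ k) i s) - c * ∑ i, p i * (M ^ k) i s := by
          rw [Finset.mul_sum, ← Finset.sum_sub_distrib]
          exact Finset.sum_congr rfl fun i _ => by ring
      _ = q s - c * p s := by rw [h1, h2]
  have hvzero : ∀ s, v s = 0 := by
    intro s
    by_contra hne
    have hpos : 0 < v s := lt_of_le_of_ne (hvnn s) (Ne.symm hne)
    obtain ⟨k, -, hk⟩ := hirr s sm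
    have h0 : v sm = ∑ i, v i * (M ^ k) i sm := (congrFun (hvst k) sm).symm
    have hterm : 0 < v s * (M ^ k) s sm := mul_pos hpos hk
    have hle : v s * (M ^ k) s sm ≤ ∑ i, v i * (M ^ k) i sm :=
      Finset.single_le_sum (fun i _ => mul_nonneg (hvnn i) ((hM.pow k).1 i sm)) (Finset.mem_univ s)
    have : v sm = 0 := hvsm
    linarith [h0 ▸ this]
  have hqc : ∀ s, q s = c * p s := by
    intro s
    have := hvzero s
    simp only [hv] at this
    linarith
  have hsum : (1:ℝ) = c * 1 := by
    calc (1:ℝ) = ∑ s, q s := hq.2.symm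
      _ = ∑ s, c * p s := Finset.sum_congr rfl fun s _ => hqc s
      _ = c * ∑ s, p s := by rw [Finset.mul_sum]
      _ = c * 1 := by rw [hp.2]
  have hc1 : c = 1 := by linarith
  funext s
  rw [hqc s, hc1, one_mul]

open scoped Classical in
noncomputable def statDist (M : Matrix S S ℝ) : S → ℝ :=
  if h : ∃ p, p ∈ stdSimplex ℝ S ∧ p ᵥ* M = p then h.choose
  else fun _ => 0

theorem statDist_spec {M : Matrix S S ℝ} (hM : StochM M) :
    statDist M ∈ stdSimplex ℝ S ∧ statDist M ᵥ* M = statDist M := by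
  have h := exists_stationary hM
  simp only [statDist]
  rw [dif_pos h]
  exact h.choose_spec

theorem statDist_eq {M : Matrix S S ℝ} (hM : StochM M) (hirr : IrredM M)
    {q : S → ℝ} (hq : q ∈ stdSimplex ℝ S) (hstq : q ᵥ* M = q) : q = statDist M :=
  (stationary_unique hM hirr (statDist_spec hM).1 (statDist_spec hM).2 hq hstq).symm

noncomputable def dotL (p : S → ℝ) : (S → ℝ) →ₗ[ℝ] ℝ where
  toFun := fun v => p ⬝ᵥ v
  map_add' := fun v w => dotProduct_add p v w
  map_smul' := fun c v => by
    simp [dotProduct_smul, smul_eq_mul]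

theorem exists_poisson {M : Matrix S S ℝ} (hM : StochM M) (hirr : IrredM M) (r : S → ℝ) :
    ∃ h : S → ℝ, ∀ s, r s - (statDist M ⬝ᵥ r) = h s - (M *ᵥ h) s := by
  classical
  set p : S → ℝ := statDist M with hpdef
  have hpspec := statDist_spec (S := S) hM
  set f : (S → ℝ) →ₗ[ℝ] (S → ℝ) := ((1 : Matrix S S ℝ) - M).mulVecLin with hfdef
  set onevec : S → ℝ := fun _ => 1 with honev
  have honev_ne : onevec ≠ 0 := by
    intro hcon
    have := congrFun hcon (Classical.arbitrary S)
    simp [honev] at this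
  -- kernel of f is the constants
  have hker : LinearMap.ker f = Submodule.span ℝ {onevec} := by
    apply le_antisymm
    · intro h hh
      have hfix : M *ᵥ h = h := by
        have : ((1 : Matrix S S ℝ) - M) *ᵥ h = 0 := hh
        rw [Matrix.sub_mulVec, Matrix.one_mulVec, sub_eq_zero] at this
        exact this.symm
      have hconst := fixed_const hM hirr hfix
      rw [Submodule.mem_span_singleton]
      refine ⟨h (Classical.arbitrary S), ?_⟩
      funext s
      simp [honev, smul_eq_mul, hconst (Classical.arbitrary S) s]
    · rw [Submodule.span_le, Set.singleton_subset_iff]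
      show f onevec = 0
      rw [hfdef]
      show ((1 : Matrix S S ℝ) - M) *ᵥ onevec = 0
      rw [Matrix.sub_mulVec, Matrix.one_mulVec]
      have := hM.mulVec_const 1
      rw [honev]
      rw [this]
      simp
  have hkerrank : Module.finrank ℝ (LinearMap.ker f) = 1 := by
    rw [hker]
    exact finrank_span_singleton honev_ne
  have hrangerank : Module.finrank ℝ (LinearMap.range f)
      = Fintype.card S - 1 := by
    have := LinearMap.finrank_range_add_finrank_ker f
    rw [hkerrank, Module.finrank_pi] at this
    omega
  -- the functional v ↦ p ⬝ᵥ v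
  set φ : (S → ℝ) →ₗ[ℝ] ℝ := dotL p with hφdef
  have hφone : φ onevec = 1 := by
    show p ⬝ᵥ onevec = 1
    simp [dotProduct, honev, hpdef, hpspec.1.2]
  have hφrange : LinearMap.range φ = ⊤ := by
    rw [eq_top_iff]
    intro x _
    refine ⟨x • onevec, ?_⟩
    rw [LinearMap.map_smul, hφone, smul_eq_mul, mul_one]
  have hφker : Module.finrank ℝ (LinearMap.ker φ) = Fintype.card S - 1 := by
    have := LinearMap.finrank_range_add_finrank_ker φ
    rw [hφrange, finrank_top, Module.finrank_self, Module.finrank_pi] at this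
    omega
  have hle : LinearMap.range f ≤ LinearMap.ker φ := by
    rintro v ⟨h, rfl⟩
    show p ⬝ᵥ (((1 : Matrix S S ℝ) - M) *ᵥ h) = 0
    rw [Matrix.dotProduct_mulVec, Matrix.vecMul_sub, Matrix.vecMul_one, hpspec.2]
    simp [hpdef]
  have heq : LinearMap.range f = LinearMap.ker φ :=
    Submodule.eq_of_le_of_finrank_eq hle (by rw [hrangerank, hφker])
  -- the centered reward is in the range
  set g : ℝ := p ⬝ᵥ r with hgdef
  have hmem : (r - fun _ => g) ∈ LinearMap.ker φ := by
    show p ⬝ᵥ (r - fun _ => g) = 0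
    rw [dotProduct_sub]
    have : p ⬝ᵥ (fun _ => g) = g := by
      simp [dotProduct, ← Finset.sum_mul, hpdef, hpspec.1.2]
    rw [this, hgdef, sub_self]
  rw [← heq] at hmem
  obtain ⟨h, hh⟩ := hmem
  refine ⟨h, fun s => ?_⟩
  have := congrFun hh s
  simp only [hfdef, Matrix.mulVecLin_apply, Matrix.sub_mulVec, Matrix.one_mulVec] at this
  have h2 : h s - (M *ᵥ h) s = r s - g := by
    simpa [Pi.sub_apply] using this
  rw [h2]

theorem cesaro_tendsto {M : Matrix S S ℝ} (hM : StochM M) (hirr : IrredM M)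
    (r : S → ℝ) (s : S) :
    Filter.Tendsto (fun n : ℕ => (∑ t ∈ Finset.range n, ((M ^ t) *ᵥ r) s) / n)
      Filter.atTop (nhds (statDist M ⬝ᵥ r)) := by
  obtain ⟨h, hh⟩ := exists_poisson hM hirr r
  set g : ℝ := statDist M ⬝ᵥ r with hgdef
  have hkey : ∀ n : ℕ, ∑ t ∈ Finset.range n, ((M ^ t) *ᵥ r) s
      = n * g + (h s - ((M ^ n) *ᵥ h) s) := by
    intro n
    induction n with
    | zero => simp
    | succ m ih =>
      rw [Finset.sum_range_succ, ih]
      have hterm : ((M ^ m) *ᵥ r) s = g + ((M ^ m) *ᵥ h) s - ((M ^ (m+1)) *ᵥ h) s := by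
        have hr : r = (fun _ => g) + (h - M *ᵥ h) := by
          funext s'
          have := hh s'
          simp [Pi.add_apply, Pi.sub_apply]
          linarith
        rw [hr, Matrix.mulVec_add, Matrix.mulVec_sub]
        have h1 : (M ^ m) *ᵥ (fun _ => g) = fun _ => g := (hM.pow m).mulVec_const g
        have h2 : (M ^ m) *ᵥ (M *ᵥ h) = (M ^ (m+1)) *ᵥ h := by
          rw [Matrix.mulVec_mulVec, ← pow_succ]
        rw [h1, h2]
        simp only [Pi.add_apply, Pi.sub_apply]
        ring
      rw [hterm]
      push_cast
      ring
  -- error term bound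
  obtain ⟨C, hC⟩ : ∃ C : ℝ, ∀ s', |h s'| ≤ C := by
    refine ⟨∑ s', |h s'|, fun s' => ?_⟩
    exact Finset.single_le_sum (f := fun i => |h i|) (fun i _ => abs_nonneg _) (Finset.mem_univ s')
  have hC0 : 0 ≤ C := le_trans (abs_nonneg _) (hC (Classical.arbitrary S))
  have herr : Filter.Tendsto (fun n : ℕ => (h s - ((M ^ n) *ᵥ h) s) / n)
      Filter.atTop (nhds 0) := by
    have hz : Filter.Tendsto (fun n : ℕ => 2 * C * (n : ℝ)⁻¹) Filter.atTop (nhds 0) := by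
      have := (tendsto_inv_atTop_nhds_zero_nat : Tendsto (fun n : ℕ => (n:ℝ)⁻¹) atTop (nhds 0)).const_mul (2 * C)
      simpa using this
    refine squeeze_zero_norm (fun n => ?_) hz
    rw [div_eq_mul_inv, norm_mul]
    have hb : ‖h s - ((M ^ n) *ᵥ h) s‖ ≤ 2 * C := by
      rw [Real.norm_eq_abs]
      have h1 := hC s
      have h2 := (hM.pow n).mulVec_le hC s
      calc |h s - ((M ^ n) *ᵥ h) s| ≤ |h s| + |((M ^ n) *ᵥ h) s| := abs_sub _ _
        _ ≤ 2 * C := by linarith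
    have hn : ‖((n:ℕ) : ℝ)⁻¹‖ = ((n:ℕ):ℝ)⁻¹ := by
      rw [Real.norm_eq_abs, abs_of_nonneg (by positivity)]
    calc ‖h s - ((M ^ n) *ᵥ h) s‖ * ‖((n:ℕ):ℝ)⁻¹‖
        ≤ (2 * C) * ((n:ℕ):ℝ)⁻¹ := by
          rw [hn]
          exact mul_le_mul_of_nonneg_right hb (by positivity)
      _ = 2 * C * ((n:ℕ):ℝ)⁻¹ := by ring
  have heq : ∀ᶠ n : ℕ in Filter.atTop,
      g + (h s - ((M ^ n) *ᵥ h) s) / n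
        = (∑ t ∈ Finset.range n, ((M ^ t) *ᵥ r) s) / n := by
    filter_upwards [Filter.eventually_ge_atTop 1] with n hn
    have hn0 : (n : ℝ) ≠ 0 := by positivity
    rw [hkey n]
    field_simp
  have := (tendsto_const_nhds.add herr).congr' heq
  simpa using this

theorem cesaro_liminf {M : Matrix S S ℝ} (hM : StochM M) (hirr : IrredM M)
    (r : S → ℝ) (s : S) :
    Filter.liminf (fun n : ℕ => (∑ t ∈ Finset.range n, ((M ^ t) *ᵥ r) s) / n)
      Filter.atTop = statDist M ⬝ᵥ r :=
  (cesaro_tendsto hM hirr r s).liminf_eq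

theorem statDist_tendsto {Mk : ℕ → Matrix S S ℝ} {M : Matrix S S ℝ}
    (hMk : ∀ k, StochM (Mk k)) (hM : StochM M) (hirr : IrredM M)
    (hconv : ∀ s s', Filter.Tendsto (fun k => Mk k s s') Filter.atTop (nhds (M s s'))) :
    Filter.Tendsto (fun k => statDist (Mk k)) Filter.atTop (nhds (statDist M)) := by
  apply Filter.tendsto_of_subseq_tendsto
  intro ns hns
  have hmem : ∀ k, statDist (Mk (ns k)) ∈ stdSimplex ℝ S :=
    fun k => (statDist_spec (hMk (ns k))).1
  obtain ⟨q, hq, ψ, hψ, hconvq⟩ := (isCompact_stdSimplex ℝ S).tendsto_subseq hmem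
  have hqpt : ∀ s, Filter.Tendsto (fun k => statDist (Mk (ns (ψ k))) s)
      Filter.atTop (nhds (q s)) := fun s => (tendsto_pi_nhds.1 hconvq) s
  have hnsψ : Filter.Tendsto (fun k => ns (ψ k)) Filter.atTop Filter.atTop :=
    hns.comp hψ.tendsto_atTop
  have hstat : q ᵥ* M = q := by
    funext s'
    have hL : Filter.Tendsto
        (fun k => ∑ s, statDist (Mk (ns (ψ k))) s * Mk (ns (ψ k)) s s')
        Filter.atTop (nhds (∑ s, q s * M s s')) := by
      refine tendsto_finset_sum _ fun i _ => ?_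
      exact (hqpt i).mul ((hconv i s').comp hnsψ)
    have heqf : ∀ k, ∑ s, statDist (Mk (ns (ψ k))) s * Mk (ns (ψ k)) s s'
        = statDist (Mk (ns (ψ k))) s' := by
      intro k
      exact congrFun (statDist_spec (hMk (ns (ψ k)))).2 s'
    rw [show (fun k => ∑ s, statDist (Mk (ns (ψ k))) s * Mk (ns (ψ k)) s s')
        = fun k => statDist (Mk (ns (ψ k))) s' from funext heqf] at hL
    exact (tendsto_nhds_unique hL (hqpt s'))
  have hqeq : q = statDist M := statDist_eq hM hirr hq hstat
  exact ⟨ψ, hqeq ▸ hconvq⟩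
end Stoch

section MDP
variable {S A B : Type*} [Fintype S] [DecidableEq S] [Nonempty S]
  [Fintype A] [Nonempty A] [Fintype B] [Nonempty B]

/-- mixed kernel -/
def mixK (ρ : S → B → ℝ) (P : S → A → B → S → ℝ) : S → A → S → ℝ :=
  fun s a s' => ∑ b, ρ s b * P s a b s'

/-- the gain functional -/
noncomputable def bigG (r : S → A → B → ℝ) (ν : S → A → ℝ) (ρ : S → B → ℝ)
    (P : S → A → B → S → ℝ) : ℝ :=
  statDist (polMat ν (mixK ρ P)) ⬝ᵥ polRew ν (inducedRew r ρ)

/-- kernel selection set -/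
def KK (U : S → A → B → Set (S → ℝ)) : Set (S → A → B → S → ℝ) :=
  {P | ∀ s a b, P s a b ∈ U s a b}

theorem KK_compact {U : S → A → B → Set (S → ℝ)}
    (hU : ∀ s a b, IsCompact (U s a b)) : IsCompact (KK U) := by
  have : KK U = Set.univ.pi (fun s : S => Set.univ.pi (fun a : A =>
      Set.univ.pi (fun b : B => U s a b))) := by
    ext P
    simp [KK, Set.mem_pi]
  rw [this]
  exact isCompact_univ_pi fun s => isCompact_univ_pi fun a => isCompact_univ_pi fun b => hU s a b

theorem KK_nonempty {U : S → A → B → Set (S → ℝ)}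
    (hU : ∀ s a b, (U s a b).Nonempty) : (KK U).Nonempty :=
  ⟨fun s a b => (hU s a b).choose, fun s a b => (hU s a b).choose_spec⟩

theorem bigM_stoch {U : S → A → B → Set (S → ℝ)}
    (hU : ∀ s a b, U s a b ⊆ stdSimplex ℝ S)
    {ν : S → A → ℝ} (hν : ∀ s, ν s ∈ stdSimplex ℝ A)
    {ρ : S → B → ℝ} (hρ : ∀ s, ρ s ∈ stdSimplex ℝ B)
    {P : S → A → B → S → ℝ} (hP : P ∈ KK U) :
    StochM (polMat ν (mixK ρ P)) := by
  constructor
  · intro s s'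
    refine Finset.sum_nonneg fun a _ => mul_nonneg ((hν s).1 a) ?_
    exact Finset.sum_nonneg fun b _ => mul_nonneg ((hρ s).1 b) ((hU s a b (hP s a b)).1 s')
  · intro s
    show ∑ s', ∑ a, ν s a * ∑ b, ρ s b * P s a b s' = 1
    rw [Finset.sum_comm]
    have h1 : ∀ a, ∑ s', ν s a * ∑ b, ρ s b * P s a b s' = ν s a := by
      intro a
      rw [← Finset.mul_sum, Finset.sum_comm]
      have h2 : ∀ b, ∑ s', ρ s b * P s a b s' = ρ s b := by
        intro b
        rw [← Finset.mul_sum, (hU s a b (hP s a b)).2, mul_one]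
      rw [Finset.sum_congr rfl fun b _ => h2 b, (hρ s).2, mul_one]
    rw [Finset.sum_congr rfl fun a _ => h1 a, (hν s).2]

theorem bigM_irred {U : S → A → B → Set (S → ℝ)}
    (hU : ∀ s a b, U s a b ⊆ stdSimplex ℝ S)
    (hirr : ∀ (d : S → A × B) (P : S → A → B → S → ℝ),
      (∀ s a b, P s a b ∈ U s a b) →
      IrredM (Matrix.of fun s s' => P s (d s).1 (d s).2 s'))
    {ν : S → A → ℝ} (hν : ∀ s, ν s ∈ stdSimplex ℝ A)
    {ρ : S → B → ℝ} (hρ : ∀ s, ρ s ∈ stdSimplex ℝ B)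
    {P : S → A → B → S → ℝ} (hP : P ∈ KK U) :
    IrredM (polMat ν (mixK ρ P)) := by
  classical
  have hA : ∀ s : S, ∃ a, 0 < ν s a := by
    intro s
    by_contra hcon
    push_neg at hcon
    have hz : ∀ a, ν s a = 0 := fun a => le_antisymm (hcon a) ((hν s).1 a)
    have := (hν s).2
    rw [Finset.sum_congr rfl fun a _ => hz a] at this
    simp at this
  have hB : ∀ s : S, ∃ b, 0 < ρ s b := by
    intro s
    by_contra hcon
    push_neg at hcon
    have hz : ∀ b, ρ s b = 0 := fun b => le_antisymm (hcon b) ((hρ s).1 b)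
    have := (hρ s).2
    rw [Finset.sum_congr rfl fun b _ => hz b] at this
    simp at this
  choose aa haa using hA
  choose bb hbb using hB
  set d : S → A × B := fun s => (aa s, bb s) with hd
  have hMd := hirr d P hP
  set Md : Matrix S S ℝ := Matrix.of fun s s' => P s (d s).1 (d s).2 s' with hMddef
  obtain ⟨sm, -, hsm⟩ := Finset.exists_min_image Finset.univ
    (fun s => ν s (aa s) * ρ s (bb s)) ⟨Classical.arbitrary S, Finset.mem_univ _⟩
  set c : ℝ := ν sm (aa sm) * ρ sm (bb sm) with hc
  have hcpos : 0 < c := mul_pos (haa sm) (hbb sm)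
  have hMdnn : ∀ s s', 0 ≤ Md s s' := fun s s' => (hU s (aa s) (bb s) (hP s (aa s) (bb s))).1 s'
  refine IrredM.of_le hcpos hMdnn ?_ hMd
  intro s s'
  have hPnn : ∀ a b, 0 ≤ P s a b s' := fun a b => (hU s a b (hP s a b)).1 s'
  have step1 : ρ s (bb s) * P s (aa s) (bb s) s' ≤ ∑ b, ρ s b * P s (aa s) b s' :=
    Finset.single_le_sum (fun b _ => mul_nonneg ((hρ s).1 b) (hPnn (aa s) b)) (Finset.mem_univ _)
  have step2 : ν s (aa s) * (ρ s (bb s) * P s (aa s) (bb s) s')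
      ≤ ν s (aa s) * ∑ b, ρ s b * P s (aa s) b s' :=
    mul_le_mul_of_nonneg_left step1 (le_of_lt (haa s))
  have step3 : ν s (aa s) * ∑ b, ρ s b * P s (aa s) b s'
      ≤ ∑ a, ν s a * ∑ b, ρ s b * P s a b s' := by
    exact Finset.single_le_sum (f := fun a => ν s a * ∑ b, ρ s b * P s a b s')
      (fun a _ => mul_nonneg ((hν s).1 a)
        (Finset.sum_nonneg fun b _ => mul_nonneg ((hρ s).1 b) (hPnn a b)))
      (Finset.mem_univ (aa s))
  have hcle : c ≤ ν s (aa s) * ρ s (bb s) := hsm s (Finset.mem_univ _)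
  have step0 : c * Md s s' ≤ ν s (aa s) * ρ s (bb s) * Md s s' :=
    mul_le_mul_of_nonneg_right hcle (hMdnn s s')
  calc c * Md s s' ≤ ν s (aa s) * ρ s (bb s) * Md s s' := step0
    _ = ν s (aa s) * (ρ s (bb s) * P s (aa s) (bb s) s') := by rw [hMddef]; simp [hd]; ring
    _ ≤ ν s (aa s) * ∑ b, ρ s b * P s (aa s) b s' := step2
    _ ≤ ∑ a, ν s a * ∑ b, ρ s b * P s a b s' := step3
    _ = polMat ν (mixK ρ P) s s' := rfl

theorem avgR_eq {U : S → A → B → Set (S → ℝ)}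
    (hU : ∀ s a b, U s a b ⊆ stdSimplex ℝ S)
    (hirr : ∀ (d : S → A × B) (P : S → A → B → S → ℝ),
      (∀ s a b, P s a b ∈ U s a b) →
      IrredM (Matrix.of fun s s' => P s (d s).1 (d s).2 s'))
    (r : S → A → B → ℝ)
    {ν : S → A → ℝ} (hν : ∀ s, ν s ∈ stdSimplex ℝ A)
    {ρ : S → B → ℝ} (hρ : ∀ s, ρ s ∈ stdSimplex ℝ B)
    {P : S → A → B → S → ℝ} (hP : P ∈ KK U) (s : S) :
    avgR ν (mixK ρ P) (inducedRew r ρ) s = bigG r ν ρ P := by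
  have hM := bigM_stoch hU hν hρ hP
  have hIr := bigM_irred hU hirr hν hρ hP
  exact cesaro_liminf hM hIr (polRew ν (inducedRew r ρ)) s

theorem polRew_mem_Icc (r : S → A → B → ℝ) (hr : ∀ s a b, r s a b ∈ Set.Icc (0:ℝ) 1)
    {ν : S → A → ℝ} (hν : ∀ s, ν s ∈ stdSimplex ℝ A)
    {ρ : S → B → ℝ} (hρ : ∀ s, ρ s ∈ stdSimplex ℝ B) (s : S) :
    polRew ν (inducedRew r ρ) s ∈ Set.Icc (0:ℝ) 1 := by
  constructor
  · refine Finset.sum_nonneg fun a _ => mul_nonneg ((hν s).1 a) ?_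
    exact Finset.sum_nonneg fun b _ => mul_nonneg ((hρ s).1 b) (hr s a b).1
  · have h1 : ∀ a, ν s a * inducedRew r ρ s a ≤ ν s a * 1 := by
      intro a
      refine mul_le_mul_of_nonneg_left ?_ ((hν s).1 a)
      have : ∀ b, ρ s b * r s a b ≤ ρ s b * 1 := fun b =>
        mul_le_mul_of_nonneg_left (hr s a b).2 ((hρ s).1 b)
      calc ∑ b, ρ s b * r s a b ≤ ∑ b, ρ s b * 1 := Finset.sum_le_sum fun b _ => this b
        _ = 1 := by simp [(hρ s).2]
    calc polRew ν (inducedRew r ρ) s ≤ ∑ a, ν s a * 1 := Finset.sum_le_sum fun a _ => h1 a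
      _ = 1 := by simp [(hν s).2]

theorem bigG_mem_Icc {U : S → A → B → Set (S → ℝ)}
    (hU : ∀ s a b, U s a b ⊆ stdSimplex ℝ S)
    (r : S → A → B → ℝ) (hr : ∀ s a b, r s a b ∈ Set.Icc (0:ℝ) 1)
    {ν : S → A → ℝ} (hν : ∀ s, ν s ∈ stdSimplex ℝ A)
    {ρ : S → B → ℝ} (hρ : ∀ s, ρ s ∈ stdSimplex ℝ B)
    {P : S → A → B → S → ℝ} (hP : P ∈ KK U) :
    bigG r ν ρ P ∈ Set.Icc (0:ℝ) 1 := by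
  have hM := bigM_stoch hU hν hρ hP
  have hp := (statDist_spec hM).1
  constructor
  · refine Finset.sum_nonneg fun i _ => mul_nonneg (hp.1 i) ?_
    exact (polRew_mem_Icc r hr hν hρ i).1
  · have hstep : bigG r ν ρ P ≤ ∑ i, statDist (polMat ν (mixK ρ P)) i * 1 :=
      Finset.sum_le_sum fun i _ =>
        mul_le_mul_of_nonneg_left (polRew_mem_Icc r hr hν hρ i).2 (hp.1 i)
    calc bigG r ν ρ P ≤ ∑ i, statDist (polMat ν (mixK ρ P)) i * 1 := hstep
      _ = 1 := by simp [hp.2]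

theorem robAvgR_eq {U : S → A → B → Set (S → ℝ)}
    (hU : ∀ s a b, U s a b ⊆ stdSimplex ℝ S)
    (hirr : ∀ (d : S → A × B) (P : S → A → B → S → ℝ),
      (∀ s a b, P s a b ∈ U s a b) →
      IrredM (Matrix.of fun s s' => P s (d s).1 (d s).2 s'))
    (r : S → A → B → ℝ)
    {ν : S → A → ℝ} (hν : ∀ s, ν s ∈ stdSimplex ℝ A)
    {ρ : S → B → ℝ} (hρ : ∀ s, ρ s ∈ stdSimplex ℝ B) (s : S) :
    robAvgR (inducedSet U ρ) ν (inducedRew r ρ) s = sInf ((bigG r ν ρ) '' KK U) := by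
  unfold robAvgR
  congr 1
  ext x
  constructor
  · rintro ⟨Pk, hPk, rfl⟩
    choose Pb hPb1 hPb2 using hPk
    set P : S → A → B → S → ℝ := fun s' a b => Pb s' a b with hPdef
    have hPKK : P ∈ KK U := fun s' a b => hPb1 s' a b
    have hmix : mixK ρ P = Pk := by
      funext s' a
      exact (hPb2 s' a).symm
    refine ⟨P, hPKK, ?_⟩
    rw [← avgR_eq hU hirr r hν hρ hPKK s]
    unfold avgR
    rw [hmix]
  · rintro ⟨P, hP, rfl⟩
    refine ⟨mixK ρ P, fun s' a => ⟨fun b => P s' a b, fun b => hP s' a b, rfl⟩, ?_⟩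
    exact (avgR_eq hU hirr r hν hρ hP s).symm

theorem bigG_tendsto {U : S → A → B → Set (S → ℝ)}
    (hU : ∀ s a b, U s a b ⊆ stdSimplex ℝ S)
    (hirr : ∀ (d : S → A × B) (P : S → A → B → S → ℝ),
      (∀ s a b, P s a b ∈ U s a b) →
      IrredM (Matrix.of fun s s' => P s (d s).1 (d s).2 s'))
    (r : S → A → B → ℝ)
    {νk : ℕ → S → A → ℝ} {ν : S → A → ℝ}
    (hνk : ∀ k s, νk k s ∈ stdSimplex ℝ A) (hν : ∀ s, ν s ∈ stdSimplex ℝ A)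
    (hνconv : ∀ s a, Filter.Tendsto (fun k => νk k s a) Filter.atTop (nhds (ν s a)))
    {ρk : ℕ → S → B → ℝ} {ρ : S → B → ℝ}
    (hρk : ∀ k s, ρk k s ∈ stdSimplex ℝ B) (hρ : ∀ s, ρ s ∈ stdSimplex ℝ B)
    (hρconv : ∀ s b, Filter.Tendsto (fun k => ρk k s b) Filter.atTop (nhds (ρ s b)))
    {Pk : ℕ → S → A → B → S → ℝ} {P : S → A → B → S → ℝ}
    (hPk : ∀ k, Pk k ∈ KK U) (hP : P ∈ KK U)
    (hPconv : ∀ s a b s', Filter.Tendsto (fun k => Pk k s a b s') Filter.atTop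
      (nhds (P s a b s'))) :
    Filter.Tendsto (fun k => bigG r (νk k) (ρk k) (Pk k)) Filter.atTop
      (nhds (bigG r ν ρ P)) := by
  have hMconv : ∀ s s', Filter.Tendsto
      (fun k => polMat (νk k) (mixK (ρk k) (Pk k)) s s') Filter.atTop
      (nhds (polMat ν (mixK ρ P) s s')) := by
    intro s s'
    show Filter.Tendsto (fun k => ∑ a, νk k s a * ∑ b, ρk k s b * Pk k s a b s')
      Filter.atTop (nhds (∑ a, ν s a * ∑ b, ρ s b * P s a b s'))
    refine tendsto_finset_sum _ fun a _ => ?_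
    refine (hνconv s a).mul (tendsto_finset_sum _ fun b _ => ?_)
    exact (hρconv s b).mul (hPconv s a b s')
  have hsd := statDist_tendsto (fun k => bigM_stoch hU (hνk k) (hρk k) (hPk k))
    (bigM_stoch hU hν hρ hP) (bigM_irred hU hirr hν hρ hP) hMconv
  have hsdpt : ∀ i, Filter.Tendsto
      (fun k => statDist (polMat (νk k) (mixK (ρk k) (Pk k))) i) Filter.atTop
      (nhds (statDist (polMat ν (mixK ρ P)) i)) := fun i => (tendsto_pi_nhds.1 hsd) i
  have hrconv : ∀ i, Filter.Tendsto
      (fun k => polRew (νk k) (inducedRew r (ρk k)) i) Filter.atTop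
      (nhds (polRew ν (inducedRew r ρ) i)) := by
    intro i
    show Filter.Tendsto (fun k => ∑ a, νk k i a * ∑ b, ρk k i b * r i a b)
      Filter.atTop (nhds (∑ a, ν i a * ∑ b, ρ i b * r i a b))
    refine tendsto_finset_sum _ fun a _ => ?_
    refine (hνconv i a).mul (tendsto_finset_sum _ fun b _ => ?_)
    exact (hρconv i b).mul_const (r i a b)
  show Filter.Tendsto (fun k => ∑ i, statDist (polMat (νk k) (mixK (ρk k) (Pk k))) i
      * polRew (νk k) (inducedRew r (ρk k)) i) Filter.atTop
    (nhds (∑ i, statDist (polMat ν (mixK ρ P)) i * polRew ν (inducedRew r ρ) i))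
  exact tendsto_finset_sum _ fun i _ => (hsdpt i).mul (hrconv i)

noncomputable def FF (U : S → A → B → Set (S → ℝ)) (r : S → A → B → ℝ)
    (ν : S → A → ℝ) (ρ : S → B → ℝ) : ℝ :=
  sInf (bigG r ν ρ '' KK U)

noncomputable def gstar (U : S → A → B → Set (S → ℝ)) (r : S → A → B → ℝ)
    (ρ : S → B → ℝ) : ℝ :=
  sSup {x | ∃ ν : S → A → ℝ, (∀ s', ν s' ∈ stdSimplex ℝ A) ∧ x = FF U r ν ρ}

section Cont
variable {U : S → A → B → Set (S → ℝ)}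
  (hU : ∀ s a b, (U s a b).Nonempty ∧ IsCompact (U s a b) ∧ Convex ℝ (U s a b) ∧
      U s a b ⊆ stdSimplex ℝ S)
  {r : S → A → B → ℝ} (hr : ∀ s a b, r s a b ∈ Set.Icc (0 : ℝ) 1)
  (hirr : ∀ (d : S → A × B) (P : S → A → B → S → ℝ),
      (∀ s a b, P s a b ∈ U s a b) →
      IrredM (Matrix.of fun s s' => P s (d s).1 (d s).2 s'))

include hU hr hirr

theorem image_nonempty {ν : S → A → ℝ} {ρ : S → B → ℝ} :
    (bigG r ν ρ '' KK U).Nonempty :=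
  (KK_nonempty fun s a b => (hU s a b).1).image _

theorem image_bddBelow {ν : S → A → ℝ} (hν : ∀ s, ν s ∈ stdSimplex ℝ A)
    {ρ : S → B → ℝ} (hρ : ∀ s, ρ s ∈ stdSimplex ℝ B) :
    ∀ x ∈ bigG r ν ρ '' KK U, x ∈ Set.Icc (0:ℝ) 1 := by
  rintro x ⟨P, hP, rfl⟩
  exact bigG_mem_Icc (fun s a b => (hU s a b).2.2.2) r hr hν hρ hP

theorem FF_mem_Icc {ν : S → A → ℝ} (hν : ∀ s, ν s ∈ stdSimplex ℝ A)
    {ρ : S → B → ℝ} (hρ : ∀ s, ρ s ∈ stdSimplex ℝ B) :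
    FF U r ν ρ ∈ Set.Icc (0:ℝ) 1 := by
  have hne := image_nonempty (hU := hU) (hr := hr) (hirr := hirr) (ν := ν) (ρ := ρ)
  have hbd := image_bddBelow hU hr hirr hν hρ
  constructor
  · exact Real.sInf_nonneg fun x hx => (hbd x hx).1
  · obtain ⟨y, hy⟩ := hne
    exact csInf_le_of_le ⟨0, fun x hx => (hbd x hx).1⟩ hy (hbd y hy).2

theorem FF_tendsto
    {νk : ℕ → S → A → ℝ} {ν : S → A → ℝ}
    (hνk : ∀ k s, νk k s ∈ stdSimplex ℝ A) (hν : ∀ s, ν s ∈ stdSimplex ℝ A)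
    (hνconv : ∀ s a, Filter.Tendsto (fun k => νk k s a) Filter.atTop (nhds (ν s a)))
    {ρk : ℕ → S → B → ℝ} {ρ : S → B → ℝ}
    (hρk : ∀ k s, ρk k s ∈ stdSimplex ℝ B) (hρ : ∀ s, ρ s ∈ stdSimplex ℝ B)
    (hρconv : ∀ s b, Filter.Tendsto (fun k => ρk k s b) Filter.atTop (nhds (ρ s b))) :
    Filter.Tendsto (fun k => FF U r (νk k) (ρk k)) Filter.atTop
      (nhds (FF U r ν ρ)) := by
  have hUs : ∀ s a b, U s a b ⊆ stdSimplex ℝ S := fun s a b => (hU s a b).2.2.2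
  have hbddk : ∀ k, BddBelow (bigG r (νk k) (ρk k) '' KK U) :=
    fun k => ⟨0, fun x hx => (image_bddBelow hU hr hirr (hνk k) (hρk k) x hx).1⟩
  have hbdd : BddBelow (bigG r ν ρ '' KK U) :=
    ⟨0, fun x hx => (image_bddBelow hU hr hirr hν hρ x hx).1⟩
  rw [tendsto_order]
  constructor
  · -- c < FF eventually below each FF k
    intro c hc
    by_contra hcon
    rw [Filter.not_eventually] at hcon
    have hfreq : ∃ᶠ k in Filter.atTop, FF U r (νk k) (ρk k) ≤ c :=
      hcon.mono fun k hk => not_lt.1 hk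
    obtain ⟨φ, hφ, hφle⟩ := Filter.extraction_of_frequently_atTop hfreq
    set m : ℝ := (c + FF U r ν ρ) / 2 with hm
    have hcm : c < m := by rw [hm]; linarith
    have hmF : m < FF U r ν ρ := by rw [hm]; linarith
    have hex : ∀ j : ℕ, ∃ P ∈ KK U, bigG r (νk (φ j)) (ρk (φ j)) P < m := by
      intro j
      have h1 : FF U r (νk (φ j)) (ρk (φ j)) < m := lt_of_le_of_lt (hφle j) hcm
      obtain ⟨x, hx, hxlt⟩ := exists_lt_of_csInf_lt
        (image_nonempty hU hr hirr) h1
      obtain ⟨P, hP, rfl⟩ := hx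
      exact ⟨P, hP, hxlt⟩
    choose Pj hPjKK hPjlt using hex
    obtain ⟨Pinf, hPinf, ψ, hψ, hPconv⟩ :=
      (KK_compact fun s a b => (hU s a b).2.1).tendsto_subseq hPjKK
    have hPpt : ∀ s a b s', Filter.Tendsto (fun i => Pj (ψ i) s a b s')
        Filter.atTop (nhds (Pinf s a b s')) := by
      intro s a b s'
      have h1 := tendsto_pi_nhds.1 hPconv s
      have h2 := tendsto_pi_nhds.1 h1 a
      have h3 := tendsto_pi_nhds.1 h2 b
      exact tendsto_pi_nhds.1 h3 s'
    have hφψ : Filter.Tendsto (fun i => φ (ψ i)) Filter.atTop Filter.atTop :=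
      (hφ.comp hψ).tendsto_atTop
    have hL := bigG_tendsto hUs hirr r
      (νk := fun i => νk (φ (ψ i))) (fun i => hνk (φ (ψ i))) hν
      (fun s a => (hνconv s a).comp hφψ)
      (ρk := fun i => ρk (φ (ψ i))) (fun i => hρk (φ (ψ i))) hρ
      (fun s b => (hρconv s b).comp hφψ)
      (Pk := fun i => Pj (ψ i)) (fun i => hPjKK (ψ i)) hPinf hPpt
    have hle : bigG r ν ρ Pinf ≤ m :=
      le_of_tendsto hL (Filter.Eventually.of_forall fun i => (hPjlt (ψ i)).le)
    have hge : FF U r ν ρ ≤ bigG r ν ρ Pinf :=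
      csInf_le hbdd ⟨Pinf, hPinf, rfl⟩
    linarith
  · intro c hc
    set m : ℝ := (FF U r ν ρ + c) / 2 with hm
    have h1 : FF U r ν ρ < m := by rw [hm]; linarith
    have h2 : m < c := by rw [hm]; linarith
    obtain ⟨x, hx, hxlt⟩ := exists_lt_of_csInf_lt (image_nonempty hU hr hirr) h1
    obtain ⟨P, hP, rfl⟩ := hx
    have hL := bigG_tendsto hUs hirr r hνk hν hνconv hρk hρ hρconv
      (Pk := fun _ => P) (fun _ => hP) hP (fun s a b s' => tendsto_const_nhds)
    have hev : ∀ᶠ k in Filter.atTop, bigG r (νk k) (ρk k) P < c :=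
      Filter.Tendsto.eventually_lt_const (by linarith) hL
    refine hev.mono fun k hk => lt_of_le_of_lt ?_ hk
    exact csInf_le (hbddk k) ⟨P, hP, rfl⟩

theorem unif_mem : ∀ s' : S, (fun _ : A => (Fintype.card A : ℝ)⁻¹) ∈ stdSimplex ℝ A := by
  intro s'
  constructor
  · intro a; positivity
  · rw [Finset.sum_const]
    have : (0:ℝ) < Fintype.card A := by
      have := Fintype.card_pos (α := A)
      positivity
    rw [Finset.card_univ, nsmul_eq_mul]
    exact mul_inv_cancel₀ this.ne'

theorem sset_nonempty {ρ : S → B → ℝ} :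
    {x | ∃ ν : S → A → ℝ, (∀ s', ν s' ∈ stdSimplex ℝ A) ∧ x = FF U r ν ρ}.Nonempty :=
  ⟨_, ⟨fun _ _ => (Fintype.card A : ℝ)⁻¹, unif_mem hU hr hirr, rfl⟩⟩

theorem sset_bddAbove {ρ : S → B → ℝ} (hρ : ∀ s, ρ s ∈ stdSimplex ℝ B) :
    BddAbove {x | ∃ ν : S → A → ℝ, (∀ s', ν s' ∈ stdSimplex ℝ A) ∧ x = FF U r ν ρ} := by
  refine ⟨1, ?_⟩
  rintro x ⟨ν, hν, rfl⟩
  exact (FF_mem_Icc hU hr hirr hν hρ).2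

theorem gstar_tendsto
    {ρk : ℕ → S → B → ℝ} {ρ : S → B → ℝ}
    (hρk : ∀ k s, ρk k s ∈ stdSimplex ℝ B) (hρ : ∀ s, ρ s ∈ stdSimplex ℝ B)
    (hρconv : ∀ s b, Filter.Tendsto (fun k => ρk k s b) Filter.atTop (nhds (ρ s b))) :
    Filter.Tendsto (fun k => gstar U r (ρk k)) Filter.atTop (nhds (gstar U r ρ)) := by
  rw [tendsto_order]
  constructor
  · intro c hc
    obtain ⟨x, hx, hxgt⟩ := exists_lt_of_lt_csSup (sset_nonempty hU hr hirr) hc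
    obtain ⟨ν, hν, rfl⟩ := hx
    have hL := FF_tendsto hU hr hirr (νk := fun _ => ν) (fun _ => hν) hν
      (fun s a => tendsto_const_nhds) hρk hρ hρconv
    have hev := Filter.Tendsto.eventually_const_lt hxgt hL
    refine hev.mono fun k hk => lt_of_lt_of_le hk ?_
    exact le_csSup (sset_bddAbove hU hr hirr (hρk k)) ⟨ν, hν, rfl⟩
  · intro c hc
    by_contra hcon
    rw [Filter.not_eventually] at hcon
    have hfreq : ∃ᶠ k in Filter.atTop, c ≤ gstar U r (ρk k) :=
      hcon.mono fun k hk => not_lt.1 hk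
    obtain ⟨φ, hφ, hφge⟩ := Filter.extraction_of_frequently_atTop hfreq
    set m : ℝ := (gstar U r ρ + c) / 2 with hm
    have h1 : gstar U r ρ < m := by rw [hm]; linarith
    have h2 : m < c := by rw [hm]; linarith
    have hex : ∀ j : ℕ, ∃ ν : S → A → ℝ, (∀ s', ν s' ∈ stdSimplex ℝ A) ∧
        m < FF U r ν (ρk (φ j)) := by
      intro j
      have h3 : m < gstar U r (ρk (φ j)) := lt_of_lt_of_le h2 (hφge j)
      obtain ⟨x, hx, hxgt⟩ := exists_lt_of_lt_csSup (sset_nonempty hU hr hirr) h3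
      obtain ⟨ν, hν, rfl⟩ := hx
      exact ⟨ν, hν, hxgt⟩
    choose νj hνj hνjgt using hex
    have hνjmem : ∀ j, νj j ∈ Set.univ.pi (fun _ : S => stdSimplex ℝ A) := by
      intro j
      rw [Set.mem_univ_pi]
      exact fun s => hνj j s
    obtain ⟨νinf, hνinfmem, ψ, hψ, hνconv⟩ :=
      (isCompact_univ_pi fun _ : S => isCompact_stdSimplex ℝ A).tendsto_subseq hνjmem
    have hνinf : ∀ s, νinf s ∈ stdSimplex ℝ A := by
      rw [Set.mem_univ_pi] at hνinfmem
      exact hνinfmem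
    have hνpt : ∀ s a, Filter.Tendsto (fun i => νj (ψ i) s a)
        Filter.atTop (nhds (νinf s a)) := by
      intro s a
      have h1' := tendsto_pi_nhds.1 hνconv s
      exact tendsto_pi_nhds.1 h1' a
    have hφψ : Filter.Tendsto (fun i => φ (ψ i)) Filter.atTop Filter.atTop :=
      (hφ.comp hψ).tendsto_atTop
    have hL := FF_tendsto hU hr hirr
      (νk := fun i => νj (ψ i)) (fun i => hνj (ψ i)) hνinf hνpt
      (ρk := fun i => ρk (φ (ψ i))) (fun i => hρk (φ (ψ i))) hρ
      (fun s b => (hρconv s b).comp hφψ)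
    have hge : m ≤ FF U r νinf ρ :=
      ge_of_tendsto hL (Filter.Eventually.of_forall fun i => (hνjgt (ψ i)).le)
    have hle : FF U r νinf ρ ≤ gstar U r ρ :=
      le_csSup (sset_bddAbove hU hr hirr hρ) ⟨νinf, hνinf, rfl⟩
    linarith
end Cont
end MDP

/-- Semi-continuity of best responses: pointwise limits of
optimal policies of the induced robust MDPs along converging opponent policies
are optimal for the limiting induced robust MDP. -/
theorem stmt9 {S A B : Type*} [Fintype S] [DecidableEq S] [Nonempty S]
    [Fintype A] [Nonempty A] [Fintype B] [Nonempty B]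
    (U : S → A → B → Set (S → ℝ))
    (hU : ∀ s a b, (U s a b).Nonempty ∧ IsCompact (U s a b) ∧ Convex ℝ (U s a b) ∧
      U s a b ⊆ stdSimplex ℝ S)
    (r : S → A → B → ℝ) (hr : ∀ s a b, r s a b ∈ Set.Icc (0 : ℝ) 1)
    (hirr : ∀ (d : S → A × B) (P : S → A → B → S → ℝ),
      (∀ s a b, P s a b ∈ U s a b) →
      IrredM (Matrix.of fun s s' => P s (d s).1 (d s).2 s'))
    (ρseq : ℕ → S → B → ℝ) (ρ : S → B → ℝ)
    (hρseq : ∀ n s, ρseq n s ∈ stdSimplex ℝ B) (hρ : ∀ s, ρ s ∈ stdSimplex ℝ B)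
    (hρconv : ∀ s b, Filter.Tendsto (fun n => ρseq n s b) Filter.atTop (nhds (ρ s b)))
    (μseq : ℕ → S → A → ℝ) (μ : S → A → ℝ)
    (hμseq : ∀ n s, μseq n s ∈ stdSimplex ℝ A) (hμ : ∀ s, μ s ∈ stdSimplex ℝ A)
    (hμconv : ∀ s a, Filter.Tendsto (fun n => μseq n s a) Filter.atTop (nhds (μ s a)))
    (hoptseq : ∀ n s,
      robAvgR (inducedSet U (ρseq n)) (μseq n) (inducedRew r (ρseq n)) s
        = sSup {x | ∃ ν : S → A → ℝ, (∀ s', ν s' ∈ stdSimplex ℝ A) ∧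
            x = robAvgR (inducedSet U (ρseq n)) ν (inducedRew r (ρseq n)) s}) :
    ∀ s, robAvgR (inducedSet U ρ) μ (inducedRew r ρ) s
      = sSup {x | ∃ ν : S → A → ℝ, (∀ s', ν s' ∈ stdSimplex ℝ A) ∧
          x = robAvgR (inducedSet U ρ) ν (inducedRew r ρ) s} := by
  intro s
  have hUs : ∀ s a b, U s a b ⊆ stdSimplex ℝ S := fun s a b => (hU s a b).2.2.2
  -- rewrite robAvgR as FF
  have hset : ∀ (ρ' : S → B → ℝ), (∀ s', ρ' s' ∈ stdSimplex ℝ B) →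
      {x | ∃ ν : S → A → ℝ, (∀ s', ν s' ∈ stdSimplex ℝ A) ∧
        x = robAvgR (inducedSet U ρ') ν (inducedRew r ρ') s}
      = {x | ∃ ν : S → A → ℝ, (∀ s', ν s' ∈ stdSimplex ℝ A) ∧ x = FF U r ν ρ'} := by
    intro ρ' hρ'
    ext x
    exact exists_congr fun ν => and_congr_right fun hν => by
      rw [robAvgR_eq hUs hirr r hν hρ' s, FF]
  have hmain : FF U r μ ρ = gstar U r ρ := by
    have h1 : Filter.Tendsto (fun n => FF U r (μseq n) (ρseq n)) Filter.atTop
        (nhds (FF U r μ ρ)) :=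
      FF_tendsto hU hr hirr hμseq hμ hμconv hρseq hρ hρconv
    have h2 : Filter.Tendsto (fun n => gstar U r (ρseq n)) Filter.atTop
        (nhds (gstar U r ρ)) :=
      gstar_tendsto hU hr hirr hρseq hρ hρconv
    have h3 : ∀ n, FF U r (μseq n) (ρseq n) = gstar U r (ρseq n) := by
      intro n
      have := hoptseq n s
      rw [robAvgR_eq hUs hirr r (hμseq n) (hρseq n) s] at this
      rw [hset (ρseq n) (hρseq n)] at this
      exact this
    have h1' : Filter.Tendsto (fun n => gstar U r (ρseq n)) Filter.atTop
        (nhds (FF U r μ ρ)) := by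
      rw [show (fun n => gstar U r (ρseq n)) = fun n => FF U r (μseq n) (ρseq n) from
        funext fun n => (h3 n).symm]
      exact h1
    exact tendsto_nhds_unique h1' h2
  rw [robAvgR_eq hUs hirr r hμ hρ s, hset ρ hρ]
  exact hmain
end
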